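/- arXiv:2510.03754 — 9 statements merged into one kernel-verified Lean document; each statement's English description precedes it below -/
import Mathlib

section
/- Let c be a positive integer and let G be a (not necessarily topological) nilpotent group of nilpotency class at most c. Let x ∈ G be an element such that x^n belongs to the center Z(G) for some positive integer n. Then x commutes with y^{n^{c-1}} for every y ∈ G. -/
open scoped commutatorElement

/-- If `⁅a, b⁆` and `a ^ n` are both central, then `a` commutes with `b ^ n`. -/
lemma commute_pow_of_commutator_mem_center {H : Type*} [Group H] {a b : H} {n : ℕ}
    (hw : ⁅a, b⁆ ∈ Subgroup.center H) (ha : a ^ n ∈ Subgroup.center H) :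
    Commute a (b ^ n) := by
  set w := ⁅a, b⁆ with hwdef
  have hc : ∀ g : H, g * w = w * g := fun g => Subgroup.mem_center_iff.mp hw g
  have hab : a * b = w * b * a := by
    rw [hwdef, commutatorElement_def]; group
  have step1 : ∀ k : ℕ, a ^ k * b = w ^ k * b * a ^ k := by
    intro k
    induction k with
    | zero => simp
    | succ k ih =>
      have h1 : a ^ (k + 1) * b = a ^ k * (a * b) := by rw [pow_succ]; group
      calc a ^ (k + 1) * b = a ^ k * (a * b) := h1
        _ = a ^ k * (w * b * a) := by rw [hab]
        _ = (a ^ k * w) * b * a := by group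
        _ = (w * a ^ k) * b * a := by rw [hc]
        _ = w * (a ^ k * b) * a := by group
        _ = w * (w ^ k * b * a ^ k) * a := by rw [ih]
        _ = (w * w ^ k) * b * (a ^ k * a) := by group
        _ = w ^ (k + 1) * b * a ^ (k + 1) := by rw [← pow_succ', ← pow_succ]
  have hwn : w ^ n = 1 := by
    have h1 : a ^ n * b = b * a ^ n := (Subgroup.mem_center_iff.mp ha b).symm
    have h2 := step1 n
    rw [h1] at h2
    have h3 : w ^ n * (b * a ^ n) = 1 * (b * a ^ n) := by
      rw [one_mul, ← mul_assoc, ← h2]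
    exact mul_right_cancel h3
  have hsemi : SemiconjBy a b (w * b) := by
    unfold SemiconjBy; rw [hab]
  have hpow : SemiconjBy a (b ^ n) ((w * b) ^ n) := hsemi.pow_right n
  have hcwb : Commute w b := (hc b).symm
  have hmul : (w * b) ^ n = w ^ n * b ^ n := hcwb.mul_pow n
  rw [hmul, hwn, one_mul] at hpow
  exact hpow

/-- Let `c` be a positive integer and `G` a nilpotent group of class at most `c`
(i.e. the `(c+1)`-st term of the lower central series, `lowerCentralSeries G c`, is
trivial). If `x ^ n` is central for some positive integer `n`, then `x` commutes with
`y ^ (n ^ (c - 1))` for every `y ∈ G`. -/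
theorem commute_pow_of_pow_mem_center {G : Type*} [Group G] {c n : ℕ}
    (hc : 0 < c) (hn : 0 < n)
    (hclass : (⊤ : Subgroup G).lowerCentralSeries c = ⊥)
    {x : G} (hx : x ^ n ∈ Subgroup.center G) :
    ∀ y : G, Commute x (y ^ n ^ (c - 1)) := by
  have main : ∀ j : ℕ, ∀ y : G, ⁅x, y ^ n ^ j⁆ ∈ (⊤ : Subgroup G).lowerCentralSeries (j + 1) := by
    intro j
    induction j with
    | zero =>
      intro y
      rw [pow_zero, pow_one, Subgroup.lowerCentralSeries_succ]
      exact Subgroup.commutator_mem_commutator (by simp) (Subgroup.mem_top y)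
    | succ j ih =>
      intro y
      have hz : y ^ n ^ (j + 1) = (y ^ n ^ j) ^ n := by rw [← pow_mul, pow_succ]
      rw [hz]
      set z := y ^ n ^ j with hzdef
      set N := (⊤ : Subgroup G).lowerCentralSeries (j + 2) with hN
      let π := QuotientGroup.mk' N
      have hsurj : Function.Surjective π := QuotientGroup.mk'_surjective N
      have hwc : π ⁅x, z⁆ ∈ Subgroup.center (G ⧸ N) := by
        rw [Subgroup.mem_center_iff]
        intro q
        obtain ⟨g, rfl⟩ := hsurj q
        have hmem : ⁅⁅x, z⁆, g⁆ ∈ N := by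
          rw [hN, show j + 2 = (j + 1) + 1 from rfl, Subgroup.lowerCentralSeries_succ]
          exact Subgroup.commutator_mem_commutator (ih y) (Subgroup.mem_top g)
        have h1 : ⁅π ⁅x, z⁆, π g⁆ = 1 := by
          rw [← map_commutatorElement]
          exact (QuotientGroup.eq_one_iff _).mpr hmem
        exact (commutatorElement_eq_one_iff_commute.mp h1).symm.eq
      have hxc : (π x) ^ n ∈ Subgroup.center (G ⧸ N) := by
        rw [Subgroup.mem_center_iff]
        intro q
        obtain ⟨g, rfl⟩ := hsurj q
        rw [← map_pow, ← map_mul, ← map_mul, Subgroup.mem_center_iff.mp hx g]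
      have hcom : Commute (π x) ((π z) ^ n) :=
        commute_pow_of_commutator_mem_center hwc hxc
      have h2 : π ⁅x, z ^ n⁆ = 1 := by
        rw [map_commutatorElement, map_pow]
        exact commutatorElement_eq_one_iff_commute.mpr hcom
      exact (QuotientGroup.eq_one_iff _).mp h2
  intro y
  have h := main (c - 1) y
  rw [Nat.sub_add_cancel hc, hclass, Subgroup.mem_bot] at h
  exact commutatorElement_eq_one_iff_commute.mp h
end

section
/- Let G be a nilpotent profinite group (nilpotent as an abstract group, of some finite class). If the quotient G/Z(G) of G by its center is finite-by-procyclic, then G/Z(G) is finite. -/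
/-!  Basic notions for profinite groups.

A profinite group is modelled as a compact Hausdorff totally disconnected
topological group, via the instance assumptions
`[Group G] [TopologicalSpace G] [TopologicalGroup G] [CompactSpace G]
[T2Space G] [TotallyDisconnectedSpace G]`. -/

open scoped commutatorElement

/-- The set of primes dividing the order of some finite continuous quotient of `K`:
`p ∈ primesOf K` iff `p` is prime and divides the (finite) index of some open normal
subgroup of `K`. -/
def primesOf (K : Type*) [Group K] [TopologicalSpace K] : Set ℕ :=
  {p | p.Prime ∧ ∃ N : Subgroup K, N.Normal ∧ IsOpen (N : Set K) ∧ N.index ≠ 0 ∧ p ∣ N.index}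

/-- The closed subgroup topologically generated by `x`. -/
def closedGen {G : Type*} [Group G] [TopologicalSpace G] [IsTopologicalGroup G] (x : G) :
    Subgroup G :=
  (Subgroup.zpowers x).topologicalClosure

/-- `x` and `y` have coprime orders: `π(⟨x⟩) ∩ π(⟨y⟩) = ∅`. -/
def CoprimeOrders {G : Type*} [Group G] [TopologicalSpace G] [IsTopologicalGroup G] (x y : G) :
    Prop :=
  primesOf ↥(closedGen x) ∩ primesOf ↥(closedGen y) = ∅

/-- `g` is a coprime commutator: `g = [x,y]` with `x, y` of coprime orders. -/
def IsCoprimeCommutator {G : Type*} [Group G] [TopologicalSpace G] [IsTopologicalGroup G]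
    (g : G) : Prop :=
  ∃ x y : G, CoprimeOrders x y ∧ g = ⁅x, y⁆

/-- A topological group is procyclic if it is topologically generated by a single element. -/
def IsProcyclic (K : Type*) [Group K] [TopologicalSpace K] : Prop :=
  ∃ g : K, closure ((Subgroup.zpowers g : Subgroup K) : Set K) = Set.univ

/-- A subgroup of a topological group is procyclic if it is topologically generated by a
single element. -/
def IsProcyclicSubgroup {G : Type*} [Group G] [TopologicalSpace G] (H : Subgroup G) : Prop :=
  ∃ g ∈ H, closure ((Subgroup.zpowers g : Subgroup G) : Set G) = (H : Set G)

/-- The pronilpotent residual `γ∞(G)`: the intersection of the terms of the lower central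
series of `G` (each term taken as the corresponding closed subgroup). -/
def pronilpotentResidual (G : Type*) [Group G] [TopologicalSpace G] [IsTopologicalGroup G] :
    Subgroup G :=
  ⨅ n : ℕ, ((⊤ : Subgroup G).lowerCentralSeries n).topologicalClosure

/-- A profinite group is pronilpotent iff its pronilpotent residual is trivial. -/
def IsPronilpotent (K : Type*) [Group K] [TopologicalSpace K] [IsTopologicalGroup K] : Prop :=
  pronilpotentResidual K = ⊥

/-- The quotient `K ⧸ N` is procyclic. -/
def QuotientIsProcyclic {K : Type*} [Group K] [TopologicalSpace K] (N : Subgroup K)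
    (hN : N.Normal) : Prop :=
  letI := hN
  IsProcyclic (K ⧸ N)

/-- `K` is finite-by-procyclic: it has a finite normal subgroup with procyclic quotient. -/
def FiniteByProcyclic (K : Type*) [Group K] [TopologicalSpace K] : Prop :=
  ∃ (N : Subgroup K) (hN : N.Normal), Finite N ∧ QuotientIsProcyclic N hN

/-- The quotient `K ⧸ N` is pronilpotent. -/
def QuotientIsPronilpotent {K : Type*} [Group K] [TopologicalSpace K] [IsTopologicalGroup K]
    (N : Subgroup K) (hN : N.Normal) : Prop :=
  letI := hN
  IsPronilpotent (K ⧸ N)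

/-- The closed subgroup `[S,T]` generated by the commutators `⁅s,t⁆`, `s ∈ S`, `t ∈ T`. -/
def commClosure {G : Type*} [Group G] [TopologicalSpace G] [IsTopologicalGroup G]
    (S T : Set G) : Subgroup G :=
  (Subgroup.closure {z : G | ∃ s ∈ S, ∃ t ∈ T, z = ⁅s, t⁆}).topologicalClosure


section Helpers

variable {G : Type*} [Group G] [TopologicalSpace G] [IsTopologicalGroup G]

private lemma isClosed_center' [T2Space G] :
    IsClosed ((Subgroup.center G : Subgroup G) : Set G) := by
  have h : ((Subgroup.center G : Subgroup G) : Set G) = ⋂ g : G, {x : G | g * x = x * g} := by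
    ext x
    simp only [SetLike.mem_coe, Subgroup.mem_center_iff, Set.mem_iInter, Set.mem_setOf_eq]
  rw [h]
  exact isClosed_iInter fun g =>
    isClosed_eq (continuous_const.mul continuous_id) (continuous_id.mul continuous_const)

private lemma image_closure' {X Y : Type*} [TopologicalSpace X] [TopologicalSpace Y]
    [CompactSpace X] [T2Space Y] {f : X → Y} (hf : Continuous f) (s : Set X) :
    f '' closure s = closure (f '' s) :=
  Set.Subset.antisymm (image_closure_subset_closure_image hf)
    (closure_minimal (Set.image_mono (f := f) subset_closure) (hf.isClosedMap _ isClosed_closure))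

private lemma closure_zpowers_comm [T2Space G] (x : G) {a b : G}
    (ha : a ∈ closure ((Subgroup.zpowers x : Subgroup G) : Set G))
    (hb : b ∈ closure ((Subgroup.zpowers x : Subgroup G) : Set G)) : a * b = b * a := by
  have step1 : ∀ c ∈ ((Subgroup.zpowers x : Subgroup G) : Set G),
      ∀ d ∈ closure ((Subgroup.zpowers x : Subgroup G) : Set G), c * d = d * c := by
    intro c hc d hd
    have hcl : IsClosed {d : G | c * d = d * c} :=
      isClosed_eq (continuous_const.mul continuous_id) (continuous_id.mul continuous_const)
    refine closure_minimal ?_ hcl hd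
    intro y hy
    obtain ⟨n, rfl⟩ := Subgroup.mem_zpowers_iff.mp hy
    obtain ⟨m, rfl⟩ := Subgroup.mem_zpowers_iff.mp hc
    exact ((Commute.refl x).zpow_zpow m n).eq
  have hcl : IsClosed {a : G | a * b = b * a} :=
    isClosed_eq (continuous_id.mul continuous_const) (continuous_const.mul continuous_id)
  exact closure_minimal (fun c hc => step1 c hc b hb) hcl ha

private lemma comm_mul_right' {H : Type*} [Group H] (a g h : H) :
    ⁅a, g * h⁆ = ⁅a, g⁆ * (g * ⁅a, h⁆ * g⁻¹) := by group

private lemma comm_mul_left' {H : Type*} [Group H] (a b g : H) :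
    ⁅a * b, g⁆ = (a * ⁅b, g⁆ * a⁻¹) * ⁅a, g⁆ := by group

private lemma totallySeparated_quotient [CompactSpace G] [T2Space G]
    [TotallyDisconnectedSpace G] (Z : Subgroup G) [Z.Normal] [IsClosed (Z : Set G)] :
    TotallySeparatedSpace (G ⧸ Z) := by
  constructor
  intro a _ b _ hab
  have hc1 : a⁻¹ * b ≠ 1 := fun hcontra => hab (inv_mul_eq_one.mp hcontra)
  have hV : IsOpen ((QuotientGroup.mk : G → G ⧸ Z) ⁻¹' {a⁻¹ * b}ᶜ) :=
    (isClosed_singleton.isOpen_compl).preimage QuotientGroup.continuous_mk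
  have h1V : (1 : G) ∈ (QuotientGroup.mk : G → G ⧸ Z) ⁻¹' {a⁻¹ * b}ᶜ := by
    simp only [Set.mem_preimage, Set.mem_compl_iff, Set.mem_singleton_iff]
    intro hcontra
    exact hc1 (by rw [← hcontra]; rfl)
  obtain ⟨W, WClopen, einW, hWV⟩ := compact_exists_isClopen_in_isOpen hV h1V
  obtain ⟨H, hHW⟩ := IsTopologicalGroup.exist_openNormalSubgroup_sub_clopen_nhds_of_one WClopen einW
  have openHq : IsOpen ((Subgroup.map (QuotientGroup.mk' Z) H.toSubgroup : Subgroup (G ⧸ Z)) :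
      Set (G ⧸ Z)) := by
    rw [Subgroup.coe_map]
    exact QuotientGroup.isOpenMap_coe _ H.isOpen
  have closedHq : IsClosed ((Subgroup.map (QuotientGroup.mk' Z) H.toSubgroup : Subgroup (G ⧸ Z)) :
      Set (G ⧸ Z)) := Subgroup.isClosed_of_isOpen _ openHq
  have hcHq : a⁻¹ * b ∉ ((Subgroup.map (QuotientGroup.mk' Z) H.toSubgroup : Subgroup (G ⧸ Z)) :
      Set (G ⧸ Z)) := by
    intro hmem
    obtain ⟨g, hg, hgc⟩ := Subgroup.mem_map.mp hmem
    exact (hWV (hHW hg)) hgc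
  refine ⟨(fun y => a⁻¹ * y) ⁻¹'
      ((Subgroup.map (QuotientGroup.mk' Z) H.toSubgroup : Subgroup (G ⧸ Z)) : Set (G ⧸ Z)),
      ((fun y => a⁻¹ * y) ⁻¹'
      ((Subgroup.map (QuotientGroup.mk' Z) H.toSubgroup : Subgroup (G ⧸ Z)) : Set (G ⧸ Z)))ᶜ,
      openHq.preimage (continuous_const.mul continuous_id),
      (closedHq.preimage (continuous_const.mul continuous_id)).isOpen_compl,
      ?_, ?_, ?_, disjoint_compl_right⟩
  · rw [Set.mem_preimage, inv_mul_cancel]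
    exact Subgroup.one_mem _
  · rw [Set.mem_compl_iff, Set.mem_preimage]
    exact hcHq
  · rw [Set.union_compl_self]

end Helpers

universe u

set_option maxHeartbeats 1000000 in
set_option synthInstance.maxHeartbeats 400000 in
private theorem aux_theorem : ∀ (n : ℕ) (G : Type u) [Group G] [TopologicalSpace G]
    [IsTopologicalGroup G] [CompactSpace G] [T2Space G] [TotallyDisconnectedSpace G]
    [Group.IsNilpotent G],
    Group.nilpotencyClass G ≤ n → FiniteByProcyclic (G ⧸ Subgroup.center G) →
    Finite (G ⧸ Subgroup.center G) := by
  intro n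
  induction n with
  | zero =>
    intro G _ _ _ _ _ _ _ hcl _
    haveI : Subsingleton G :=
      nilpotencyClass_zero_iff_subsingleton.mp (Nat.le_zero.mp hcl)
    exact Quotient.finite _
  | succ n ih =>
    intro G _ _ _ _ _ _ _ hcl h
    classical
    haveI hZc : IsClosed ((Subgroup.center G : Subgroup G) : Set G) := isClosed_center'
    obtain ⟨N, hN, hNfin, hproc⟩ := h
    haveI := hN
    haveI := hNfin
    have hNset : ((N : Subgroup (G ⧸ Subgroup.center G)) : Set (G ⧸ Subgroup.center G)).Finite :=
      Set.finite_coe_iff.mp (by exact hNfin)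
    haveI hNclosed : IsClosed ((N : Subgroup _) : Set (G ⧸ Subgroup.center G)) := hNset.isClosed
    have hproc' : IsProcyclic ((G ⧸ Subgroup.center G) ⧸ N) := hproc
    obtain ⟨g₀, hg₀⟩ := hproc'
    -- projections
    set π : G →* G ⧸ Subgroup.center G := QuotientGroup.mk' (Subgroup.center G) with hπdef
    have πcont : Continuous ⇑π := by exact QuotientGroup.continuous_mk
    set θ : (G ⧸ Subgroup.center G) →* ((G ⧸ Subgroup.center G) ⧸ N) :=
      QuotientGroup.mk' N with hθdef
    have θcont : Continuous ⇑θ := by exact QuotientGroup.continuous_mk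
    obtain ⟨q, hq⟩ := QuotientGroup.mk'_surjective N g₀
    obtain ⟨x, hx⟩ := QuotientGroup.mk'_surjective (Subgroup.center G) q
    set Cs : Set G := closure ((Subgroup.zpowers x : Subgroup G) : Set G) with hCs
    -- Step 1 : π '' Cs is the closed procyclic subgroup generated by q
    have hπC : ⇑π '' Cs = closure ((Subgroup.zpowers q : Subgroup _) : Set _) := by
      rw [hCs, image_closure' πcont]
      have himg : (⇑π) '' ((Subgroup.zpowers x : Subgroup G) : Set G)
          = ((Subgroup.zpowers q : Subgroup (G ⧸ Subgroup.center G)) : Set _) := by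
        calc (⇑π) '' ((Subgroup.zpowers x : Subgroup G) : Set G)
          = ((Subgroup.map π (Subgroup.zpowers x) : Subgroup _) : Set _) :=
            (Subgroup.coe_map _ _).symm
          _ = _ := by rw [MonoidHom.map_zpowers, hx]
      rw [himg]
    -- Step 2 : θ maps that closure onto everything
    have hθP : ⇑θ '' closure ((Subgroup.zpowers q : Subgroup _) : Set _) = Set.univ := by
      rw [image_closure' θcont]
      have h2 : ⇑θ '' ((Subgroup.zpowers q : Subgroup _) : Set _)
          = ((Subgroup.zpowers g₀ : Subgroup _) : Set _) := by
        calc (⇑θ) '' ((Subgroup.zpowers q : Subgroup _) : Set _)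
            = ((Subgroup.map θ (Subgroup.zpowers q) : Subgroup _) : Set _) :=
              (Subgroup.coe_map _ _).symm
          _ = _ := by rw [MonoidHom.map_zpowers, hq]
      rw [h2, hg₀]
    -- Step 3 : decomposition G = Cs * M
    have decomp : ∀ v : G, ∃ c ∈ Cs, ∃ m : G, π m ∈ N ∧ v = c * m := by
      intro v
      have hmem : θ (π v) ∈ ⇑θ '' (⇑π '' Cs) := by
        rw [hπC, hθP]; exact Set.mem_univ _
      obtain ⟨w, ⟨c, hc, rfl⟩, hw⟩ := hmem
      refine ⟨c, hc, c⁻¹ * v, ?_, (mul_inv_cancel_left c v).symm⟩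
      have h1 : θ (π (c⁻¹ * v)) = 1 := by
        rw [map_mul, map_inv, map_mul, map_inv, hw]
        exact inv_mul_cancel _
      exact (QuotientGroup.eq_one_iff _).mp h1
    -- the exponent
    set E := Nat.card N with hE
    have hEpos : 0 < E := Nat.card_pos
    have hMpow : ∀ m : G, π m ∈ N → m ^ E ∈ Subgroup.center G := by
      intro m hm
      have h1 : (π m) ^ E = 1 := by
        have h := pow_card_eq_one' (x := (⟨π m, hm⟩ : N))
        have h2 := congrArg (Subtype.val) h
        simp only [SubmonoidClass.coe_pow, OneMemClass.coe_one] at h2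
        exact h2
      have h3 : π (m ^ E) = 1 := by rw [map_pow, h1]
      exact (QuotientGroup.eq_one_iff _).mp h3
    -- Step 4 : key lemma
    have key : ∀ c ∈ Cs, π c ∈ Subgroup.center (G ⧸ Subgroup.center G) →
        c ^ E ∈ Subgroup.center G := by
      intro c hc hcen
      have hcomm : ∀ g : G, ⁅c, g⁆ ∈ Subgroup.center G := by
        intro g
        have h1 : π ⁅c, g⁆ = 1 := by
          rw [map_commutatorElement]
          exact commutatorElement_eq_one_iff_mul_comm.mpr
            ((Subgroup.mem_center_iff.mp hcen (π g)).symm)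
        exact (QuotientGroup.eq_one_iff _).mp h1
      have hadd : ∀ g h' : G, ⁅c, g * h'⁆ = ⁅c, g⁆ * ⁅c, h'⁆ := by
        intro g h'
        rw [comm_mul_right']
        congr 1
        have hz := Subgroup.mem_center_iff.mp (hcomm h') g
        rw [hz]
        exact mul_inv_cancel_right _ _
      have hpow2 : ∀ (g : G) (k : ℕ), ⁅c, g ^ k⁆ = ⁅c, g⁆ ^ k := by
        intro g k
        induction k with
        | zero => simp
        | succ k ihk => rw [pow_succ, hadd, ihk, pow_succ]
      have hcomm' : ∀ (k : ℕ) (g : G), ⁅c ^ k, g⁆ ∈ Subgroup.center G := by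
        intro k g
        have h1 : π ⁅c ^ k, g⁆ = 1 := by
          rw [map_commutatorElement, map_pow]
          exact commutatorElement_eq_one_iff_mul_comm.mpr
            ((Subgroup.mem_center_iff.mp (pow_mem hcen k) (π g)).symm)
        exact (QuotientGroup.eq_one_iff _).mp h1
      have hpow1 : ∀ (g : G) (k : ℕ), ⁅c ^ k, g⁆ = ⁅c, g⁆ ^ k := by
        intro g k
        induction k with
        | zero => simp
        | succ k ihk =>
          rw [pow_succ', comm_mul_left']
          have hz := Subgroup.mem_center_iff.mp (hcomm' k g) c
          rw [hz, mul_inv_cancel_right, ihk, pow_succ]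
      rw [Subgroup.mem_center_iff]
      intro g
      have h1 : ⁅c ^ E, g⁆ = 1 := by
        obtain ⟨c', hc', m, hm, rfl⟩ := decomp g
        have hcc' : ⁅c, c'⁆ = 1 :=
          commutatorElement_eq_one_iff_mul_comm.mpr (closure_zpowers_comm x hc hc')
        have h2 : ⁅c, c' * m⁆ = ⁅c, m⁆ := by rw [hadd, hcc', one_mul]
        rw [hpow1, h2, ← hpow2, commutatorElement_eq_one_iff_mul_comm]
        exact Subgroup.mem_center_iff.mp (hMpow m hm) c
      exact (commutatorElement_eq_one_iff_mul_comm.mp h1).symm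
    -- Step 5 : apply the induction hypothesis to G ⧸ center G
    haveI : TotallySeparatedSpace (G ⧸ Subgroup.center G) :=
      totallySeparated_quotient (Subgroup.center G)
    haveI hAc : IsClosed ((Subgroup.center (G ⧸ Subgroup.center G) :
        Subgroup (G ⧸ Subgroup.center G)) : Set (G ⧸ Subgroup.center G)) := isClosed_center'
    set μ : (G ⧸ Subgroup.center G) →*
        ((G ⧸ Subgroup.center G) ⧸ Subgroup.center (G ⧸ Subgroup.center G)) :=
      QuotientGroup.mk' (Subgroup.center (G ⧸ Subgroup.center G)) with hμdef
    have μcont : Continuous ⇑μ := by exact QuotientGroup.continuous_mk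
    haveI hN' : (Subgroup.map μ N).Normal :=
      Subgroup.Normal.map hN μ (QuotientGroup.mk'_surjective _)
    have hN'setfin : ((Subgroup.map μ N : Subgroup ((G ⧸ Subgroup.center G) ⧸ Subgroup.center (G ⧸ Subgroup.center G))) : Set ((G ⧸ Subgroup.center G) ⧸ Subgroup.center (G ⧸ Subgroup.center G))).Finite := by
      rw [Subgroup.coe_map]
      exact hNset.image _
    haveI hN'fin : Finite (Subgroup.map μ N) := by
      exact Set.finite_coe_iff.mpr hN'setfin
    haveI hN'closed : IsClosed ((Subgroup.map μ N : Subgroup ((G ⧸ Subgroup.center G) ⧸ Subgroup.center (G ⧸ Subgroup.center G))) : Set ((G ⧸ Subgroup.center G) ⧸ Subgroup.center (G ⧸ Subgroup.center G))) := hN'setfin.isClosed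
    set τ : (G ⧸ Subgroup.center G) →*
        (((G ⧸ Subgroup.center G) ⧸ Subgroup.center (G ⧸ Subgroup.center G)) ⧸ Subgroup.map μ N) :=
      (QuotientGroup.mk' (Subgroup.map μ N)).comp μ with hτdef
    have τcont : Continuous ⇑τ := by
      exact (QuotientGroup.continuous_mk).comp (by exact QuotientGroup.continuous_mk)
    have hτP : ⇑τ '' closure ((Subgroup.zpowers q : Subgroup _) : Set _)
        = closure ((Subgroup.zpowers (τ q) : Subgroup _) : Set _) := by
      rw [image_closure' τcont]
      have himg : (⇑τ) '' ((Subgroup.zpowers q : Subgroup _) : Set _)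
          = ((Subgroup.zpowers (τ q) : Subgroup _) : Set _) := by
        calc (⇑τ) '' ((Subgroup.zpowers q : Subgroup _) : Set _)
          = ((Subgroup.map τ (Subgroup.zpowers q) : Subgroup _) : Set _) :=
            (Subgroup.coe_map _ _).symm
          _ = _ := by rw [MonoidHom.map_zpowers]
      rw [himg]
    have hτsurj : Function.Surjective ⇑τ := by
      rw [hτdef, MonoidHom.coe_comp]
      exact (QuotientGroup.mk'_surjective _).comp (QuotientGroup.mk'_surjective _)
    have hgen : closure ((Subgroup.zpowers (τ q) : Subgroup (((G ⧸ Subgroup.center G) ⧸ Subgroup.center (G ⧸ Subgroup.center G)) ⧸ Subgroup.map μ N)) : Set (((G ⧸ Subgroup.center G) ⧸ Subgroup.center (G ⧸ Subgroup.center G)) ⧸ Subgroup.map μ N)) = Set.univ := by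
      rw [← hτP]
      apply Set.eq_univ_of_univ_subset
      intro y _
      obtain ⟨yy, rfl⟩ := hτsurj y
      obtain ⟨v, rfl⟩ := QuotientGroup.mk'_surjective (Subgroup.center G) yy
      obtain ⟨c, hc, m, hm, rfl⟩ := decomp v
      have h1 : τ (π m) = 1 := by
        refine (QuotientGroup.eq_one_iff _).mpr ?_
        exact Subgroup.mem_map.mpr ⟨π m, hm, rfl⟩
      have h2 : τ (π (c * m)) = τ (π c) := by rw [map_mul, map_mul, h1, mul_one]
      rw [h2]
      refine Set.mem_image_of_mem _ ?_
      rw [← hπC]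
      exact Set.mem_image_of_mem _ hc
    have hfbp : FiniteByProcyclic ((G ⧸ Subgroup.center G) ⧸
        Subgroup.center (G ⧸ Subgroup.center G)) :=
      ⟨Subgroup.map μ N, hN', hN'fin, ⟨τ q, hgen⟩⟩
    haveI hclQ : Group.IsNilpotent (G ⧸ Subgroup.center G) := inferInstance
    have hclassQ : Group.nilpotencyClass (G ⧸ Subgroup.center G) ≤ n := by
      rw [nilpotencyClass_quotient_center]
      omega
    haveI hQfin : Finite ((G ⧸ Subgroup.center G) ⧸
        Subgroup.center (G ⧸ Subgroup.center G)) :=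
      ih (G ⧸ Subgroup.center G) hclassQ hfbp
    -- Step 6 : q has finite order
    set k := Nat.card ((G ⧸ Subgroup.center G) ⧸
        Subgroup.center (G ⧸ Subgroup.center G)) with hk
    have hkpos : 0 < k := Nat.card_pos
    have hqk : q ^ k ∈ Subgroup.center (G ⧸ Subgroup.center G) := by
      have h1 : (μ q) ^ k = 1 := pow_card_eq_one'
      rw [← map_pow] at h1
      exact (QuotientGroup.eq_one_iff _).mp h1
    have hqkP : q ^ k ∈ ⇑π '' Cs := by
      rw [hπC]
      exact subset_closure (by exact pow_mem (Subgroup.mem_zpowers q) k)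
    obtain ⟨c, hc, hcq⟩ := hqkP
    have hq1 : (q ^ k) ^ E = 1 := by
      have h4 := key c hc (by rw [hcq]; exact hqk)
      have h5 : π (c ^ E) = 1 := (QuotientGroup.eq_one_iff _).mpr h4
      rw [map_pow, hcq] at h5
      exact h5
    have hord : IsOfFinOrder q := by
      refine isOfFinOrder_iff_pow_eq_one.mpr ⟨k * E, by positivity, ?_⟩
      rw [pow_mul]; exact hq1
    have hfinP : ((Subgroup.zpowers q : Subgroup _) : Set (G ⧸ Subgroup.center G)).Finite :=
      finite_zpowers.mpr hord
    have hPeq : closure ((Subgroup.zpowers q : Subgroup _) : Set (G ⧸ Subgroup.center G))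
        = ((Subgroup.zpowers q : Subgroup _) : Set _) := hfinP.isClosed.closure_eq
    -- Step 7 : conclude
    haveI := hfinP.to_subtype
    have hsurj : Function.Surjective
        (fun p : (↥((Subgroup.zpowers q : Subgroup _) : Set (G ⧸ Subgroup.center G)) × ↥N) =>
          (p.1 : G ⧸ Subgroup.center G) * (p.2 : G ⧸ Subgroup.center G)) := by
      intro y
      obtain ⟨v, rfl⟩ := QuotientGroup.mk'_surjective (Subgroup.center G) y
      obtain ⟨c, hc, m, hm, rfl⟩ := decomp v
      have h5 : π c ∈ ((Subgroup.zpowers q : Subgroup _) : Set _) := by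
        rw [← hPeq, ← hπC]
        exact Set.mem_image_of_mem _ hc
      exact ⟨(⟨π c, h5⟩, ⟨π m, hm⟩), (map_mul π c m).symm⟩
    exact Finite.of_surjective _ hsurj

/-- Let `G` be a nilpotent profinite group. If `G/Z(G)` is finite-by-procyclic,
then `G/Z(G)` is finite. -/
theorem quotient_center_finite_of_finiteByProcyclic
    {G : Type*} [Group G] [TopologicalSpace G] [IsTopologicalGroup G]
    [CompactSpace G] [T2Space G] [TotallyDisconnectedSpace G]
    [Group.IsNilpotent G]
    (h : FiniteByProcyclic (G ⧸ Subgroup.center G)) :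
    Finite (G ⧸ Subgroup.center G) :=
  aux_theorem (Group.nilpotencyClass G) G le_rfl h
end

section
/- Let G be a finite-by-procyclic profinite group. Then G has a finite characteristic subgroup N (a finite subgroup invariant under all automorphisms of G) such that G/N is procyclic. -/
/-!  Basic notions for profinite groups.

A profinite group is modelled as a compact Hausdorff totally disconnected
topological group, via the instance assumptions
`[Group G] [TopologicalSpace G] [IsTopologicalGroup G] [CompactSpace G]
[T2Space G] [TotallyDisconnectedSpace G]`. -/

open scoped commutatorElement

open Subgroup QuotientGroup Pointwise

section Aux

private lemma exists_open_normal_not_mem {G : Type*} [Group G] [TopologicalSpace G]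
    [IsTopologicalGroup G] [CompactSpace G] [T2Space G] [TotallyDisconnectedSpace G]
    {x : G} (hx : x ≠ 1) :
    ∃ U : Subgroup G, U.Normal ∧ IsOpen (U : Set G) ∧ x ∉ U := by
  obtain ⟨V, hV, h1V, hVx⟩ := compact_exists_isClopen_in_isOpen
    (isOpen_compl_singleton (x := x)) (by simpa using hx.symm)
  obtain ⟨H, hH⟩ := IsTopologicalGroup.exist_openNormalSubgroup_sub_clopen_nhds_of_one hV h1V
  exact ⟨H.toSubgroup, H.isNormal', H.isOpen', fun hxH => (hVx (hH hxH)) rfl⟩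

private lemma finite_of_bounded_quotients {G : Type*} [Group G] [TopologicalSpace G]
    [IsTopologicalGroup G] [CompactSpace G] [T2Space G] [TotallyDisconnectedSpace G]
    (M : Subgroup G) (B : ℕ)
    (hB : ∀ (U : Subgroup G) [U.Normal], IsOpen (U : Set G) →
      Nat.card (M.map (QuotientGroup.mk' U)) ≤ B) : Finite M := by
  classical
  by_contra hfin
  have hinf : (M : Set G).Infinite := by
    intro hf
    exact hfin hf.to_subtype
  obtain ⟨t, htsub, htcard⟩ := hinf.exists_subset_card_eq (B + 1)
  have hsep : ∀ p : G × G, ∃ U : Subgroup G,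
      U.Normal ∧ IsOpen (U : Set G) ∧ (p.1 ≠ p.2 → p.1⁻¹ * p.2 ∉ U) := by
    intro p
    by_cases hp : p.1 = p.2
    · exact ⟨⊤, inferInstance, by simpa using isOpen_univ, fun h => absurd hp h⟩
    · obtain ⟨U, h1, h2, h3⟩ := exists_open_normal_not_mem
        (x := p.1⁻¹ * p.2) (by
          intro hcon
          exact hp (by rw [← inv_inv p.1, ← mul_one p.1⁻¹⁻¹]; rw [← hcon]; group))
      exact ⟨U, h1, h2, fun _ => h3⟩
  choose V hVnorm hVopen hVsep using hsep
  set U : Subgroup G := ⨅ p ∈ (t ×ˢ t : Finset (G × G)), V p with hU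
  have hUnorm : U.Normal := by
    constructor
    intro x hx g
    simp only [hU, Subgroup.mem_iInf] at hx ⊢
    intro p hp
    exact (hVnorm p).conj_mem x (hx p hp) g
  have hUopen : IsOpen (U : Set G) := by
    have : (U : Set G) = ⋂ p ∈ (t ×ˢ t : Finset (G × G)), (V p : Set G) := by
      simp [hU, Subgroup.coe_iInf]
    rw [this]
    exact isOpen_biInter_finset fun p _ => hVopen p
  have hUle : ∀ p ∈ (t ×ˢ t : Finset (G × G)), U ≤ V p := by
    intro p hp x hx
    simp only [hU, Subgroup.mem_iInf] at hx
    exact hx p hp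
  haveI := hUnorm
  have hinj : Set.InjOn (QuotientGroup.mk (s := U)) ↑t := by
    intro x hxt y hyt hxy
    by_contra hne
    have hmem : x⁻¹ * y ∈ U := QuotientGroup.eq.mp hxy
    exact hVsep (x, y) hne (hUle (x, y) (Finset.mem_product.mpr ⟨hxt, hyt⟩) hmem)
  haveI : Finite (G ⧸ U) := U.quotient_finite_of_isOpen hUopen
  have hsub : ↑(t.image (QuotientGroup.mk (s := U))) ⊆
      ((M.map (QuotientGroup.mk' U)) : Set (G ⧸ U)) := by
    intro z hz
    simp only [Finset.coe_image, Set.mem_image] at hz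
    obtain ⟨x, hxt, rfl⟩ := hz
    exact ⟨x, htsub hxt, rfl⟩
  have hcard : B + 1 ≤ Nat.card (M.map (QuotientGroup.mk' U)) := by
    calc B + 1 = t.card := htcard.symm
      _ = (t.image (QuotientGroup.mk (s := U))).card := (Finset.card_image_of_injOn hinj).symm
      _ = (↑(t.image (QuotientGroup.mk (s := U))) : Set (G ⧸ U)).ncard :=
        (Set.ncard_coe_finset _).symm
      _ ≤ ((M.map (QuotientGroup.mk' U)) : Set (G ⧸ U)).ncard :=
        Set.ncard_le_ncard hsub (Set.toFinite _)
      _ = Nat.card (M.map (QuotientGroup.mk' U)) := (Nat.card_coe_set_eq _).symm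
  have := hB U hUopen
  omega

end Aux

theorem exists_finite_characteristic_with_procyclic_quotient'
    {G : Type*} [Group G] [TopologicalSpace G] [IsTopologicalGroup G]
    [CompactSpace G] [T2Space G] [TotallyDisconnectedSpace G]
    (N : Subgroup G) (hN : N.Normal) (hNfin : Finite N)
    (hNproc : letI := hN; IsProcyclic (G ⧸ N)) :
    ∃ (M : Subgroup G), M.Characteristic ∧ Finite M ∧
      ∃ hM : M.Normal, (letI := hM; IsProcyclic (G ⧸ M)) := by
  classical
  haveI := hN
  haveI := hNfin
  set n : ℕ := Nat.card N with hn
  have hn0 : 0 < n := Nat.card_pos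
  set S : Set G := {x : G | x ^ n = 1} with hS
  set M : Subgroup G := Subgroup.closure S with hM
  have hNS : ∀ x ∈ N, x ∈ S := by
    intro x hx
    have h1 : (⟨x, hx⟩ : N) ^ n = 1 := pow_card_eq_one'
    have h2 := congrArg (Subgroup.subtype N) h1
    simpa [hS] using h2
  have hNM : N ≤ M := fun x hx => Subgroup.subset_closure (hNS x hx)
  -- characteristic
  have hchar : M.Characteristic := by
    refine ⟨fun ϕ => ?_⟩
    have hSinv : ⇑ϕ.symm '' S = S := by
      ext y
      simp only [hS, Set.mem_image, Set.mem_setOf_eq]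
      constructor
      · rintro ⟨z, hz, rfl⟩
        rw [← map_pow, hz, map_one]
      · intro hy
        exact ⟨ϕ y, by rw [← map_pow, hy, map_one], by simp⟩
    rw [hM, Subgroup.comap_equiv_eq_map_symm', MonoidHom.map_closure]
    rw [show (⇑(MulEquiv.toMonoidHom ϕ.symm) '' S) = ⇑ϕ.symm '' S from rfl, hSinv]
  haveI := hchar
  have hMnorm : M.Normal := Subgroup.normal_of_characteristic M
  haveI := hMnorm
  -- generator
  obtain ⟨q, hq⟩ := hNproc
  obtain ⟨g, rfl⟩ := QuotientGroup.mk_surjective q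
  have hqd : Dense ((Subgroup.zpowers ((g : G) : G ⧸ N) : Subgroup (G ⧸ N)) : Set (G ⧸ N)) :=
    dense_iff_closure_eq.mpr hq
  have hdense : ∀ W : Set G, IsOpen W → W.Nonempty →
      ∃ (m : ℤ) (ν : G), ν ∈ N ∧ g ^ m * ν ∈ W := by
    intro W hW hWne
    have hop : IsOpenMap ((↑) : G → G ⧸ N) := QuotientGroup.isOpenMap_coe
    obtain ⟨z, hz1, hz2⟩ := hqd.exists_mem_open (hop W hW) (hWne.image _)
    obtain ⟨m, hm⟩ := Subgroup.mem_zpowers_iff.mp hz1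
    obtain ⟨w, hwW, hw⟩ := hz2
    have hmk : ((g ^ m : G) : G ⧸ N) = ((w : G) : G ⧸ N) := by
      rw [QuotientGroup.mk_zpow, hm, hw]
    have hnu : (g ^ m)⁻¹ * w ∈ N := QuotientGroup.eq.mp hmk
    exact ⟨m, (g ^ m)⁻¹ * w, hnu, by rwa [mul_inv_cancel_left]⟩
  -- bounded quotients
  have hbound : ∀ (U : Subgroup G) [U.Normal], IsOpen (U : Set G) →
      Nat.card (M.map (QuotientGroup.mk' U)) ≤ n * n := by
    intro U hUn hUopen
    haveI : Finite (G ⧸ U) := U.quotient_finite_of_isOpen hUopen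
    set W : Subgroup G := N ⊔ U with hWdef
    haveI hWn : W.Normal := Subgroup.sup_normal N U
    have hWopen : IsOpen (W : Set G) := Subgroup.isOpen_mono le_sup_right hUopen
    haveI : Finite (G ⧸ W) := W.quotient_finite_of_isOpen hWopen
    have hsurj : ∀ k : G ⧸ W, k ∈ Subgroup.zpowers ((g : G) : G ⧸ W) := by
      intro k
      obtain ⟨x, rfl⟩ := QuotientGroup.mk_surjective k
      have hco : IsOpen ((x * ·) '' (W : Set G)) := (Homeomorph.mulLeft x).isOpenMap _ hWopen
      obtain ⟨m, ν, hν, hmem⟩ := hdense _ hco ⟨x, 1, W.one_mem, mul_one x⟩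
      obtain ⟨w, hwW, heq⟩ := hmem
      have h2 : (g ^ m)⁻¹ * x ∈ W := by
        have h3 : (g ^ m)⁻¹ * x = ν * w⁻¹ := by
          calc (g ^ m)⁻¹ * x = (g ^ m)⁻¹ * (x * w) * w⁻¹ := by group
            _ = (g ^ m)⁻¹ * (g ^ m * ν) * w⁻¹ := by rw [show x * w = g ^ m * ν from heq]
            _ = ν * w⁻¹ := by group
        rw [h3]
        exact W.mul_mem ((le_sup_left : N ≤ W) hν) (W.inv_mem hwW)
      refine Subgroup.mem_zpowers_iff.mpr ⟨m, ?_⟩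
      rw [← QuotientGroup.mk_zpow]
      exact QuotientGroup.eq.mpr h2
    haveI : IsCyclic (G ⧸ W) := ⟨⟨((g : G) : G ⧸ W), hsurj⟩⟩
    have hcomm : ∀ a b : G ⧸ W, a * b = b * a := by
      intro a b
      obtain ⟨i, rfl⟩ := Subgroup.mem_zpowers_iff.mp (hsurj a)
      obtain ⟨j, rfl⟩ := Subgroup.mem_zpowers_iff.mp (hsurj b)
      rw [← zpow_add, ← zpow_add, add_comm]
    set T : Subgroup (G ⧸ W) :=
      { carrier := {k | k ^ n = 1}
        one_mem' := one_pow n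
        mul_mem' := by
          intro a b ha hb
          show (a * b) ^ n = 1
          rw [Commute.mul_pow (hcomm a b), ha, hb, mul_one]
        inv_mem' := by
          intro a ha
          show a⁻¹ ^ n = 1
          rw [inv_pow]
          show (a ^ n)⁻¹ = 1
          rw [show a ^ n = 1 from ha, inv_one] } with hT
    haveI : Fintype (G ⧸ W) := Fintype.ofFinite _
    have hTcard : Nat.card T ≤ n := by
      calc Nat.card T = Nat.card {k : G ⧸ W // k ^ n = 1} :=
            Nat.card_congr (Equiv.subtypeEquivRight (fun k => Iff.rfl))
        _ = Fintype.card {k : G ⧸ W // k ^ n = 1} := Nat.card_eq_fintype_card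
        _ = (Finset.univ.filter fun a : G ⧸ W => a ^ n = 1).card := Fintype.card_subtype _
        _ ≤ n := IsCyclic.card_pow_eq_one_le hn0
    have hUW : U ≤ W.comap (MonoidHom.id G) := fun x hx => (le_sup_right : U ≤ W) hx
    set θ : G ⧸ U →* G ⧸ W := QuotientGroup.map U W (MonoidHom.id G) hUW with hθ
    have hθmk : ∀ x : G, θ ((x : G) : G ⧸ U) = ((x : G) : G ⧸ W) := fun x =>
      QuotientGroup.map_mk U W (MonoidHom.id G) hUW x
    set MU : Subgroup (G ⧸ U) := M.map (QuotientGroup.mk' U) with hMU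
    set f : MU →* G ⧸ W := θ.comp MU.subtype with hf
    have hMT : ∀ x ∈ M, ((x : G) : G ⧸ W) ∈ T := by
      have hle : M ≤ T.comap (QuotientGroup.mk' W) := by
        rw [hM]
        apply (Subgroup.closure_le _).mpr
        intro s hs
        have hs' : s ^ n = 1 := hs
        show ((s : G) : G ⧸ W) ∈ T
        show ((s : G) : G ⧸ W) ^ n = 1
        rw [← QuotientGroup.mk_pow, hs', QuotientGroup.mk_one]
      exact fun x hx => hle hx
    have hrange : f.range ≤ T := by
      rintro k ⟨y, rfl⟩
      obtain ⟨x, hxM, hx⟩ := y.2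
      have heq : f y = ((x : G) : G ⧸ W) := by
        show θ y.1 = _
        rw [← hx]
        exact hθmk x
      rw [heq]
      exact hMT x hxM
    set NU : Subgroup (G ⧸ U) := N.map (QuotientGroup.mk' U) with hNU
    have hkerNU : ∀ z : G ⧸ U, θ z = 1 → z ∈ NU := by
      intro z hz
      obtain ⟨x, rfl⟩ := QuotientGroup.mk_surjective z
      rw [hθmk x] at hz
      have hxW : x ∈ W := (QuotientGroup.eq_one_iff x).mp hz
      have hxW' : x ∈ ((N : Set G) * (U : Set G)) := by
        rw [← Subgroup.normal_mul]
        exact hxW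
    -- x = ν * u
      obtain ⟨ν, hν, u, hu, rfl⟩ := hxW'
      refine ⟨ν, hν, ?_⟩
      show ((ν : G) : G ⧸ U) = ((ν * u : G) : G ⧸ U)
      exact QuotientGroup.eq.mpr (by simpa using hu)
    have hker : Nat.card f.ker ≤ n := by
      have hinj : Function.Injective
          (fun z : f.ker => (⟨z.1.1, hkerNU z.1.1 (MonoidHom.mem_ker.mp z.2)⟩ : NU)) := by
        intro a b hab
        have h' := Subtype.ext_iff.mp hab
        exact Subtype.ext (Subtype.ext h')
      have h1 : Nat.card f.ker ≤ Nat.card NU := Nat.card_le_card_of_injective _ hinj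
      have h2 : Nat.card NU ≤ n := by
        have hs : Function.Surjective
            (fun ν : N => (⟨QuotientGroup.mk' U ν, Subgroup.mem_map_of_mem _ ν.2⟩ : NU)) := by
          rintro ⟨z, x, hx, rfl⟩
          exact ⟨⟨x, hx⟩, rfl⟩
        exact Nat.card_le_card_of_surjective _ hs
      omega
    have hqcard : Nat.card MU = Nat.card (MU ⧸ f.ker) * Nat.card f.ker :=
      Subgroup.card_eq_card_quotient_mul_card_subgroup f.ker
    have hr : Nat.card (MU ⧸ f.ker) = Nat.card f.range :=
      Nat.card_congr (QuotientGroup.quotientKerEquivRange f).toEquiv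
    have hrle : Nat.card f.range ≤ Nat.card T := Subgroup.card_le_of_le hrange
    calc Nat.card MU = Nat.card (MU ⧸ f.ker) * Nat.card f.ker := hqcard
      _ ≤ n * n := Nat.mul_le_mul (by rw [hr]; exact le_trans hrle hTcard) hker
  -- conclude
  haveI hMfin : Finite M := finite_of_bounded_quotients M (n * n) hbound
  refine ⟨M, hchar, hMfin, hMnorm, ?_⟩
  refine ⟨((g : G) : G ⧸ M), ?_⟩
  rw [← dense_iff_closure_eq, dense_iff_inter_open]
  intro V hV hVne
  have hpre : IsOpen ((QuotientGroup.mk : G → G ⧸ M) ⁻¹' V) := hV.preimage continuous_quot_mk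
  have hprene : ((QuotientGroup.mk : G → G ⧸ M) ⁻¹' V).Nonempty := by
    obtain ⟨v, hv⟩ := hVne
    obtain ⟨x, rfl⟩ := QuotientGroup.mk_surjective v
    exact ⟨x, hv⟩
  obtain ⟨m, ν, hν, hmem⟩ := hdense _ hpre hprene
  refine ⟨((g ^ m * ν : G) : G ⧸ M), hmem, ?_⟩
  have heq : ((g ^ m * ν : G) : G ⧸ M) = (((g : G) : G ⧸ M)) ^ m := by
    rw [QuotientGroup.mk_mul, (QuotientGroup.eq_one_iff ν).mpr (hNM hν), mul_one,
      QuotientGroup.mk_zpow]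
  rw [heq]
  exact ⟨m, rfl⟩

/-- A finite-by-procyclic profinite group has a finite characteristic subgroup `N`
such that `G/N` is procyclic. -/
theorem exists_finite_characteristic_with_procyclic_quotient
    {G : Type*} [Group G] [TopologicalSpace G] [IsTopologicalGroup G]
    [CompactSpace G] [T2Space G] [TotallyDisconnectedSpace G]
    (h : FiniteByProcyclic G) :
    ∃ (N : Subgroup G), N.Characteristic ∧ Finite N ∧
      ∃ hN : N.Normal, QuotientIsProcyclic N hN := by
  obtain ⟨N, hN, hNfin, hNproc⟩ := h
  obtain ⟨M, h1, h2, h3, h4⟩ :=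
    exists_finite_characteristic_with_procyclic_quotient' N hN hNfin hNproc
  exact ⟨M, h1, h2, h3, h4⟩
end

section
/- Let G be a profinite group. Then the centralizer C_G(γ∞(G)) of the pronilpotent residual of G is contained in the Fitting subgroup F(G) of G. -/
open scoped commutatorElement

/-- The Fitting subgroup of a profinite group: the maximal pronilpotent closed normal
subgroup, realised as the closure of the join of all closed normal pronilpotent
subgroups. -/
def FittingSubgroup (G : Type*) [Group G] [TopologicalSpace G] [IsTopologicalGroup G] :
    Subgroup G :=
  (sSup {H : Subgroup G | IsClosed (H : Set G) ∧ H.Normal ∧ IsPronilpotent ↥H}).topologicalClosure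

private lemma lcsAux_map_eq {G H : Type*} [Group G] [Group H] (f : G →* H)
    (hf : Function.Surjective f) (n : ℕ) :
    ((⊤ : Subgroup G).lowerCentralSeries n).map f = (⊤ : Subgroup H).lowerCentralSeries n := by
  induction n with
  | zero =>
    simp only [Subgroup.lowerCentralSeries_zero]
    rw [← MonoidHom.range_eq_map]
    exact f.range_eq_top_of_surjective hf
  | succ n ih =>
    show ((⁅(⊤ : Subgroup G).lowerCentralSeries n, (⊤ : Subgroup G)⁆).map f) = ⁅(⊤ : Subgroup H).lowerCentralSeries n, ⊤⁆
    rw [Subgroup.map_commutator, ih, ← MonoidHom.range_eq_map,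
      f.range_eq_top_of_surjective hf]

private lemma residualAux_eq_bot_of_le_center
    {K : Type*} [Group K] [TopologicalSpace K] [IsTopologicalGroup K]
    [CompactSpace K] [T2Space K] [TotallyDisconnectedSpace K]
    (h : pronilpotentResidual K ≤ Subgroup.center K) :
    pronilpotentResidual K = ⊥ := by
  rw [eq_bot_iff]
  intro g hg
  rw [Subgroup.mem_bot]
  by_contra hg1
  obtain ⟨V, hV, h1V, hVs⟩ :=
    compact_exists_isClopen_in_isOpen (isOpen_compl_singleton (x := g))
      (by simpa using Ne.symm hg1)
  obtain ⟨N, hN⟩ := IsTopologicalGroup.exist_openNormalSubgroup_sub_clopen_nhds_of_one hV h1V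
  have hgN : g ∉ N.toSubgroup := fun hgmem => hVs (hN hgmem) rfl
  set Q := K ⧸ N.toSubgroup with hQdef
  haveI : Finite Q := Subgroup.quotient_finite_of_isOpen _ N.isOpen
  haveI : DiscreteTopology Q := QuotientGroup.discreteTopology N.isOpen
  set φ : K →* Q := QuotientGroup.mk' N.toSubgroup with hφdef
  have hsurj : Function.Surjective φ := QuotientGroup.mk'_surjective N.toSubgroup
  have hφcont : Continuous φ := continuous_quotient_mk'
  -- Step 1: g maps into every term of the lower central series of Q
  have key1 : ∀ n : ℕ, ((⊤ : Subgroup K).lowerCentralSeries n).topologicalClosure ≤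
      Subgroup.comap φ ((⊤ : Subgroup Q).lowerCentralSeries n) := by
    intro n
    refine Subgroup.topologicalClosure_minimal _
      (Subgroup.map_le_iff_le_comap.mp (lcsAux_map_eq φ hsurj n).le) ?_
    exact (isClosed_discrete _).preimage hφcont
  have hgQ : ∀ n : ℕ, φ g ∈ (⊤ : Subgroup Q).lowerCentralSeries n := by
    intro n
    have := key1 n (Subgroup.mem_iInf.mp hg n)
    exact this
  -- Step 2: the stable term D of the lower central series of Q is central
  have hDcent : ∀ q : Q, (∀ n, q ∈ (⊤ : Subgroup Q).lowerCentralSeries n) → q ∈ Subgroup.center Q := by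
    intro q hq
    set T : ℕ → Set K :=
      fun n => (φ ⁻¹' {q}) ∩ (((⊤ : Subgroup K).lowerCentralSeries n).topologicalClosure : Set K) with hT
    have hTanti : Antitone T := by
      intro m n hmn
      refine Set.inter_subset_inter_right _ ?_
      simp only [Subgroup.topologicalClosure_coe]
      exact closure_mono (SetLike.coe_subset_coe.mpr (Subgroup.lowerCentralSeries_antitone _ hmn))
    have hTne : ∀ n, (T n).Nonempty := by
      intro n
      have : q ∈ ((⊤ : Subgroup K).lowerCentralSeries n).map φ := by rw [lcsAux_map_eq φ hsurj n]; exact hq n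
      obtain ⟨k, hk, hkq⟩ := this
      exact ⟨k, hkq, ((⊤ : Subgroup K).lowerCentralSeries n).le_topologicalClosure hk⟩
    have hTclosed : ∀ n, IsClosed (T n) := fun n =>
      ((isClosed_discrete _).preimage hφcont).inter
        ((⊤ : Subgroup K).lowerCentralSeries n).isClosed_topologicalClosure
    have hTcompact : ∀ n, IsCompact (T n) := fun n => (hTclosed n).isCompact
    obtain ⟨k, hk⟩ := IsCompact.nonempty_iInter_of_directed_nonempty_isCompact_isClosed
      T hTanti.directed_ge hTne hTcompact hTclosed
    simp only [Set.mem_iInter, Set.mem_inter_iff, Set.mem_preimage, Set.mem_singleton_iff] at hk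
    have hkres : k ∈ pronilpotentResidual K := Subgroup.mem_iInf.mpr fun n => (hk n).2
    have hkc : k ∈ Subgroup.center K := h hkres
    have hφk : φ k = q := (hk 0).1
    rw [Subgroup.mem_center_iff]
    intro b
    obtain ⟨m, rfl⟩ := hsurj b
    rw [← hφk, ← map_mul, ← map_mul, Subgroup.mem_center_iff.mp hkc m]
  -- Step 3: the lower central series of Q stabilizes, and the stable term is trivial
  haveI : Finite (Subgroup Q) := Finite.of_injective (fun H => (H : Set Q)) SetLike.coe_injective
  obtain ⟨a, b, hab, heq⟩ := Finite.exists_ne_map_eq_of_infinite ((⊤ : Subgroup Q).lowerCentralSeries)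
  -- wlog a < b
  have hstab : ∃ c : ℕ, (⊤ : Subgroup Q).lowerCentralSeries (c + 1) = (⊤ : Subgroup Q).lowerCentralSeries c := by
    rcases lt_or_gt_of_ne hab with hlt | hlt
    · exact ⟨a, le_antisymm (Subgroup.lowerCentralSeries_antitone _ (Nat.le_succ a))
        (heq ▸ Subgroup.lowerCentralSeries_antitone _ hlt : (⊤ : Subgroup Q).lowerCentralSeries a ≤ _)⟩
    · exact ⟨b, le_antisymm (Subgroup.lowerCentralSeries_antitone _ (Nat.le_succ b))
        (heq ▸ Subgroup.lowerCentralSeries_antitone _ hlt : (⊤ : Subgroup Q).lowerCentralSeries b ≤ _)⟩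
  obtain ⟨c, hc⟩ := hstab
  have hstab' : ∀ m : ℕ, (⊤ : Subgroup Q).lowerCentralSeries (c + m) = (⊤ : Subgroup Q).lowerCentralSeries c := by
    intro m
    induction m with
    | zero => rfl
    | succ m ih =>
      have : (⊤ : Subgroup Q).lowerCentralSeries (c + m + 1) = ⁅(⊤ : Subgroup Q).lowerCentralSeries (c + m), (⊤ : Subgroup Q)⁆ :=
        rfl
      rw [show c + (m + 1) = (c + m) + 1 from rfl, this, ih]
      exact hc
  have hDc : (⊤ : Subgroup Q).lowerCentralSeries c ≤ Subgroup.center Q := by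
    intro q hq
    refine hDcent q fun n => ?_
    rcases le_or_gt n c with hnc | hnc
    · exact Subgroup.lowerCentralSeries_antitone _ hnc hq
    · have : (⊤ : Subgroup Q).lowerCentralSeries n = (⊤ : Subgroup Q).lowerCentralSeries c := by
        have := hstab' (n - c)
        rwa [Nat.add_sub_cancel' hnc.le] at this
      rw [this]; exact hq
  have hbot : (⊤ : Subgroup Q).lowerCentralSeries (c + 1) = ⊥ := Subgroup.lowerCentralSeries_succ_eq_bot ⊤ hDc
  have : φ g = 1 := by
    have := hgQ (c + 1)
    rwa [hbot, Subgroup.mem_bot] at this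
  exact hgN ((QuotientGroup.eq_one_iff g).mp this)

/-- In a profinite group, the centralizer of the pronilpotent residual `γ∞(G)` is
contained in the Fitting subgroup `F(G)`. -/
theorem centralizer_residual_le_fitting
    {G : Type*} [Group G] [TopologicalSpace G] [IsTopologicalGroup G]
    [CompactSpace G] [T2Space G] [TotallyDisconnectedSpace G] :
    Subgroup.centralizer ((pronilpotentResidual G : Subgroup G) : Set G) ≤ FittingSubgroup G := by
  set R := pronilpotentResidual G with hR
  have hRn : R.Normal := by
    constructor
    intro x hx g
    rw [hR, pronilpotentResidual, Subgroup.mem_iInf] at hx ⊢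
    intro n
    exact (Subgroup.is_normal_topologicalClosure ((⊤ : Subgroup G).lowerCentralSeries n)).conj_mem x (hx n) g
  set C := Subgroup.centralizer (R : Set G) with hC
  have hCclosed : IsClosed (C : Set G) := by
    have : (C : Set G) = ⋂ s ∈ (R : Set G), {g : G | s * g = g * s} := by
      ext g
      simp only [SetLike.mem_coe, Set.mem_iInter, Set.mem_setOf_eq, hC,
        Subgroup.mem_centralizer_iff]
    rw [this]
    exact isClosed_biInter fun s _ =>
      isClosed_eq (continuous_const.mul continuous_id) (continuous_id.mul continuous_const)
  have hCn : C.Normal := by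
    constructor
    intro x hx g
    rw [hC, Subgroup.mem_centralizer_iff] at hx ⊢
    intro s hs
    have hs' : g⁻¹ * s * g ∈ R := by simpa using hRn.conj_mem s hs g⁻¹
    calc s * (g * x * g⁻¹) = g * (g⁻¹ * s * g * x) * g⁻¹ := by group
      _ = g * (x * (g⁻¹ * s * g)) * g⁻¹ := by rw [hx _ hs']
      _ = g * x * g⁻¹ * s := by group
  haveI : CompactSpace ↥C := isCompact_iff_compactSpace.mp hCclosed.isCompact
  have hle : pronilpotentResidual ↥C ≤ Subgroup.center ↥C := by
    intro x hx
    have hxR : (x : G) ∈ R := by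
      rw [pronilpotentResidual, Subgroup.mem_iInf] at hx
      rw [hR, pronilpotentResidual, Subgroup.mem_iInf]
      intro n
      have h1 : (x : G) ∈ closure ((Subtype.val : ↥C → G) ''
          (((⊤ : Subgroup ↥C).lowerCentralSeries n : Subgroup ↥C) : Set ↥C)) := by
        apply image_closure_subset_closure_image continuous_subtype_val
        exact ⟨x, hx n, rfl⟩
      have h2 : ((Subtype.val : ↥C → G) ''
          (((⊤ : Subgroup ↥C).lowerCentralSeries n : Subgroup ↥C) : Set ↥C)) ⊆
          (((⊤ : Subgroup G).lowerCentralSeries n : Subgroup G) : Set G) := by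
        rintro _ ⟨y, hy, rfl⟩
        exact Subgroup.lowerCentralSeries_map_subtype_le C n ⟨y, hy, rfl⟩
      show (x : G) ∈ closure (((⊤ : Subgroup G).lowerCentralSeries n : Subgroup G) : Set G)
      exact closure_mono h2 h1
    rw [Subgroup.mem_center_iff]
    intro c
    exact Subtype.ext (Subgroup.mem_centralizer_iff.mp c.2 _ hxR).symm
  have hpn : IsPronilpotent ↥C := residualAux_eq_bot_of_le_center hle
  have hmem : C ∈ {H : Subgroup G | IsClosed (H : Set G) ∧ H.Normal ∧ IsPronilpotent ↥H} :=
    ⟨hCclosed, hCn, hpn⟩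
  exact (le_sSup hmem).trans
    (Subgroup.le_topologicalClosure
      (sSup {H : Subgroup G | IsClosed (H : Set G) ∧ H.Normal ∧ IsPronilpotent ↥H}))
end

section
/- Let G be a profinite group which is finite-by-pronilpotent, i.e. G has a finite normal subgroup N such that G/N is pronilpotent. Then G is pronilpotent-by-finite: G has an open (hence closed, finite-index) pronilpotent normal subgroup. -/
/-!  Basic notions for profinite groups.

A profinite group is modelled as a compact Hausdorff totally disconnected
topological group, via the instance assumptions
`[Group G] [TopologicalSpace G] [TopologicalGroup G] [CompactSpace G]
[T2Space G] [TotallyDisconnectedSpace G]`. -/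

open scoped commutatorElement

open Pointwise

section Aux

variable {K : Type*} [Group K] [TopologicalSpace K] [IsTopologicalGroup K]

lemma my_isOpen_mul_subgroup (S : Set K) (U : Subgroup K) (hU : IsOpen (U : Set K)) :
    IsOpen (S * (U : Set K)) := by
  rw [isOpen_iff_forall_mem_open]
  intro x hx
  obtain ⟨s, hs, u, hu, rfl⟩ := hx
  refine ⟨(s * · ) '' (U : Set K), ?_, (Homeomorph.mulLeft s).isOpenMap _ hU, ⟨u, hu, rfl⟩⟩
  rintro y ⟨v, hv, rfl⟩
  exact ⟨s, hs, v, hv, rfl⟩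

lemma my_isClosed_mul_subgroup (S : Set K) (U : Subgroup K) (hU : IsOpen (U : Set K)) :
    IsClosed (S * (U : Set K)) := by
  rw [← isOpen_compl_iff, isOpen_iff_forall_mem_open]
  intro x hx
  refine ⟨(x * · ) '' (U : Set K), ?_, (Homeomorph.mulLeft x).isOpenMap _ hU, ⟨1, U.one_mem, mul_one x⟩⟩
  rintro y ⟨v, hv, rfl⟩ hy
  obtain ⟨s, hs, u, hu, hsu⟩ := hy
  have hsu' : s * u = x * v := hsu
  refine hx ⟨s, hs, u * v⁻¹, U.mul_mem hu (U.inv_mem hv), ?_⟩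
  show s * (u * v⁻¹) = x
  rw [← mul_assoc, hsu', mul_assoc, mul_inv_cancel, mul_one]

lemma my_closure_subset_mul (S : Set K) (U : Subgroup K) (hU : IsOpen (U : Set K)) :
    closure S ⊆ S * (U : Set K) :=
  closure_minimal (fun s hs => ⟨s, hs, 1, U.one_mem, mul_one s⟩)
    (my_isClosed_mul_subgroup S U hU)

omit [TopologicalSpace K] [IsTopologicalGroup K] in
lemma my_lcs_succ (n : ℕ) :
    (⊤ : Subgroup K).lowerCentralSeries (n + 1) = ⁅(⊤ : Subgroup K).lowerCentralSeries n, (⊤ : Subgroup K)⁆ := rfl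

omit [TopologicalSpace K] [IsTopologicalGroup K] in
lemma my_lcs_map_eq {Q : Type*} [Group Q] (f : K →* Q) (hf : Function.Surjective f) :
    ∀ n, ((⊤ : Subgroup K).lowerCentralSeries n).map f = (⊤ : Subgroup Q).lowerCentralSeries n
  | 0 => by simpa using Subgroup.map_top_of_surjective f hf
  | n + 1 => by
      rw [my_lcs_succ, my_lcs_succ, Subgroup.map_commutator, my_lcs_map_eq f hf n,
        Subgroup.map_top_of_surjective f hf]

end Aux

lemma my_mem_residual_iff {K : Type*} [Group K] [TopologicalSpace K] [IsTopologicalGroup K]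
    {x : K} : x ∈ pronilpotentResidual K ↔
      ∀ n, x ∈ closure (((⊤ : Subgroup K).lowerCentralSeries n : Set K)) := by
  rw [pronilpotentResidual, Subgroup.mem_iInf]
  exact forall_congr' fun n => Iff.rfl

lemma my_pronilpotent_of_residual_central {K : Type*} [Group K] [TopologicalSpace K]
    [IsTopologicalGroup K] [CompactSpace K] [T2Space K] [TotallyDisconnectedSpace K]
    (h : pronilpotentResidual K ≤ Subgroup.center K) : IsPronilpotent K := by
  set D := pronilpotentResidual K with hD
  have key : ∀ U : Subgroup K, U.Normal → IsOpen (U : Set K) → D ≤ U := by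
    intro U hUn hUo
    have hQfin : Finite (K ⧸ U) := U.quotient_finite_of_isOpen hUo
    set π := QuotientGroup.mk' U with hπdef
    have hπ : Function.Surjective π := QuotientGroup.mk'_surjective U
    -- compactness: find m with closure (γ m) ⊆ D * U
    obtain ⟨m, hm⟩ : ∃ m, closure (((⊤ : Subgroup K).lowerCentralSeries m : Set K)) ⊆ (D : Set K) * U := by
      by_contra hcon
      push_neg at hcon
      have hne : ∀ n, (closure (((⊤ : Subgroup K).lowerCentralSeries n : Set K)) ∩ ((D : Set K) * U)ᶜ).Nonempty := by
        intro n
        obtain ⟨x, hx1, hx2⟩ := Set.not_subset.1 (hcon n)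
        exact ⟨x, hx1, hx2⟩
      have hanti : Antitone (fun n => closure (((⊤ : Subgroup K).lowerCentralSeries n : Set K)) ∩ ((D : Set K) * U)ᶜ) := by
        intro i j hij
        exact Set.inter_subset_inter_left _ (closure_mono (Subgroup.lowerCentralSeries_antitone _ hij))
      have hdir : Directed (· ⊇ ·) (fun n => closure (((⊤ : Subgroup K).lowerCentralSeries n : Set K)) ∩ ((D : Set K) * U)ᶜ) :=
        fun i j => ⟨max i j, hanti (le_max_left i j), hanti (le_max_right i j)⟩
      have hcl : ∀ n, IsClosed (closure (((⊤ : Subgroup K).lowerCentralSeries n : Set K)) ∩ ((D : Set K) * U)ᶜ) :=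
        fun n => isClosed_closure.inter (isClosed_compl_iff.2 (my_isOpen_mul_subgroup _ U hUo))
      have hcpt : ∀ n, IsCompact (closure (((⊤ : Subgroup K).lowerCentralSeries n : Set K)) ∩ ((D : Set K) * U)ᶜ) :=
        fun n => (hcl n).isCompact
      obtain ⟨x, hx⟩ := IsCompact.nonempty_iInter_of_directed_nonempty_isCompact_isClosed
        _ hdir hne hcpt hcl
      simp only [Set.mem_iInter, Set.mem_inter_iff] at hx
      have hxD : x ∈ D := my_mem_residual_iff.2 fun n => (hx n).1
      exact (hx 0).2 ⟨x, hxD, 1, U.one_mem, mul_one x⟩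
    -- γ_m(Q) ≤ center Q
    have hcent : (⊤ : Subgroup (K ⧸ U)).lowerCentralSeries m ≤ Subgroup.center (K ⧸ U) := by
      rw [← my_lcs_map_eq π hπ m]
      rintro _ ⟨x, hx, rfl⟩
      obtain ⟨d, hd, u, hu, hdu⟩ := hm (subset_closure hx)
      have hdu' : d * u = x := hdu
      rw [Subgroup.mem_center_iff]
      intro q
      obtain ⟨k, rfl⟩ := hπ q
      have hπu : π u = 1 := (QuotientGroup.eq_one_iff u).2 hu
      have hπx : π x = π d := by
        rw [← hdu', map_mul, hπu, mul_one]
      rw [hπx, ← map_mul, ← map_mul]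
      exact congrArg π ((Subgroup.mem_center_iff.1 (h hd)) k)
    have hbot : (⊤ : Subgroup (K ⧸ U)).lowerCentralSeries (m + 1) = ⊥ :=
      Subgroup.lowerCentralSeries_succ_eq_bot _ hcent
    -- conclude D ≤ U
    intro x hx
    have hxc : x ∈ closure (((⊤ : Subgroup K).lowerCentralSeries (m + 1) : Set K)) :=
      my_mem_residual_iff.1 hx (m + 1)
    obtain ⟨g, hg, u, hu, hgu⟩ := my_closure_subset_mul _ U hUo hxc
    have hgu' : g * u = x := hgu
    have hπg : π g ∈ (⊤ : Subgroup (K ⧸ U)).lowerCentralSeries (m + 1) :=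
      (my_lcs_map_eq π hπ (m + 1)) ▸ ⟨g, hg, rfl⟩
    have hπg1 : π g = 1 := by rw [hbot] at hπg; simpa using hπg
    have hπu : π u = 1 := (QuotientGroup.eq_one_iff u).2 hu
    have : π x = 1 := by rw [← hgu', map_mul, hπg1, one_mul, hπu]
    exact (QuotientGroup.eq_one_iff x).1 this
  -- D = ⊥
  rw [IsPronilpotent, ← hD, eq_bot_iff]
  intro x hx
  rw [Subgroup.mem_bot]
  by_contra hx1
  have hopen : IsOpen ({x}ᶜ : Set K) := isOpen_compl_singleton
  have h1mem : (1 : K) ∈ ({x}ᶜ : Set K) := by simp [Ne.symm hx1]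
  obtain ⟨W, hW, h1W, hWsub⟩ :=
    isTopologicalBasis_isClopen.mem_nhds_iff.1 (hopen.mem_nhds h1mem)
  obtain ⟨H, hH⟩ := IsTopologicalGroup.exist_openNormalSubgroup_sub_clopen_nhds_of_one hW h1W
  exact hWsub (hH (key H.toSubgroup H.isNormal' H.isOpen hx)) rfl


/-- A finite-by-pronilpotent profinite group is pronilpotent-by-finite: it has an open
normal pronilpotent subgroup. -/
theorem pronilpotent_by_finite_of_finite_by_pronilpotent
    {G : Type*} [Group G] [TopologicalSpace G] [IsTopologicalGroup G]
    [CompactSpace G] [T2Space G] [TotallyDisconnectedSpace G]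
    (N : Subgroup G) [hN : N.Normal] (hfin : Finite N)
    (hpn : IsPronilpotent (G ⧸ N)) :
    ∃ H : Subgroup G, IsOpen (H : Set G) ∧ H.Normal ∧ IsPronilpotent ↥H := by
  set C := Subgroup.centralizer (N : Set G) with hC
  -- openness of C
  have hCopen : IsOpen (C : Set G) := by
    have hset : (C : Set G) = ⋂ n : N, {g : G | g * (↑n : G) * g⁻¹ = (↑n : G)} := by
      ext g
      simp only [SetLike.mem_coe, Subgroup.mem_centralizer_iff, Set.mem_iInter, Set.mem_setOf_eq]
      constructor
      · intro h n
        rw [(h ↑n n.2).symm, mul_assoc, mul_inv_cancel, mul_one]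
      · intro h m hm
        have := h ⟨m, hm⟩
        simp only at this
        conv_lhs => rw [← this]
        group
    rw [hset]
    refine isOpen_iInter_of_finite fun n => ?_
    have hcont : Continuous fun g : G => (⟨g * (↑n : G) * g⁻¹, hN.conj_mem _ n.2 g⟩ : N) := by
      refine Continuous.subtype_mk ?_ _
      fun_prop
    have : {g : G | g * (↑n : G) * g⁻¹ = (↑n : G)} =
        (fun g : G => (⟨g * (↑n : G) * g⁻¹, hN.conj_mem _ n.2 g⟩ : N)) ⁻¹' {n} := by
      ext g
      simp [Subtype.ext_iff]
    rw [this]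
    exact hcont.isOpen_preimage _ (isOpen_discrete _)
  -- normality of C
  have hCnormal : C.Normal := by
    constructor
    intro c hc g
    rw [hC, Subgroup.mem_centralizer_iff] at hc ⊢
    intro m hm
    have h1 : (g⁻¹ * m * g) * c = c * (g⁻¹ * m * g) := by
      have : g⁻¹ * m * g ∈ N := by simpa using hN.conj_mem m hm g⁻¹
      exact hc _ this
    calc m * (g * c * g⁻¹) = g * ((g⁻¹ * m * g) * c) * g⁻¹ := by group
      _ = g * (c * (g⁻¹ * m * g)) * g⁻¹ := by rw [h1]
      _ = (g * c * g⁻¹) * m := by group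
  -- C is a profinite group
  have hCclosed : IsClosed (C : Set G) := C.isClosed_of_isOpen hCopen
  haveI : CompactSpace C := isCompact_iff_compactSpace.1 hCclosed.isCompact
  -- the residual of C is central
  have hcent : pronilpotentResidual C ≤ Subgroup.center C := by
    intro x hx
    have hxn : ∀ n : ℕ, (↑x : G) ∈ closure (((⊤ : Subgroup G).lowerCentralSeries n : Set G)) := by
      intro n
      have h1 : x ∈ closure (((⊤ : Subgroup C).lowerCentralSeries n : Set C)) := my_mem_residual_iff.1 hx n
      exact map_mem_closure continuous_subtype_val h1
        (fun y hy => Subgroup.lowerCentralSeries_map_subtype_le C n ⟨y, hy, rfl⟩)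
    -- image in G ⧸ N is trivial
    have hxN : (↑x : G) ∈ N := by
      rw [← QuotientGroup.eq_one_iff]
      have h2 : ∀ n : ℕ, ((↑x : G) : G ⧸ N) ∈ closure (((⊤ : Subgroup (G ⧸ N)).lowerCentralSeries n : Set (G ⧸ N))) := by
        intro n
        exact map_mem_closure QuotientGroup.continuous_mk (hxn n)
          (fun y hy => Subgroup.lowerCentralSeries.map (QuotientGroup.mk' N) n ⟨y, hy, rfl⟩)
      have h3 : ((↑x : G) : G ⧸ N) ∈ pronilpotentResidual (G ⧸ N) := my_mem_residual_iff.2 h2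
      rw [hpn] at h3
      simpa using h3
    rw [Subgroup.mem_center_iff]
    intro c
    have := Subgroup.mem_centralizer_iff.1 c.2 ↑x hxN
    exact Subtype.ext this.symm
  exact ⟨C, hCopen, hCnormal, my_pronilpotent_of_residual_central hcent⟩
end

section
/- Let G be a finite group such that G = PA, where P is a normal p-subgroup and A is a nilpotent p'-subgroup (a nilpotent subgroup of order coprime to p). Assume that for every a ∈ A the subgroup [P,a] generated by the commutators [x,a] with x ∈ P is cyclic. Then every element x of G admits an Engel sink generating a cyclic subgroup: there is a subset E ⊆ G with ⟨E⟩ cyclic such that for every g ∈ G there is a positive integer n(g) with the iterated commutator [g, x, x, …, x] (with n occurrences of x) belonging to E for all n ≥ n(g). -/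
/-- The commutator `[a,b] = a⁻¹ b⁻¹ a b`. -/
def pComm {G : Type*} [Group G] (a b : G) : G := a⁻¹ * b⁻¹ * a * b

/-- The iterated ("Engel") commutator `[g, x, x, …, x]` with `n` occurrences of `x`. -/
def engelIter {G : Type*} [Group G] (g x : G) : ℕ → G
  | 0 => g
  | n + 1 => pComm (engelIter g x n) x

lemma pComm_hom {G H : Type*} [Group G] [Group H] (f : G →* H) (a b : G) :
    f (pComm a b) = pComm (f a) (f b) := by
  simp [pComm]

lemma engelIter_hom {G H : Type*} [Group G] [Group H] (f : G →* H) (g x : G) (n : ℕ) :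
    f (engelIter g x n) = engelIter (f g) (f x) n := by
  induction n with
  | zero => rfl
  | succ k ih => rw [engelIter, pComm_hom, ih]; rfl

lemma engelIter_add {G : Type*} [Group G] (g x : G) (c k : ℕ) :
    engelIter g x (c + k) = engelIter (engelIter g x c) x k := by
  induction k with
  | zero => rfl
  | succ k ih => rw [← Nat.add_assoc, engelIter, ih]; rfl

lemma engel_nilpotent {H : Type*} [Group H] (h : Group.IsNilpotent H) :
    ∃ c : ℕ, ∀ g x : H, engelIter g x c = 1 := by
  obtain ⟨n, hn⟩ := nilpotent_iff_lowerCentralSeries.mp h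
  refine ⟨n, fun g x => ?_⟩
  have key : ∀ k, engelIter g x k ∈ Subgroup.lowerCentralSeries (⊤ : Subgroup H) k := by
    intro k
    induction k with
    | zero => exact Subgroup.mem_top _
    | succ k ih =>
        rw [lowerCentralSeries_succ]
        apply Subgroup.subset_closure
        refine ⟨(engelIter g x k)⁻¹, inv_mem ih, x⁻¹, Subgroup.mem_top _, ?_⟩
        show _ = engelIter g x (k+1)
        rw [engelIter]
        simp [pComm, commutatorElement_def]
  have := key n
  rw [hn] at this
  exact this

lemma pgroup_mem_one {G : Type*} [Group G] {p : ℕ} (hp : p.Prime) {P : Subgroup G}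
    (hPp : IsPGroup p ↥P) {y : G} (hy : y ∈ P) (hyo : ¬ p ∣ orderOf y) : y = 1 := by
  obtain ⟨k, hk⟩ := hPp ⟨y, hy⟩
  have hk' : y ^ (p ^ k) = 1 := by
    have := congrArg (Subgroup.subtype P) hk
    simpa using this
  have h1 : orderOf y ∣ p ^ k := orderOf_dvd_of_pow_eq_one hk'
  have h2 : (orderOf y).Coprime (p ^ k) :=
    Nat.Coprime.pow_right k ((hp.coprime_iff_not_dvd.mpr hyo).symm)
  have hdd : orderOf y ∣ 1 := by
    have h3 := Nat.dvd_gcd (dvd_refl (orderOf y)) h1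
    unfold Nat.Coprime at h2
    rwa [h2] at h3
  exact orderOf_eq_one_iff.mp (Nat.dvd_one.mp hdd)

lemma wmem {G : Type*} [Group G] {S : Subgroup G} (hSn : S.Normal) {t b : G}
    (htb : t * b⁻¹ ∈ S) : ∀ i : ℕ, t ^ i * (b ^ i)⁻¹ ∈ S := by
  intro i
  induction i with
  | zero => simpa using one_mem S
  | succ i ih =>
      have h1 : t ^ (i+1) * (b ^ (i+1))⁻¹
          = (t ^ i * (t * b⁻¹) * (t ^ i)⁻¹) * (t ^ i * (b ^ i)⁻¹) := by
        rw [pow_succ, pow_succ]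
        group
      rw [h1]
      exact mul_mem (hSn.conj_mem _ htb _) ih

lemma ord_eq_of_pgroup {G : Type*} [Group G] {p : ℕ} (hp : p.Prime) {P : Subgroup G}
    (hPn : P.Normal) (hPp : IsPGroup p ↥P) {t b : G} (htb : t * b⁻¹ ∈ P)
    (ht : ¬ p ∣ orderOf t) (hb : ¬ p ∣ orderOf b) : orderOf t = orderOf b := by
  have h1 : t ^ orderOf b = 1 := by
    have hmem : t ^ orderOf b ∈ P := by
      have := wmem hPn htb (orderOf b)
      rwa [pow_orderOf_eq_one, inv_one, mul_one] at this
    refine pgroup_mem_one hp hPp hmem (fun hdvd => ht ?_)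
    have : orderOf (t ^ orderOf b) ∣ orderOf t := by
      apply orderOf_dvd_of_pow_eq_one
      rw [← pow_mul, Nat.mul_comm, pow_mul, pow_orderOf_eq_one, one_pow]
    exact dvd_trans hdvd this
  have h2 : b ^ orderOf t = 1 := by
    have hmem : b ^ orderOf t ∈ P := by
      have := wmem hPn (by simpa using inv_mem htb : b * t⁻¹ ∈ P) (orderOf t)
      rwa [pow_orderOf_eq_one, inv_one, mul_one] at this
    refine pgroup_mem_one hp hPp hmem (fun hdvd => hb ?_)
    have : orderOf (b ^ orderOf t) ∣ orderOf b := by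
      apply orderOf_dvd_of_pow_eq_one
      rw [← pow_mul, Nat.mul_comm, pow_mul, pow_orderOf_eq_one, one_pow]
    exact dvd_trans hdvd this
  exact Nat.dvd_antisymm (orderOf_dvd_of_pow_eq_one h1) (orderOf_dvd_of_pow_eq_one h2)

lemma abel_conj {G : Type*} [Group G] [Finite G] {S : Subgroup G} (hSn : S.Normal)
    (hab : ∀ u ∈ S, ∀ v ∈ S, u * v = v * u) {t b : G} (htb : t * b⁻¹ ∈ S)
    (hbo : b ^ orderOf t = 1) (hcop : (orderOf t).Coprime (Nat.card S)) :
    ∃ h : G, h * t * h⁻¹ = b := by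
  set m := orderOf t with hm
  by_cases hcS : Nat.card S ≤ 1
  · -- trivial S
    have hS1 : Nat.card ↥S = 1 := le_antisymm hcS Nat.card_pos
    have hbot : S = ⊥ := Subgroup.card_eq_one.mp hS1
    rw [hbot, Subgroup.mem_bot] at htb
    have : t = b := by
      have := congrArg (· * b) htb
      simpa [mul_assoc] using this
    exact ⟨1, by simp [this]⟩
  · push_neg at hcS
    obtain ⟨r, -, hr⟩ := Nat.exists_mul_mod_eq_one_of_coprime hcop hcS
    -- commutative group structure on S
    letI : CommGroup ↥S :=
      { (inferInstance : Group ↥S) with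
        mul_comm := fun u v => Subtype.ext (hab u u.2 v v.2) }
    let τ : ↥S →* ↥S :=
      { toFun := fun u => ⟨b * ↑u * b⁻¹, hSn.conj_mem _ u.2 b⟩
        map_one' := by ext; simp
        map_mul' := fun u v => by ext; push_cast; group }
    let Wf : ℕ → ↥S := fun i => ⟨t ^ i * (b ^ i)⁻¹, wmem hSn htb i⟩
    have hW0 : Wf 0 = 1 := by ext; simp [Wf]
    have htm : t ^ m = 1 := by rw [hm]; exact pow_orderOf_eq_one t
    have hWm : Wf m = 1 := by
      ext; simp [Wf, hbo, htm]
    have hrec : ∀ i, τ (Wf i) = (Wf 1)⁻¹ * Wf (i + 1) := by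
      intro i
      ext
      show b * (t ^ i * (b ^ i)⁻¹) * b⁻¹ = _
      push_cast [Wf]
      rw [pow_succ, pow_one, pow_succ]
      group
    set z : ↥S := (Finset.range m).prod Wf with hz
    have hτz : τ z = (Wf 1)⁻¹ ^ m * z := by
      rw [hz, map_prod]
      rw [Finset.prod_congr rfl (fun i _ => hrec i), Finset.prod_mul_distrib,
        Finset.prod_const, Finset.card_range]
      congr 1
      have h1 : (Finset.range (m+1)).prod Wf = ((Finset.range m).prod (fun i => Wf (i+1))) * Wf 0 :=
        Finset.prod_range_succ' Wf m
      have h2 : (Finset.range (m+1)).prod Wf = (Finset.range m).prod Wf * Wf m :=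
        Finset.prod_range_succ Wf m
      rw [hW0, mul_one] at h1
      rw [hWm, mul_one] at h2
      rw [← h1, h2]
    have hmr : (Wf 1)⁻¹ ^ (m * r) = (Wf 1)⁻¹ := by
      conv_lhs => rw [← Nat.div_add_mod (m * r) (Nat.card ↥S), hr]
      rw [pow_add, pow_mul, pow_card_eq_one', one_pow, one_mul, pow_one]
    have hτzr : τ (z ^ r) = (Wf 1)⁻¹ * z ^ r := by
      rw [map_pow, hτz, mul_pow, ← pow_mul, hmr]
    refine ⟨(↑((z ^ r)⁻¹) : G), ?_⟩
    have hcoe : (↑(τ (z ^ r)) : G) = b * ↑(z ^ r) * b⁻¹ := rfl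
    have hW1 : (↑(Wf 1) : G) = t * b⁻¹ := by simp [Wf]
    -- from τ(Z) = (W1)⁻¹ Z : b ζ b⁻¹ = b t⁻¹ ζ  ⇒ ζ⁻¹ t ζ = b
    set ζ : G := (↑(z ^ r) : G) with hζ
    have key : b * ζ * b⁻¹ = (t * b⁻¹)⁻¹ * ζ := by
      rw [← hcoe, hτzr, hζ]
      push_cast
      simp [pow_one, hW1]
    have h3 : ζ * b⁻¹ = t⁻¹ * ζ := by
      apply mul_left_cancel (a := b)
      calc b * (ζ * b⁻¹) = b * ζ * b⁻¹ := by group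
        _ = (t * b⁻¹)⁻¹ * ζ := key
        _ = b * (t⁻¹ * ζ) := by group
    have htζ : t * ζ = ζ * b := by
      calc t * ζ = t * (ζ * b⁻¹) * b := by group
        _ = t * (t⁻¹ * ζ) * b := by rw [h3]
        _ = ζ * b := by group
    show (↑((z^r)⁻¹) : G) * t * (↑((z^r)⁻¹) : G)⁻¹ = b
    have hζ2 : (↑((z ^ r)⁻¹) : G) = ζ⁻¹ := by rw [hζ]; push_cast; ring_nf
    rw [hζ2, inv_inv]
    calc ζ⁻¹ * t * ζ = ζ⁻¹ * (t * ζ) := by rw [mul_assoc]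
      _ = ζ⁻¹ * (ζ * b) := by rw [htζ]
      _ = b := by group
section ConjLemma

universe u

lemma conj_into_zpowers : ∀ (N : ℕ) (G : Type u) [Group G] [Finite G] (p : ℕ), p.Prime →
    ∀ (P : Subgroup G), P.Normal → IsPGroup p ↥P → Nat.card ↥P ≤ N →
    ∀ (t b : G), t * b⁻¹ ∈ P → ¬ p ∣ orderOf t → ¬ p ∣ orderOf b →
    ∃ h : G, h * t * h⁻¹ ∈ Subgroup.zpowers b := by
  intro N
  induction N with
  | zero =>
      intro G _ _ p hp P hPn hPp hcard t b htb ht hb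
      exact absurd (Nat.lt_of_lt_of_le Nat.card_pos hcard) (by simp)
  | succ N IH =>
      intro G _ _ p hp P hPn hPp hcard t b htb ht hb
      haveI : Fact p.Prime := ⟨hp⟩
      by_cases hPtriv : ∀ y ∈ P, y = (1:G)
      · have h1 : t * b⁻¹ = 1 := hPtriv _ htb
        have ht' : t = b := by
          have := congrArg (· * b) h1
          simpa [mul_assoc] using this
        exact ⟨1, by simp [ht', Subgroup.mem_zpowers]⟩
      · push_neg at hPtriv
        obtain ⟨y0, hy0P, hy0⟩ := hPtriv
        haveI : Nontrivial ↥P := ⟨⟨⟨y0, hy0P⟩, 1, by simp [Subtype.ext_iff, hy0]⟩⟩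
        haveI := IsPGroup.center_nontrivial hPp
        set Z : Subgroup G := (Subgroup.center ↥P).map P.subtype with hZdef
        have hZle : Z ≤ P := Subgroup.map_subtype_le _
        have hZnormal : Z.Normal := by
          constructor
          rintro - ⟨⟨z, hzP⟩, hzc, rfl⟩ g
          refine ⟨⟨g * z * g⁻¹, hPn.conj_mem _ hzP g⟩, ?_, rfl⟩
          rw [SetLike.mem_coe, Subgroup.mem_center_iff]
          rintro ⟨y, hyP⟩
          have hy' : g⁻¹ * y * g ∈ P := by
            have := hPn.conj_mem _ hyP g⁻¹; simpa using this
          have hc := Subgroup.mem_center_iff.mp (SetLike.mem_coe.mp hzc) ⟨g⁻¹ * y * g, hy'⟩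
          have hc' : (g⁻¹ * y * g) * z = z * (g⁻¹ * y * g) := congrArg (P.subtype) hc
          apply Subtype.ext
          show y * (g * z * g⁻¹) = (g * z * g⁻¹) * y
          have := congrArg (fun w => g * w * g⁻¹) hc'
          simp only [mul_assoc, inv_mul_cancel_left, mul_inv_cancel_left] at this ⊢
          simpa [← mul_assoc] using this
        have hZab : ∀ u ∈ Z, ∀ v ∈ Z, u * v = v * u := by
          rintro - ⟨⟨u, huP⟩, huc, rfl⟩ - ⟨⟨v, hvP⟩, hvc, rfl⟩
          have := Subgroup.mem_center_iff.mp (SetLike.mem_coe.mp hvc) ⟨u, huP⟩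
          simpa using congrArg (P.subtype) this
        have hZp : IsPGroup p ↥Z := by
          intro z
          obtain ⟨k, hk⟩ := hPp ⟨(z : G), hZle z.2⟩
          refine ⟨k, ?_⟩
          have h1 : ((z : G)) ^ (p ^ k) = 1 := by simpa using congrArg (P.subtype) hk
          exact Subtype.ext (by simpa using h1)
        have hZnontriv : ∃ z ∈ Z, z ≠ (1:G) := by
          obtain ⟨c, hc1⟩ := exists_ne (1 : ↥(Subgroup.center ↥P))
          refine ⟨((c : ↥P) : G), ⟨(c : ↥P), c.2, rfl⟩, ?_⟩
          intro h1
          apply hc1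
          apply Subtype.ext; apply Subtype.ext
          simpa using h1
        haveI := hZnormal
        haveI : Finite (G ⧸ Z) := Quotient.finite _
        set π := QuotientGroup.mk' Z with hπ
        set Pq : Subgroup (G ⧸ Z) := P.map π with hPq
        have hPqn : Pq.Normal := hPn.map π (QuotientGroup.mk'_surjective Z)
        have hPqp : IsPGroup p ↥Pq := hPp.map π
        have hcardlt : Nat.card ↥Pq < Nat.card ↥P := by
          set φ := π.subgroupMap P with hφ
          have hφs : Function.Surjective φ := π.subgroupMap_surjective P
          have hcardeq : Nat.card ↥P = Nat.card (↥P ⧸ φ.ker) * Nat.card ↥(φ.ker) :=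
            Subgroup.card_eq_card_quotient_mul_card_subgroup φ.ker
          have hqe : Nat.card (↥P ⧸ φ.ker) = Nat.card ↥Pq :=
            Nat.card_congr (QuotientGroup.quotientKerEquivOfSurjective φ hφs).toEquiv
          obtain ⟨z, hzZ, hz1⟩ := hZnontriv
          have hzP : z ∈ P := hZle hzZ
          have hker : (⟨z, hzP⟩ : ↥P) ∈ φ.ker := by
            rw [MonoidHom.mem_ker]
            apply Subtype.ext
            show π z = 1
            exact (QuotientGroup.eq_one_iff z).mpr hzZ
          have hkne1 : Nat.card ↥(φ.ker) ≠ 1 := by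
            intro h1
            have hbb := Subgroup.card_eq_one.mp h1
            rw [hbb, Subgroup.mem_bot] at hker
            exact hz1 (by simpa [Subtype.ext_iff] using hker)
          have hkpos : 0 < Nat.card ↥(φ.ker) := Nat.card_pos
          have hkcard : 2 ≤ Nat.card ↥(φ.ker) := by omega
          have hq1 : 1 ≤ Nat.card ↥Pq := Nat.card_pos
          calc Nat.card ↥Pq < Nat.card ↥Pq * 2 := by omega
            _ ≤ Nat.card (↥P ⧸ φ.ker) * Nat.card ↥(φ.ker) := by
                rw [hqe]; exact Nat.mul_le_mul_left _ hkcard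
            _ = Nat.card ↥P := hcardeq.symm
        have htbq : (π t) * (π b)⁻¹ ∈ Pq := by
          rw [← map_inv, ← map_mul]
          exact ⟨t * b⁻¹, htb, rfl⟩
        have htq : ¬ p ∣ orderOf (π t) := fun hd => ht (hd.trans (orderOf_map_dvd π t))
        have hbq : ¬ p ∣ orderOf (π b) := fun hd => hb (hd.trans (orderOf_map_dvd π b))
        obtain ⟨hq, hhq⟩ := IH (G ⧸ Z) p hp Pq hPqn hPqp (Nat.lt_succ_iff.mp
          (Nat.lt_of_lt_of_le hcardlt hcard)) (π t) (π b) htbq htq hbq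
        obtain ⟨h, rfl⟩ := QuotientGroup.mk'_surjective Z hq
        obtain ⟨j, hj⟩ := Subgroup.mem_zpowers_iff.mp hhq
        set t' := h * t * h⁻¹ with ht'def
        set b' := b ^ j with hb'def
        have hmkeq : π t' = π b' := by
          rw [ht'def, hb'def, map_mul, map_mul, map_inv, map_zpow]
          exact hj.symm
        have h5 : t'⁻¹ * b' ∈ Z := QuotientGroup.eq.mp hmkeq
        have htb' : t' * b'⁻¹ ∈ Z := by
          have h6 := hZnormal.conj_mem _ h5 t'
          have h7 : t' * (t'⁻¹ * b') * t'⁻¹ = b' * t'⁻¹ := by group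
          rw [h7] at h6
          have h8 := inv_mem h6
          simpa using h8
        have hordt' : orderOf t' = orderOf t := by
          rw [ht'def]
          have := orderOf_injective (MulAut.conj h).toMonoidHom (MulEquiv.injective _) t
          simpa using this
        have ht'nd : ¬ p ∣ orderOf t' := by rw [hordt']; exact ht
        have hb'dvd : orderOf b' ∣ orderOf b := by
          apply orderOf_dvd_of_pow_eq_one
          rw [hb'def, ← zpow_natCast (b ^ j) (orderOf b), ← zpow_mul, mul_comm, zpow_mul,
            zpow_natCast, pow_orderOf_eq_one, one_zpow]
        have hb'nd : ¬ p ∣ orderOf b' := fun hd => hb (hd.trans hb'dvd)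
        have horder : orderOf t' = orderOf b' :=
          ord_eq_of_pgroup hp hZnormal hZp htb' ht'nd hb'nd
        have hbo : b' ^ (orderOf t') = 1 := by rw [horder]; exact pow_orderOf_eq_one b'
        have hcop : (orderOf t').Coprime (Nat.card ↥Z) := by
          obtain ⟨k, hk⟩ := (IsPGroup.iff_card).mp hZp
          rw [hk]
          exact Nat.Coprime.pow_right _ ((hp.coprime_iff_not_dvd.mpr ht'nd).symm)
        obtain ⟨h₂, hh₂⟩ := abel_conj hZnormal hZab htb' hbo hcop
        refine ⟨h₂ * h, ?_⟩
        have hfin : (h₂ * h) * t * (h₂ * h)⁻¹ = b ^ j := by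
          have h9 : (h₂ * h) * t * (h₂ * h)⁻¹ = h₂ * t' * h₂⁻¹ := by
            rw [ht'def]; group
          rw [h9, hh₂, hb'def]
        rw [hfin]
        exact Subgroup.mem_zpowers_iff.mpr ⟨j, rfl⟩
end ConjLemma
lemma pComm_conj {G : Type*} [Group G] (g a b : G) :
    g * pComm a b * g⁻¹ = pComm (g * a * g⁻¹) (g * b * g⁻¹) := by
  unfold pComm; group

lemma pComm_reduce {G : Type*} [Group G] (a b c : G) (h1 : c * a = a * c) (h2 : c * b = b * c) :
    pComm a (b * c) = pComm a b := by
  have hX : c * (b⁻¹ * (a * b)) = (b⁻¹ * (a * b)) * c := by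
    have hc1 : Commute c a := h1
    have hc2 : Commute c b := h2
    exact (hc2.inv_right.mul_right (hc1.mul_right hc2)).eq
  calc pComm a (b * c) = a⁻¹ * (c⁻¹ * ((b⁻¹ * (a * b)) * c)) := by unfold pComm; group
    _ = a⁻¹ * (c⁻¹ * (c * (b⁻¹ * (a * b)))) := by rw [← hX]
    _ = pComm a b := by unfold pComm; group

lemma pComm_one_commute {G : Type*} [Group G] {a b : G} (h : pComm a b = 1) :
    b * a = a * b := by
  have h5 : a⁻¹ * b⁻¹ * a * b = 1 := h
  calc b * a = b * a * (a⁻¹ * b⁻¹ * a * b) := by rw [h5, mul_one]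
    _ = a * b := by group

lemma mem_swap {G : Type*} [Group G] {P : Subgroup G} (hPn : P.Normal) {t b : G}
    (h : t⁻¹ * b ∈ P) : t * b⁻¹ ∈ P := by
  have h1 := inv_mem h
  have h2 := hPn.conj_mem _ h1 b
  have h3 : b * (t⁻¹ * b)⁻¹ * b⁻¹ = t * b⁻¹ := by group
  rwa [h3] at h2
/-- Let `G` be a finite group with `G = PA`, where `P` is a normal `p`-subgroup and `A` is
a nilpotent `p'`-subgroup. If `[P,a]` is cyclic for every `a ∈ A`, then every element of
`G` admits an Engel sink generating a cyclic subgroup. -/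
theorem exists_cyclic_engel_sink
    {G : Type*} [Group G] [Finite G] {p : ℕ} (hp : p.Prime)
    (P A : Subgroup G) (hPnormal : P.Normal) (hPp : IsPGroup p ↥P)
    (hAnil : Group.IsNilpotent ↥A) (hAp' : ¬ p ∣ Nat.card A)
    (hprod : ∀ g : G, ∃ u ∈ P, ∃ a ∈ A, g = u * a)
    (hcyc : ∀ a ∈ A, IsCyclic ↥(Subgroup.closure {z : G | ∃ u ∈ P, z = pComm u a})) :
    ∀ x : G, ∃ E : Set G, IsCyclic ↥(Subgroup.closure E) ∧
      ∀ g : G, ∃ N : ℕ, 0 < N ∧ ∀ n ≥ N, engelIter g x n ∈ E := by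
  intro x
  classical
  haveI : Fact p.Prime := ⟨hp⟩
  obtain ⟨u, huP, a, haA, hxua⟩ := hprod x
  -- order decomposition
  set n := orderOf x with hn
  have hn0 : n ≠ 0 := (orderOf_pos x).ne'
  set q := p ^ n.factorization p with hqdef
  set m := n / q with hmdef
  have hqm : q * m = n := Nat.ordProj_mul_ordCompl_eq_self n p
  have hpm : ¬ p ∣ m := Nat.not_dvd_ordCompl hp hn0
  have hqmcop : Nat.Coprime q m := Nat.Coprime.pow_left _ (Nat.coprime_ordCompl hp hn0)
  have hm0 : m ≠ 0 := by intro h; rw [h, Nat.mul_zero] at hqm; exact hn0 hqm.symm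
  obtain ⟨c₀, hc₀mod, hc₀le⟩ : ∃ c₀, q * c₀ ≡ 1 [MOD m] ∧ q * c₀ ≤ n := by
    rcases Nat.lt_or_ge 1 m with h1 | h1
    · obtain ⟨c, -, hc⟩ := Nat.exists_mul_mod_eq_one_of_coprime hqmcop h1
      refine ⟨c % m, ?_, ?_⟩
      · have h2 : q * (c % m) ≡ q * c [MOD m] := Nat.ModEq.mul_left q (Nat.mod_modEq c m)
        have h3 : q * c ≡ 1 [MOD m] := by
          show q * c % m = 1 % m
          rw [hc, Nat.mod_eq_of_lt h1]
        exact h2.trans h3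
      · have h2 : c % m ≤ m := le_of_lt (Nat.mod_lt c (by omega))
        calc q * (c % m) ≤ q * m := Nat.mul_le_mul_left q h2
          _ = n := hqm
    · have hm1 : m = 1 := le_antisymm h1 (Nat.one_le_iff_ne_zero.mpr hm0)
      refine ⟨0, ?_, by simpa using Nat.zero_le n⟩
      simp only [hm1]
      exact Nat.modEq_one
  set t := x ^ (q * c₀) with htdef
  set s := x ^ (n + 1 - q * c₀) with hsdef
  have hxn : x ^ n = 1 := pow_orderOf_eq_one x
  have hst : s * t = x := by
    rw [hsdef, htdef, ← pow_add]
    have h1 : n + 1 - q * c₀ + q * c₀ = n + 1 := by omega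
    rw [h1, pow_succ, hxn, one_mul]
  have hts : t * s = x := by
    rw [hsdef, htdef, ← pow_add]
    have h1 : q * c₀ + (n + 1 - q * c₀) = n + 1 := by omega
    rw [h1, pow_succ, hxn, one_mul]
  have hcomm_st : s * t = t * s := by rw [hst, hts]
  have htm : t ^ m = 1 := by
    rw [htdef, ← pow_mul]
    have h1 : q * c₀ * m = n * c₀ := by rw [← hqm]; ring
    rw [h1, pow_mul, hxn, one_pow]
  have hm_dvd : m ∣ (n + 1 - q * c₀) := by
    have h1 : (m:ℤ) ∣ (1:ℤ) - ((q * c₀ : ℕ) : ℤ) := by exact_mod_cast hc₀mod.dvd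
    have h2 : (m:ℤ) ∣ (n:ℤ) := ⟨q, by exact_mod_cast (by rw [← hqm]; ring : n = m * q)⟩
    have h3 : (m:ℤ) ∣ ((n:ℤ) + 1 - (q * c₀ : ℕ)) := by
      have := dvd_add h2 h1
      rwa [← add_sub_assoc] at this
    have h4 : ((n + 1 - q * c₀ : ℕ) : ℤ) = (n:ℤ) + 1 - (q * c₀ : ℕ) := by
      have : q * c₀ ≤ n + 1 := by omega
      push_cast [Nat.cast_sub this]
      ring
    rw [← h4] at h3
    exact_mod_cast h3
  have hsq : s ^ q = 1 := by
    obtain ⟨e, he⟩ := hm_dvd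
    rw [hsdef, ← pow_mul, he]
    have h1 : m * e * q = n * e := by rw [← hqm]; ring
    rw [h1, pow_mul, hxn, one_pow]
  have htord : ¬ p ∣ orderOf t := fun hd => hpm (hd.trans (orderOf_dvd_of_pow_eq_one htm))
  -- nilpotency of G/P and eventual membership in P
  haveI : Finite (G ⧸ P) := Quotient.finite _
  have hGPnil : Group.IsNilpotent (G ⧸ P) := by
    have hφs : Function.Surjective ((QuotientGroup.mk' P).comp A.subtype) := by
      intro gq
      obtain ⟨g, rfl⟩ := QuotientGroup.mk'_surjective P gq
      obtain ⟨u', hu', a', ha', rfl⟩ := hprod g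
      refine ⟨⟨a', ha'⟩, ?_⟩
      show QuotientGroup.mk' P a' = QuotientGroup.mk' P (u' * a')
      have h9 : (QuotientGroup.mk' P) u' = 1 := (QuotientGroup.eq_one_iff u').mpr hu'
      rw [map_mul, h9, one_mul]
    exact nilpotent_of_surjective _ hφs
  obtain ⟨c, hc⟩ := engel_nilpotent hGPnil
  have hengelP : ∀ g : G, engelIter g x c ∈ P := by
    intro g
    have h1 := engelIter_hom (QuotientGroup.mk' P) g x c
    rw [hc] at h1
    exact (QuotientGroup.eq_one_iff _).mp h1
  -- the descending chain
  let Qc : ℕ → Subgroup G := fun k =>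
    Nat.rec P (fun _ Qk => Subgroup.closure {z | ∃ w ∈ Qk, z = pComm w x}) k
  have hQ0 : Qc 0 = P := rfl
  have hQsucc : ∀ k, Qc (k+1) = Subgroup.closure {z | ∃ w ∈ Qc k, z = pComm w x} :=
    fun k => rfl
  have hQinv : ∀ k, ∀ w ∈ Qc k, x * w * x⁻¹ ∈ Qc k ∧ x⁻¹ * w * x ∈ Qc k := by
    intro k
    induction k with
    | zero =>
        intro w hw
        refine ⟨hPnormal.conj_mem w hw x, ?_⟩
        have := hPnormal.conj_mem w hw x⁻¹
        exact (by simpa using this : x⁻¹ * w * x ∈ P)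
    | succ k ih =>
        intro w hw
        rw [hQsucc] at hw
        rw [hQsucc]
        induction hw using Subgroup.closure_induction with
        | mem z hz =>
            obtain ⟨w', hw', rfl⟩ := hz
            constructor
            · have e1 : x * pComm w' x * x⁻¹ = pComm (x * w' * x⁻¹) x := by
                unfold pComm; group
              rw [e1]
              exact Subgroup.subset_closure ⟨_, (ih w' hw').1, rfl⟩
            · have e2 : x⁻¹ * pComm w' x * x = pComm (x⁻¹ * w' * x) x := by
                unfold pComm; group
              rw [e2]
              exact Subgroup.subset_closure ⟨_, (ih w' hw').2, rfl⟩
        | one =>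
            constructor
            · have e0 : x * (1:G) * x⁻¹ = 1 := by group
              rw [e0]; exact one_mem _
            · have e0 : x⁻¹ * (1:G) * x = 1 := by group
              rw [e0]; exact one_mem _
        | mul y z hy hz py pz =>
            constructor
            · have e1 : x * (y * z) * x⁻¹ = (x * y * x⁻¹) * (x * z * x⁻¹) := by group
              rw [e1]; exact mul_mem py.1 pz.1
            · have e2 : x⁻¹ * (y * z) * x = (x⁻¹ * y * x) * (x⁻¹ * z * x) := by group
              rw [e2]; exact mul_mem py.2 pz.2
        | inv y hy py =>
            constructor
            · have e1 : x * y⁻¹ * x⁻¹ = (x * y * x⁻¹)⁻¹ := by group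
              rw [e1]; exact inv_mem py.1
            · have e2 : x⁻¹ * y⁻¹ * x = (x⁻¹ * y * x)⁻¹ := by group
              rw [e2]; exact inv_mem py.2
  have hQdesc : ∀ k, Qc (k+1) ≤ Qc k := by
    intro k
    rw [hQsucc]
    rw [Subgroup.closure_le]
    rintro z ⟨w, hw, rfl⟩
    have e1 : pComm w x = w⁻¹ * (x⁻¹ * w * x) := by unfold pComm; group
    rw [SetLike.mem_coe, e1]
    exact mul_mem (inv_mem hw) (hQinv k w hw).2
  have hQmono : ∀ j k, j ≤ k → Qc k ≤ Qc j := by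
    intro j k hjk
    induction k with
    | zero => rw [Nat.le_zero.mp hjk]
    | succ k ih =>
        rcases Nat.lt_or_ge j (k+1) with h | h
        · exact le_trans (hQdesc k) (ih (by omega))
        · have : j = k + 1 := by omega
          rw [this]
  obtain ⟨k₀, hk₀⟩ : ∃ k, Qc (k+1) = Qc k := by
    by_contra hne
    push_neg at hne
    have hlt : ∀ k, Nat.card (Qc (k+1)) < Nat.card (Qc k) := by
      intro k
      have hle := hQdesc k
      rcases lt_or_eq_of_le (Subgroup.card_le_of_le hle) with h | h
      · exact h
      · exfalso
        apply hne k
        apply le_antisymm hle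
        intro z hz
        have hsets : ((Qc (k+1)) : Set G) = ((Qc k) : Set G) := by
          apply Set.eq_of_subset_of_ncard_le (SetLike.coe_subset_coe.mpr hle)
          rw [← Nat.card_coe_set_eq, ← Nat.card_coe_set_eq]
          exact le_of_eq (by exact_mod_cast h.symm)
        rw [← SetLike.mem_coe, ← hsets] at hz
        exact hz
    have hb : ∀ k, Nat.card (Qc k) + k ≤ Nat.card (Qc 0) := by
      intro k
      induction k with
      | zero => simp
      | succ k ih => have := hlt k; omega
    have h1 := hb (Nat.card (Qc 0) + 1)
    have h2 : 0 < Nat.card (Qc (Nat.card (Qc 0) + 1)) := Nat.card_pos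
    omega
  set Q := Qc k₀ with hQdef
  have hQfix : Subgroup.closure {z | ∃ w ∈ Q, z = pComm w x} = Q := by
    rw [← hQsucc k₀]; exact hk₀
  have hstab : ∀ k, k₀ ≤ k → Qc k = Q := by
    intro k hk
    induction k with
    | zero =>
        have h0 : k₀ = 0 := Nat.le_zero.mp hk
        rw [hQdef, h0]
    | succ k ih =>
        rcases Nat.lt_or_ge k₀ (k+1) with h | h
        · have hQk : Qc k = Q := ih (by omega)
          rw [hQsucc, hQk, hQfix]
        · have : k₀ = k + 1 := by omega
          rw [← this]
  have hiter : ∀ w ∈ P, ∀ k, engelIter w x k ∈ Qc k := by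
    intro w hw k
    induction k with
    | zero => exact hw
    | succ k ih =>
        rw [hQsucc]
        exact Subgroup.subset_closure ⟨_, ih, rfl⟩
  have hQleP : Q ≤ P := hQmono 0 k₀ (Nat.zero_le _)
  have hQpow : ∀ (i : ℕ) (w : G), w ∈ Q → x ^ i * w * (x ^ i)⁻¹ ∈ Q ∧ (x ^ i)⁻¹ * w * x ^ i ∈ Q := by
    intro i
    induction i with
    | zero =>
        intro w hw
        constructor
        · have e0 : x ^ 0 * w * (x ^ 0)⁻¹ = w := by group
          rw [e0]; exact hw
        · have e0 : (x ^ 0)⁻¹ * w * x ^ 0 = w := by group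
          rw [e0]; exact hw
    | succ i ih =>
        intro w hw
        constructor
        · have e1 : x ^ (i+1) * w * (x ^ (i+1))⁻¹ = x ^ i * (x * w * x⁻¹) * (x ^ i)⁻¹ := by
            rw [pow_succ]; group
          rw [e1]
          exact (ih _ (hQinv k₀ w hw).1).1
        · have e2 : (x ^ (i+1))⁻¹ * w * x ^ (i+1) = x⁻¹ * ((x ^ i)⁻¹ * w * x ^ i) * x := by
            rw [pow_succ]; group
          rw [e2]
          exact (hQinv k₀ _ (ih w hw).2).2
  -- the subgroup H₂ and K
  set H₂ : Subgroup G := Subgroup.closure (↑P ∪ {x}) with hH₂def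
  have hPH₂ : P ≤ H₂ := fun y hy => Subgroup.subset_closure (Or.inl hy)
  have hxH₂ : x ∈ H₂ := Subgroup.subset_closure (Or.inr rfl)
  have htH₂ : t ∈ H₂ := by rw [htdef]; exact pow_mem hxH₂ _
  have hsH₂ : s ∈ H₂ := by rw [hsdef]; exact pow_mem hxH₂ _
  set K : Subgroup G := Subgroup.closure {z | ∃ w ∈ P, z = pComm w t} with hKdef
  have hKP : K ≤ P := by
    rw [hKdef, Subgroup.closure_le]
    rintro z ⟨w, hw, rfl⟩
    have e1 : pComm w t = w⁻¹ * (t⁻¹ * w * (t⁻¹)⁻¹) := by unfold pComm; group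
    rw [SetLike.mem_coe, e1]
    exact mul_mem (inv_mem hw) (hPnormal.conj_mem w hw t⁻¹)
  have hKH₂ : K ≤ H₂ := le_trans hKP hPH₂
  -- K is normalized by H₂
  have hPconjK : ∀ w' : G, w' ∈ P → ∀ z ∈ K, w' * z * w'⁻¹ ∈ K := by
    intro w' hw' z hz
    induction hz using Subgroup.closure_induction with
    | mem z hz =>
        obtain ⟨v, hv, rfl⟩ := hz
        have e1 : w' * pComm v t * w'⁻¹ = pComm (v * w'⁻¹) t * (pComm w'⁻¹ t)⁻¹ := by
          unfold pComm; group
        rw [e1]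
        exact mul_mem (Subgroup.subset_closure ⟨_, mul_mem hv (inv_mem hw'), rfl⟩)
          (inv_mem (Subgroup.subset_closure ⟨_, inv_mem hw', rfl⟩))
    | one =>
        have e0 : w' * (1:G) * w'⁻¹ = 1 := by group
        rw [e0]; exact one_mem _
    | mul y z hy hz py pz =>
        have e1 : w' * (y * z) * w'⁻¹ = (w' * y * w'⁻¹) * (w' * z * w'⁻¹) := by group
        rw [e1]; exact mul_mem py pz
    | inv y hy py =>
        have e1 : w' * y⁻¹ * w'⁻¹ = (w' * y * w'⁻¹)⁻¹ := by group
        rw [e1]; exact inv_mem py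
  have hmemnorm : ∀ g : G, (∀ z ∈ K, g * z * g⁻¹ ∈ K) → (∀ z ∈ K, g⁻¹ * z * g ∈ K) →
      g ∈ Subgroup.normalizer (K : Set G) := by
    intro g h1 h2
    rw [Subgroup.mem_normalizer_iff]
    intro z
    constructor
    · intro hz; exact h1 z hz
    · intro hz
      have := h2 _ hz
      have e1 : g⁻¹ * (g * z * g⁻¹) * g = z := by group
      rwa [e1] at this
  have htconjK : ∀ z ∈ K, t * z * t⁻¹ ∈ K := by
    intro z hz
    induction hz using Subgroup.closure_induction with
    | mem z hz =>
        obtain ⟨v, hv, rfl⟩ := hz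
        rw [pComm_conj]
        have e1 : t * t * t⁻¹ = t := by group
        rw [e1]
        exact Subgroup.subset_closure ⟨_, hPnormal.conj_mem v hv t, rfl⟩
    | one =>
        have e0 : t * (1:G) * t⁻¹ = 1 := by group
        rw [e0]; exact one_mem _
    | mul y z hy hz py pz =>
        have e1 : t * (y * z) * t⁻¹ = (t * y * t⁻¹) * (t * z * t⁻¹) := by group
        rw [e1]; exact mul_mem py pz
    | inv y hy py =>
        have e1 : t * y⁻¹ * t⁻¹ = (t * y * t⁻¹)⁻¹ := by group
        rw [e1]; exact inv_mem py
  have htconjK' : ∀ z ∈ K, t⁻¹ * z * t ∈ K := by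
    intro z hz
    induction hz using Subgroup.closure_induction with
    | mem z hz =>
        obtain ⟨v, hv, rfl⟩ := hz
        have e1 : t⁻¹ * pComm v t * t = pComm (t⁻¹ * v * t) t := by unfold pComm; group
        rw [e1]
        have hv' : t⁻¹ * v * t ∈ P := by
          have := hPnormal.conj_mem v hv t⁻¹; simpa using this
        exact Subgroup.subset_closure ⟨_, hv', rfl⟩
    | one =>
        have e0 : t⁻¹ * (1:G) * t = 1 := by group
        rw [e0]; exact one_mem _
    | mul y z hy hz py pz =>
        have e1 : t⁻¹ * (y * z) * t = (t⁻¹ * y * t) * (t⁻¹ * z * t) := by group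
        rw [e1]; exact mul_mem py pz
    | inv y hy py =>
        have e1 : t⁻¹ * y⁻¹ * t = (t⁻¹ * y * t)⁻¹ := by group
        rw [e1]; exact inv_mem py
  have hsts : s * t * s⁻¹ = t := by rw [hcomm_st]; group
  have hsts' : s⁻¹ * t * s = t := by
    have := congrArg (fun z => s⁻¹ * z * s) hsts
    simpa [mul_assoc] using this.symm
  have hsconjK : ∀ z ∈ K, s * z * s⁻¹ ∈ K := by
    intro z hz
    induction hz using Subgroup.closure_induction with
    | mem z hz =>
        obtain ⟨v, hv, rfl⟩ := hz
        rw [pComm_conj, hsts]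
        exact Subgroup.subset_closure ⟨_, hPnormal.conj_mem v hv s, rfl⟩
    | one =>
        have e0 : s * (1:G) * s⁻¹ = 1 := by group
        rw [e0]; exact one_mem _
    | mul y z hy hz py pz =>
        have e1 : s * (y * z) * s⁻¹ = (s * y * s⁻¹) * (s * z * s⁻¹) := by group
        rw [e1]; exact mul_mem py pz
    | inv y hy py =>
        have e1 : s * y⁻¹ * s⁻¹ = (s * y * s⁻¹)⁻¹ := by group
        rw [e1]; exact inv_mem py
  have hsconjK' : ∀ z ∈ K, s⁻¹ * z * s ∈ K := by
    intro z hz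
    induction hz using Subgroup.closure_induction with
    | mem z hz =>
        obtain ⟨v, hv, rfl⟩ := hz
        have e1 : s⁻¹ * pComm v t * s = pComm (s⁻¹ * v * s) (s⁻¹ * t * s) := by
          unfold pComm; group
        rw [e1, hsts']
        have hv' : s⁻¹ * v * s ∈ P := by
          have := hPnormal.conj_mem v hv s⁻¹; simpa using this
        exact Subgroup.subset_closure ⟨_, hv', rfl⟩
    | one =>
        have e0 : s⁻¹ * (1:G) * s = 1 := by group
        rw [e0]; exact one_mem _
    | mul y z hy hz py pz =>
        have e1 : s⁻¹ * (y * z) * s = (s⁻¹ * y * s) * (s⁻¹ * z * s) := by group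
        rw [e1]; exact mul_mem py pz
    | inv y hy py =>
        have e1 : s⁻¹ * y⁻¹ * s = (s⁻¹ * y * s)⁻¹ := by group
        rw [e1]; exact inv_mem py
  have hH₂norm : H₂ ≤ Subgroup.normalizer (K : Set G) := by
    rw [hH₂def, Subgroup.closure_le]
    rintro g (hg | hg)
    · refine SetLike.mem_coe.mpr (hmemnorm g (hPconjK g hg) ?_)
      intro z hz
      have := hPconjK g⁻¹ (inv_mem hg) z hz
      simpa using this
    · rw [Set.mem_singleton_iff] at hg
      subst hg
      have hsn : s ∈ Subgroup.normalizer (K : Set G) := hmemnorm s hsconjK hsconjK'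
      have htn : t ∈ Subgroup.normalizer (K : Set G) := hmemnorm t htconjK htconjK'
      rw [← hst]
      exact SetLike.mem_coe.mpr (mul_mem hsn htn)
  haveI hK'n : (K.subgroupOf H₂).Normal := by
    constructor
    rintro ⟨k, hkH⟩ hk ⟨g, hgH⟩
    rw [Subgroup.mem_subgroupOf] at hk ⊢
    have := Subgroup.mem_normalizer_iff.mp (hH₂norm hgH) k
    exact this.mp hk
  -- quotient of H₂ by K
  set ψ := QuotientGroup.mk' (K.subgroupOf H₂) with hψdef
  haveI : Finite (↥H₂ ⧸ K.subgroupOf H₂) := Quotient.finite _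
  have hψcomm : ∀ (w : G) (hw : w ∈ P) (hwH : w ∈ H₂),
      ψ ⟨t, htH₂⟩ * ψ ⟨w, hwH⟩ = ψ ⟨w, hwH⟩ * ψ ⟨t, htH₂⟩ := by
    intro w hw hwH
    have h1 : pComm w t ∈ K := Subgroup.subset_closure ⟨w, hw, rfl⟩
    have h2 : (⟨pComm w t, hPH₂ (hKP h1)⟩ : ↥H₂) ∈ K.subgroupOf H₂ :=
      Subgroup.mem_subgroupOf.mpr h1
    have h3 : ψ ⟨pComm w t, hPH₂ (hKP h1)⟩ = 1 := (QuotientGroup.eq_one_iff _).mpr h2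
    have h4 : (⟨pComm w t, hPH₂ (hKP h1)⟩ : ↥H₂) = pComm ⟨w, hwH⟩ ⟨t, htH₂⟩ := by
      apply Subtype.ext; rfl
    rw [h4, pComm_hom] at h3
    exact pComm_one_commute h3
  have hψst : ψ ⟨t, htH₂⟩ * ψ ⟨s, hsH₂⟩ = ψ ⟨s, hsH₂⟩ * ψ ⟨t, htH₂⟩ := by
    have h4 : (⟨t, htH₂⟩ : ↥H₂) * ⟨s, hsH₂⟩ = ⟨s, hsH₂⟩ * ⟨t, htH₂⟩ := by
      apply Subtype.ext
      show t * s = s * t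
      rw [hcomm_st]
    rw [← map_mul, ← map_mul, h4]
  have hψx : ψ ⟨x, hxH₂⟩ = ψ ⟨s, hsH₂⟩ * ψ ⟨t, htH₂⟩ := by
    rw [← map_mul]
    congr 1
    apply Subtype.ext
    exact hst.symm
  set Qb : Subgroup (↥H₂ ⧸ K.subgroupOf H₂) := Subgroup.map ψ (Q.subgroupOf H₂) with hQbdef
  have hQbmem : ∀ (w : G) (hw : w ∈ Q), ψ ⟨w, hPH₂ (hQleP hw)⟩ ∈ Qb := by
    intro w hw
    exact ⟨⟨w, hPH₂ (hQleP hw)⟩, Subgroup.mem_subgroupOf.mpr hw, rfl⟩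
  have hQsubp : IsPGroup p ↥(Q.subgroupOf H₂) := by
    intro z
    obtain ⟨k, hk⟩ := hPp ⟨((z : ↥H₂) : G), hQleP (Subgroup.mem_subgroupOf.mp z.2)⟩
    refine ⟨k, ?_⟩
    have h1 : (((z : ↥H₂) : G)) ^ (p ^ k) = 1 := by
      simpa using congrArg (P.subtype) hk
    apply Subtype.ext; apply Subtype.ext
    push_cast
    exact h1
  have hQbp : IsPGroup p ↥Qb := hQsubp.map ψ
  set sb := ψ ⟨s, hsH₂⟩ with hsbdef
  have hsbq : sb ^ q = 1 := by
    rw [hsbdef, ← map_pow]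
    have h4 : (⟨s, hsH₂⟩ : ↥H₂) ^ q = 1 := by
      apply Subtype.ext; push_cast; exact hsq
    rw [h4, map_one]
  have hzsb : IsPGroup p ↥(Subgroup.zpowers sb) := by
    intro z
    refine ⟨n.factorization p, ?_⟩
    obtain ⟨k, hk⟩ := Subgroup.mem_zpowers_iff.mp z.2
    apply Subtype.ext
    push_cast
    rw [← hk, ← hqdef]
    have h5 : (sb ^ k) ^ (q : ℕ) = (sb ^ (q : ℕ)) ^ k := by
      rw [← zpow_natCast (sb ^ k) q, ← zpow_mul, mul_comm, zpow_mul, zpow_natCast]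
    rw [h5, hsbq, one_zpow]
  have hsbnorm : Subgroup.zpowers sb ≤ Subgroup.normalizer (Qb : Set (↥H₂ ⧸ K.subgroupOf H₂)) := by
    rw [Subgroup.zpowers_le, Subgroup.mem_normalizer_iff]
    intro y
    constructor
    · rintro ⟨⟨w, hwH⟩, hw', rfl⟩
      have hwQ : w ∈ Q := Subgroup.mem_subgroupOf.mp hw'
      have hswQ : s * w * s⁻¹ ∈ Q := by
        have := (hQpow (n + 1 - q * c₀) w hwQ).1
        rwa [← hsdef] at this
      have hmem : s * w * s⁻¹ ∈ H₂ := mul_mem (mul_mem hsH₂ hwH) (inv_mem hsH₂)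
      refine ⟨⟨s * w * s⁻¹, hmem⟩, Subgroup.mem_subgroupOf.mpr hswQ, ?_⟩
      have h6 : (⟨s * w * s⁻¹, hmem⟩ : ↥H₂) = ⟨s, hsH₂⟩ * ⟨w, hwH⟩ * ⟨s, hsH₂⟩⁻¹ := by
        apply Subtype.ext; rfl
      rw [h6, map_mul, map_mul, map_inv, ← hsbdef]
    · intro hy
      obtain ⟨⟨w, hwH⟩, hw', heq⟩ := hy
      have hwQ : w ∈ Q := Subgroup.mem_subgroupOf.mp hw'
      have hswQ : s⁻¹ * w * s ∈ Q := by
        have := (hQpow (n + 1 - q * c₀) w hwQ).2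
        rwa [← hsdef] at this
      have hmem : s⁻¹ * w * s ∈ H₂ := mul_mem (mul_mem (inv_mem hsH₂) hwH) hsH₂
      have h5 : ψ ⟨s⁻¹ * w * s, hmem⟩ = y := by
        have h6 : (⟨s⁻¹ * w * s, hmem⟩ : ↥H₂) = ⟨s, hsH₂⟩⁻¹ * ⟨w, hwH⟩ * ⟨s, hsH₂⟩ := by
          apply Subtype.ext; rfl
        rw [h6, map_mul, map_mul, map_inv, ← hsbdef, heq]
        group
      rw [← h5]
      exact ⟨_, Subgroup.mem_subgroupOf.mpr hswQ, rfl⟩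
  set W : Subgroup (↥H₂ ⧸ K.subgroupOf H₂) := Subgroup.zpowers sb ⊔ Qb with hWdef
  have hWp : IsPGroup p ↥W := IsPGroup.to_sup_of_normal_right' hzsb hQbp hsbnorm
  have hWnil : Group.IsNilpotent ↥W := hWp.isNilpotent
  obtain ⟨cW, hcW⟩ := nilpotent_iff_lowerCentralSeries.mp hWnil
  have hQbW : Qb ≤ W := le_sup_right
  have hsbW : sb ∈ W := Subgroup.mem_sup_left (Subgroup.mem_zpowers sb)
  have hL : ∀ nn : ℕ, Qb ≤ Subgroup.map W.subtype (Subgroup.lowerCentralSeries (⊤ : Subgroup ↥W) nn) := by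
    intro nn
    induction nn with
    | zero =>
        have h1 : Subgroup.map W.subtype (⊤ : Subgroup ↥W) = W := by
          rw [← MonoidHom.range_eq_map, Subgroup.range_subtype]
        rw [lowerCentralSeries_zero, h1]
        exact hQbW
    | succ nn ih =>
        rintro y ⟨⟨w, hwH⟩, hw', rfl⟩
        have hwQ : w ∈ Q := Subgroup.mem_subgroupOf.mp hw'
        have hwQ' : w ∈ Subgroup.closure {z | ∃ w ∈ Q, z = pComm w x} := by
          rw [hQfix]; exact hwQ
        clear hw' hwQ
        revert hwH
        induction hwQ' using Subgroup.closure_induction with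
        | mem z hzz =>
            obtain ⟨w', hw'Q, rfl⟩ := hzz
            intro hwH
            have hw'H : w' ∈ H₂ := hPH₂ (hQleP hw'Q)
            have h4 : (⟨pComm w' x, hwH⟩ : ↥H₂) = pComm ⟨w', hw'H⟩ ⟨x, hxH₂⟩ := by
              apply Subtype.ext; rfl
            rw [h4, pComm_hom, hψx,
              pComm_reduce _ _ _ (hψcomm w' (hQleP hw'Q) hw'H) hψst]
            obtain ⟨ω, hω, hωeq⟩ := ih (hQbmem w' hw'Q)
            refine ⟨pComm ω ⟨sb, hsbW⟩, ?_, ?_⟩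
            · rw [lowerCentralSeries_succ]
              apply Subgroup.subset_closure
              refine ⟨ω⁻¹, inv_mem hω, ⟨sb, hsbW⟩⁻¹, Subgroup.mem_top _, ?_⟩
              unfold pComm; group
            · rw [pComm_hom, hωeq]
              rfl
        | one =>
            intro hwH
            have h4 : (⟨(1:G), hwH⟩ : ↥H₂) = 1 := by apply Subtype.ext; rfl
            rw [h4, map_one]
            exact one_mem _
        | mul y' z' hy' hz' py pz =>
            intro hwH
            rw [hQfix] at hy' hz'
            have hyH : y' ∈ H₂ := hPH₂ (hQleP hy')
            have hzH : z' ∈ H₂ := hPH₂ (hQleP hz')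
            have h4 : (⟨y' * z', hwH⟩ : ↥H₂) = ⟨y', hyH⟩ * ⟨z', hzH⟩ := by
              apply Subtype.ext; rfl
            rw [h4, map_mul]
            exact mul_mem (py hyH) (pz hzH)
        | inv y' hy' py =>
            intro hwH
            rw [hQfix] at hy'
            have hyH : y' ∈ H₂ := hPH₂ (hQleP hy')
            have h4 : (⟨y'⁻¹, hwH⟩ : ↥H₂) = (⟨y', hyH⟩)⁻¹ := by
              apply Subtype.ext; rfl
            rw [h4, map_inv]
            exact inv_mem (py hyH)
  have hQK : Q ≤ K := by
    intro w hw
    have h1 := hL cW (hQbmem w hw)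
    rw [hcW, Subgroup.map_bot] at h1
    have h2 : ψ ⟨w, hPH₂ (hQleP hw)⟩ = 1 := Subgroup.mem_bot.mp h1
    have h3 := (QuotientGroup.eq_one_iff _).mp h2
    exact Subgroup.mem_subgroupOf.mp h3
  -- conjugating t into A
  set π₀ := QuotientGroup.mk' P with hπ₀def
  set b := a ^ (q * c₀) with hbdef
  have hbA : b ∈ A := pow_mem haA _
  have htbP : t * b⁻¹ ∈ P := by
    have hπu : π₀ u = 1 := (QuotientGroup.eq_one_iff u).mpr huP
    have hπxa : π₀ x = π₀ a := by rw [hxua, map_mul, hπu, one_mul]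
    have hπtb : π₀ t = π₀ b := by rw [htdef, hbdef, map_pow, map_pow, hπxa]
    have hπtb' : (t : G ⧸ P) = (b : G ⧸ P) := by
      rw [← QuotientGroup.mk'_apply, ← QuotientGroup.mk'_apply]; exact hπtb
    exact mem_swap hPnormal (QuotientGroup.eq.mp hπtb')
  have hbord : ¬ p ∣ orderOf b := by
    intro hd
    exact hAp' (hd.trans (Subgroup.orderOf_dvd_natCard A hbA))
  obtain ⟨h, hh⟩ := conj_into_zpowers (Nat.card ↥P) G p hp P hPnormal hPp
    le_rfl t b htbP htord hbord
  obtain ⟨j, hj⟩ := Subgroup.mem_zpowers_iff.mp hh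
  set cA := b ^ j with hcAdef
  have hcAA : cA ∈ A := Subgroup.zpow_mem A hbA j
  have htc : t = h⁻¹ * cA * h := by rw [hj]; group
  set C := Subgroup.closure {z : G | ∃ v ∈ P, z = pComm v cA} with hCdef
  haveI hCc : IsCyclic ↥C := hcyc cA hcAA
  set f := (MulAut.conj h⁻¹).toMonoidHom with hfdef
  have hKC : K = Subgroup.map f C := by
    rw [hCdef, MonoidHom.map_closure, hKdef]
    congr 1
    ext z
    simp only [Set.mem_image, Set.mem_setOf_eq]
    constructor
    · rintro ⟨w, hw, rfl⟩
      refine ⟨pComm (h * w * h⁻¹) cA, ⟨h * w * h⁻¹, hPnormal.conj_mem _ hw h, rfl⟩, ?_⟩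
      show (MulAut.conj h⁻¹) (pComm (h * w * h⁻¹) cA) = pComm w t
      rw [MulAut.conj_apply, htc]
      unfold pComm; group
    · rintro ⟨z', ⟨v, hv, rfl⟩, rfl⟩
      refine ⟨h⁻¹ * v * h, ?_, ?_⟩
      · have := hPnormal.conj_mem v hv h⁻¹
        simpa using this
      · show (MulAut.conj h⁻¹) (pComm v cA) = pComm (h⁻¹ * v * h) t
        rw [MulAut.conj_apply, htc]
        unfold pComm; group
  refine ⟨(K : Set G), ?_, ?_⟩
  · rw [Subgroup.closure_eq, hKC]
    exact isCyclic_of_surjective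
      (C.equivMapOfInjective f (MulAut.conj h⁻¹).injective).toMonoidHom
      (MulEquiv.surjective _)
  · intro g
    refine ⟨c + k₀ + 1, Nat.succ_pos _, fun nn hnn => ?_⟩
    have h1 : nn = c + (nn - c) := by omega
    rw [h1, engelIter_add]
    have h2 := hiter _ (hengelP g) (nn - c)
    have h3 : Qc (nn - c) = Q := hstab _ (by omega)
    rw [h3] at h2
    exact SetLike.mem_coe.mpr (hQK h2)
end

section
/- Let A be a profinite group acting continuously by automorphisms on an abelian profinite group M, with A and M of coprime orders (π(A) ∩ π(M) = ∅). If for every a ∈ A the closed subgroup [M,a] is finite, then [M,A] is finite. -/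
open scoped commutatorElement

set_option linter.unusedSectionVars false



namespace CoprimeCommAux

section Basic

variable {A M : Type*} [Group A] [CommGroup M] [MulDistribMulAction A M]

variable (M) in
/-- The commutator homomorphism `m ↦ m⁻¹ * (a • m)`. -/
def phi (a : A) : M →* M where
  toFun m := m⁻¹ * a • m
  map_one' := by simp
  map_mul' m n := by
    simp only [smul_mul', mul_inv]
    exact mul_mul_mul_comm m⁻¹ n⁻¹ (a • m) (a • n)

lemma phi_apply (a : A) (m : M) : phi M a m = m⁻¹ * a • m := rfl

@[simp] lemma phi_one (m : M) : phi M (1 : A) m = 1 := by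
  simp [phi_apply]

lemma phi_eq_one_iff {a : A} {m : M} : phi M a m = 1 ↔ a • m = m := by
  rw [phi_apply, inv_mul_eq_one, eq_comm]

lemma phi_mul (a b : A) (m : M) :
    phi M (a * b) m = phi M a m * a • phi M b m := by
  simp only [phi_apply, smul_mul', smul_inv', mul_smul]
  rw [mul_assoc, ← mul_assoc (a • m), mul_inv_cancel, one_mul]

lemma phi_inv (a : A) (m : M) : phi M a⁻¹ m = a⁻¹ • (phi M a m)⁻¹ := by
  simp only [phi_apply, mul_inv, smul_mul', smul_inv', inv_inv, inv_smul_smul]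
  rw [mul_comm]

lemma phi_conj (a b : A) (m : M) :
    phi M (b * a * b⁻¹) m = b • phi M a (b⁻¹ • m) := by
  simp only [phi_apply, smul_mul', smul_inv', smul_inv_smul, mul_smul]

lemma phi_pow {x : A} {W : Subgroup M} (h1 : ∀ m : M, phi M x m ∈ W)
    (h2 : ∀ w ∈ W, x • w = w) : ∀ (n : ℕ) (m : M), phi M (x ^ n) m = phi M x m ^ n := by
  intro n
  induction n with
  | zero => intro m; simp
  | succ n ih =>
    intro m
    rw [pow_succ', phi_mul, ih m, h2 _ (W.pow_mem (h1 m) n), ← pow_succ']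

variable (A M) in
/-- The kernel of the action of `A` on `M`. -/
def ZK : Subgroup A where
  carrier := {a | ∀ m : M, a • m = m}
  one_mem' m := one_smul A m
  mul_mem' {a b} ha hb m := by rw [mul_smul, hb, ha]
  inv_mem' {a} ha m := by conv_lhs => rw [← ha m, inv_smul_smul]

lemma mem_ZK_iff {a : A} : a ∈ ZK A M ↔ ∀ m : M, phi M a m = 1 := by
  simp only [ZK, Subgroup.mem_mk, Set.mem_setOf_eq, phi_eq_one_iff]
  exact Iff.rfl

instance : (ZK A M).Normal := by
  constructor
  intro n hn g m
  rw [mul_smul, mul_smul, hn (g⁻¹ • m), smul_inv_smul]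

variable (A) in
/-- `W` is invariant under the action of `A`. -/
def Invt (W : Subgroup M) : Prop := ∀ (a : A), ∀ w ∈ W, a • w ∈ W

/-- The kernel of the action of `A` on `M ⧸ W`. -/
def KW (W : Subgroup M) (hW : Invt A W) : Subgroup A where
  carrier := {a | ∀ m : M, phi M a m ∈ W}
  one_mem' m := by simpa using W.one_mem
  mul_mem' {a b} ha hb m := by
    rw [phi_mul]; exact W.mul_mem (ha m) (hW a _ (hb m))
  inv_mem' {a} ha m := by
    rw [phi_inv]; exact hW a⁻¹ _ (W.inv_mem (ha m))

lemma mem_KW_iff {W : Subgroup M} {hW : Invt A W} {a : A} :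
    a ∈ KW W hW ↔ ∀ m : M, phi M a m ∈ W := Iff.rfl

lemma KW_mono {W W' : Subgroup M} (hW : Invt A W) (hW' : Invt A W') (h : W ≤ W') :
    KW W hW ≤ KW W' hW' := fun _ ha m => h (ha m)

lemma KW_normal {W : Subgroup M} (hW : Invt A W) : (KW W hW).Normal := by
  constructor
  intro a ha b m
  rw [phi_conj]
  exact hW b _ (ha _)

lemma ZK_le_KW {W : Subgroup M} (hW : Invt A W) : ZK A M ≤ KW W hW := by
  intro z hz m
  rw [(mem_ZK_iff).mp hz m]
  exact W.one_mem

lemma phi_mul_eq_one_iff {y x : A} {W : Subgroup M} (hW : Invt A W)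
    (hWE : ∀ g ∈ W, g ∈ (phi M y).range → g = 1) (hx : ∀ m : M, phi M x m ∈ W) (m : M) :
    phi M (y * x) m = 1 ↔ phi M y m = 1 ∧ phi M x m = 1 := by
  rw [phi_mul]
  constructor
  · intro h
    have h2 : y • phi M x m ∈ W := hW y _ (hx m)
    have h3 : phi M y m = (y • phi M x m)⁻¹ := eq_inv_of_mul_eq_one_left h
    have h4 : phi M y m = 1 := hWE _ (h3 ▸ W.inv_mem h2) ⟨m, rfl⟩
    rw [h4, one_mul] at h
    refine ⟨h4, ?_⟩
    have : y • phi M x m = y • 1 := by rw [smul_one, h]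
    exact MulAction.injective y this
  · rintro ⟨h1, h2⟩
    rw [h1, h2, smul_one, one_mul]

end Basic

section Topo

variable {A M : Type*} [Group A] [TopologicalSpace A] [IsTopologicalGroup A]
  [CompactSpace A] [T2Space A] [TotallyDisconnectedSpace A]
  [CommGroup M] [TopologicalSpace M] [IsTopologicalGroup M]
  [CompactSpace M] [T2Space M] [TotallyDisconnectedSpace M]
  [MulDistribMulAction A M] [ContinuousSMul A M]

theorem isOpen_setOf_forall {X Y Z : Type*} [TopologicalSpace X] [TopologicalSpace Y]
    [TopologicalSpace Z] [CompactSpace Y] {f : X × Y → Z} (hf : Continuous f)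
    {W : Set Z} (hW : IsOpen W) : IsOpen {x | ∀ y, f (x, y) ∈ W} := by
  rw [isOpen_iff_forall_mem_open]
  intro x hx
  obtain ⟨u, v, hu, hv, hxu, hvt, huv⟩ :=
    generalized_tube_lemma isCompact_singleton isCompact_univ (hW.preimage hf)
      (by rintro ⟨x', y⟩ ⟨hx', -⟩
          rcases Set.mem_singleton_iff.mp hx' with rfl
          exact hx y)
  refine ⟨u, fun x' hx' y => ?_, hu, hxu rfl⟩
  exact huv (Set.mk_mem_prod hx' (hvt (Set.mem_univ y)))

lemma continuous_phi (a : A) : Continuous (phi M a) := by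
  have : Continuous fun m : M => m⁻¹ * a • m :=
    continuous_inv.mul (continuous_const_smul a)
  exact this

lemma isOpen_KW {W : Subgroup M} (hW : Invt A W) (hWo : IsOpen (W : Set M)) :
    IsOpen ((KW W hW : Subgroup A) : Set A) := by
  have hf : Continuous fun p : A × M => (p.2)⁻¹ * p.1 • p.2 :=
    (continuous_snd.inv).mul (continuous_fst.smul continuous_snd)
  exact isOpen_setOf_forall hf hWo

theorem exists_invt_open {U : Set M} (hU : IsOpen U) (h1 : (1 : M) ∈ U) :
    ∃ W : Subgroup M, Invt A W ∧ IsOpen ((W : Subgroup M) : Set M) ∧ (W : Set M) ⊆ U := by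
  obtain ⟨C, hC, h1C, hCU⟩ := compact_exists_isClopen_in_isOpen hU h1
  obtain ⟨V, hV⟩ := IsTopologicalGroup.exist_openSubgroup_sub_clopen_nhds_of_one hC h1C
  refine ⟨{ carrier := {m | ∀ a : A, a • m ∈ (V : Subgroup M)}
            one_mem' := fun a => by simpa using V.one_mem'
            mul_mem' := fun {m n} hm hn a => by
              rw [smul_mul']; exact V.mul_mem (hm a) (hn a)
            inv_mem' := fun {m} hm a => by
              rw [smul_inv']; exact (V : Subgroup M).inv_mem (hm a) }, ?_, ?_, ?_⟩
  · intro b w hw a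
    have : (a * b) • w ∈ (V : Subgroup M) := hw (a * b)
    rwa [mul_smul] at this
  · have hf : Continuous fun p : M × A => p.2 • p.1 := continuous_snd.smul continuous_fst
    exact isOpen_setOf_forall hf V.isOpen
  · intro m hm
    have : (1 : A) • m ∈ (V : Subgroup M) := hm 1
    rw [one_smul] at this
    exact hCU (hV this)

theorem range_finite {a : A}
    (h : Finite ((Subgroup.closure {z : M | ∃ m : M, z = m⁻¹ * (a • m)}).topologicalClosure)) :
    ((phi M a).range : Set M).Finite := by
  have hset : Subgroup.closure {z : M | ∃ m : M, z = m⁻¹ * (a • m)} = (phi M a).range := by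
    rw [← Subgroup.closure_eq (phi M a).range]
    congr 1
    ext z
    exact ⟨fun ⟨m, hm⟩ => ⟨m, hm.symm⟩, fun ⟨m, hm⟩ => ⟨m, hm.symm⟩⟩
  rw [hset] at h
  have hfin : (((phi M a).range.topologicalClosure : Subgroup M) : Set M).Finite :=
    Set.finite_coe_iff.mp h
  exact hfin.subset (phi M a).range.le_topologicalClosure

theorem ker_index_ne_zero {a : A} (h : ((phi M a).range : Set M).Finite) :
    (phi M a).ker.index ≠ 0 := by
  rw [Subgroup.index_ker]
  haveI : Finite (phi M a).range := h.to_subtype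
  exact Nat.card_ne_zero.mpr ⟨One.instNonempty, inferInstance⟩

theorem ker_isOpen {a : A} (h : ((phi M a).range : Set M).Finite) :
    IsOpen ((phi M a).ker : Set M) := by
  haveI : (phi M a).ker.FiniteIndex := ⟨ker_index_ne_zero h⟩
  refine Subgroup.isOpen_of_isClosed_of_finiteIndex _ ?_
  have : ((phi M a).ker : Set M) = phi M a ⁻¹' {1} := by
    ext m; simp [MonoidHom.mem_ker]
  rw [this]
  exact isClosed_singleton.preimage (continuous_phi a)

end Topo

section Core

variable {A M : Type*} [Group A] [TopologicalSpace A] [IsTopologicalGroup A]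
  [CompactSpace A] [T2Space A] [TotallyDisconnectedSpace A]
  [CommGroup M] [TopologicalSpace M] [IsTopologicalGroup M]
  [CompactSpace M] [T2Space M] [TotallyDisconnectedSpace M]
  [MulDistribMulAction A M] [ContinuousSMul A M]

theorem mem_ZK_of_small (hcop : primesOf A ∩ primesOf M = ∅)
    (hfin : ∀ a : A,
      Finite ((Subgroup.closure {z : M | ∃ m : M, z = m⁻¹ * (a • m)}).topologicalClosure))
    {W : Subgroup M} {x : A}
    (h1 : ∀ m : M, phi M x m ∈ W) (h2 : ∀ w ∈ W, x • w = w) : x ∈ ZK A M := by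
  by_contra hx
  have hfx : ((phi M x).range : Set M).Finite := range_finite (hfin x)
  haveI : Finite (phi M x).range := hfx.to_subtype
  set d := Nat.card (phi M x).range with hd
  have hd0 : d ≠ 0 := Nat.card_ne_zero.mpr ⟨One.instNonempty, inferInstance⟩
  have hpowd : ∀ m : M, phi M x m ^ d = 1 := by
    intro m
    have h := pow_card_eq_one' (G := (phi M x).range) (x := ⟨phi M x m, ⟨m, rfl⟩⟩)
    rw [← hd] at h
    simpa [Subtype.ext_iff] using h
  have hxd : x ^ d ∈ ZK A M := by
    rw [mem_ZK_iff]
    intro m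
    rw [phi_pow h1 h2 d m, hpowd m]
  -- pass to the quotient A ⧸ ZK
  have hxb1 : (x : A ⧸ ZK A M) ≠ 1 := by
    simpa [QuotientGroup.eq_one_iff] using hx
  have hxbd : (x : A ⧸ ZK A M) ^ d = 1 := by
    rw [← QuotientGroup.mk_pow]
    exact (QuotientGroup.eq_one_iff _).mpr hxd
  set n0 := orderOf (x : A ⧸ ZK A M) with hn0
  have hn0d : n0 ∣ d := orderOf_dvd_of_pow_eq_one hxbd
  have hn00 : n0 ≠ 0 := fun h => hd0 (by rwa [h, zero_dvd_iff] at hn0d)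
  have hn01 : n0 ≠ 1 := fun h => hxb1 (orderOf_eq_one_iff.mp h)
  set p := n0.minFac with hpdef
  have hp : p.Prime := Nat.minFac_prime hn01
  have hpn0 : p ∣ n0 := Nat.minFac_dvd n0
  -- p ∈ primesOf M
  have hpM : p ∈ primesOf M := by
    refine ⟨hp, (phi M x).ker, inferInstance, ker_isOpen hfx, ker_index_ne_zero hfx, ?_⟩
    rw [Subgroup.index_ker]
    exact hpn0.trans hn0d
  -- an element of order p in a finite continuous quotient of A
  set g := x ^ (n0 / p) with hg
  have hn0pos : 0 < n0 := Nat.pos_of_ne_zero hn00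
  have hgZ : g ∉ ZK A M := by
    intro hgz
    have h1' : (x : A ⧸ ZK A M) ^ (n0 / p) = 1 := by
      rw [← QuotientGroup.mk_pow]
      exact (QuotientGroup.eq_one_iff _).mpr hgz
    have h2' : n0 ∣ n0 / p := orderOf_dvd_of_pow_eq_one h1'
    have hlt : n0 / p < n0 := Nat.div_lt_self hn0pos hp.one_lt
    have hpos : 0 < n0 / p := Nat.div_pos (Nat.le_of_dvd hn0pos hpn0) hp.pos
    exact absurd (Nat.le_of_dvd hpos h2') (not_le.mpr hlt)
  have hgp : g ^ p ∈ ZK A M := by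
    have hgpow : g ^ p = x ^ n0 := by rw [hg, ← pow_mul, Nat.div_mul_cancel hpn0]
    rw [hgpow]
    have : (x : A ⧸ ZK A M) ^ n0 = 1 := pow_orderOf_eq_one _
    rw [← QuotientGroup.mk_pow] at this
    exact (QuotientGroup.eq_one_iff _).mp this
  obtain ⟨m0, hm0⟩ : ∃ m : M, g • m ≠ m := by
    by_contra h
    push_neg at h
    exact hgZ h
  have hphig : phi M g m0 ≠ 1 := fun h => hm0 (phi_eq_one_iff.mp h)
  obtain ⟨W0, hW0i, hW0o, hW0sub⟩ :=
    exists_invt_open (A := A) (U := {phi M g m0}ᶜ) isClosed_singleton.isOpen_compl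
      (by simpa using (Ne.symm hphig))
  haveI hNnorm : (KW W0 hW0i).Normal := KW_normal hW0i
  have hNopen : IsOpen ((KW W0 hW0i : Subgroup A) : Set A) := isOpen_KW hW0i hW0o
  haveI : Finite (A ⧸ KW W0 hW0i) := Subgroup.quotient_finite_of_isOpen _ hNopen
  have hNind : (KW W0 hW0i).index ≠ 0 := by
    rw [Subgroup.index_eq_card]
    exact Nat.card_ne_zero.mpr ⟨inferInstance, inferInstance⟩
  have hgN : g ∉ KW W0 hW0i := by
    intro h
    exact (hW0sub (h m0)) rfl
  have hgb1 : (g : A ⧸ KW W0 hW0i) ≠ 1 := by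
    simpa [QuotientGroup.eq_one_iff] using hgN
  have hgbp : (g : A ⧸ KW W0 hW0i) ^ p = 1 := by
    rw [← QuotientGroup.mk_pow]
    exact (QuotientGroup.eq_one_iff _).mpr (ZK_le_KW hW0i hgp)
  have hop : orderOf (g : A ⧸ KW W0 hW0i) = p :=
    (hp.eq_one_or_self_of_dvd _ (orderOf_dvd_of_pow_eq_one hgbp)).resolve_left
      (fun h => hgb1 (orderOf_eq_one_iff.mp h))
  have hpA : p ∈ primesOf A := by
    refine ⟨hp, KW W0 hW0i, hNnorm, hNopen, hNind, ?_⟩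
    rw [Subgroup.index_eq_card]
    exact hop ▸ orderOf_dvd_natCard (g : A ⧸ KW W0 hW0i)
  have : p ∈ primesOf A ∩ primesOf M := ⟨hpA, hpM⟩
  rw [hcop] at this
  exact this

/-- One step of the construction. -/
def Nxt (p q : A × Subgroup M) : Prop :=
  Invt A q.2 ∧ IsOpen ((q.2 : Subgroup M) : Set M) ∧ q.2 ≤ p.2 ∧
    (∀ g ∈ q.2, g ∈ (phi M p.1).range → g = 1) ∧
    ∃ x : A, q.1 = p.1 * x ∧ (∀ m : M, phi M x m ∈ q.2) ∧
      ∃ v : M, phi M p.1 v = 1 ∧ phi M x v ≠ 1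

theorem exists_nxt (hcop : primesOf A ∩ primesOf M = ∅)
    (hfin : ∀ a : A,
      Finite ((Subgroup.closure {z : M | ∃ m : M, z = m⁻¹ * (a • m)}).topologicalClosure))
    (hZ : ¬ IsOpen ((ZK A M : Subgroup A) : Set A))
    (p : A × Subgroup M) (hp1 : Invt A p.2) (hp2 : IsOpen ((p.2 : Subgroup M) : Set M)) :
    ∃ q : A × Subgroup M, Nxt p q := by
  set y := p.1 with hy
  have hfy : ((phi M y).range : Set M).Finite := range_finite (hfin y)
  have hky : IsOpen (((phi M y).ker : Subgroup M) : Set M) := ker_isOpen hfy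
  set O : Set M := (((phi M y).ker : Subgroup M) : Set M) ∩ (p.2 : Set M) ∩
    ((((phi M y).range : Subgroup M) : Set M) \ {1})ᶜ with hO
  have hOopen : IsOpen O := ((hky.inter hp2).inter (hfy.diff.isClosed.isOpen_compl))
  have h1O : (1 : M) ∈ O := by
    refine ⟨⟨(phi M y).ker.one_mem, p.2.one_mem⟩, ?_⟩
    simp
  obtain ⟨W, hWi, hWo, hWsub⟩ := exists_invt_open (A := A) hOopen h1O
  have hWker : ∀ w ∈ W, phi M y w = 1 := fun w hw => (hWsub hw).1.1
  have hWE : ∀ g ∈ W, g ∈ (phi M y).range → g = 1 := by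
    intro g hg hgr
    have h3 := (hWsub hg).2
    by_contra hne
    exact h3 ⟨hgr, hne⟩
  have hWp : W ≤ p.2 := fun w hw => (hWsub hw).1.2
  by_cases hc : ∃ x : A, (∀ m : M, phi M x m ∈ W) ∧ ∃ v : M, phi M y v = 1 ∧ phi M x v ≠ 1
  · obtain ⟨x, hx, v, hv1, hv2⟩ := hc
    exact ⟨(y * x, W), hWi, hWo, hWp, hWE, x, rfl, hx, v, hv1, hv2⟩
  · exfalso
    apply hZ
    push_neg at hc
    have hKZ : KW W hWi ≤ ZK A M := by
      intro x hx
      refine mem_ZK_of_small hcop hfin (W := W) hx ?_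
      intro w hw
      exact phi_eq_one_iff.mp (hc x hx w (hWker w hw))
    exact Subgroup.isOpen_mono hKZ (isOpen_KW hWi hWo)

end Core

theorem finite_coe_iSup {M : Type*} [CommGroup M] {ι : Type*} [Finite ι] (f : ι → Subgroup M)
    (hf : ∀ i, ((f i : Subgroup M) : Set M).Finite) :
    ((⨆ i, f i : Subgroup M) : Set M).Finite := by
  cases nonempty_fintype ι
  classical
  have key : ∀ s : Finset ι, (((s.sup f : Subgroup M)) : Set M).Finite := by
    intro s
    induction s using Finset.induction_on with
    | empty => simp
    | @insert a s ha ih =>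
      rw [Finset.sup_insert, Subgroup.mul_normal]
      exact (hf a).mul ih
  have h2 := key Finset.univ
  have h3 : Finset.univ.sup f = ⨆ i, f i := by
    rw [Finset.sup_eq_iSup]
    simp
  rwa [h3] at h2

end CoprimeCommAux

open CoprimeCommAux in
/-- Let `A` be a profinite group acting continuously by automorphisms on an abelian
profinite group `M`, with `π(A) ∩ π(M) = ∅`. If the closed subgroup `[M,a]` is finite for
every `a ∈ A`, then `[M,A]` is finite. -/
theorem commutator_finite_of_pointwise_finite
    {A M : Type*} [Group A] [TopologicalSpace A] [IsTopologicalGroup A]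
    [CompactSpace A] [T2Space A] [TotallyDisconnectedSpace A]
    [CommGroup M] [TopologicalSpace M] [IsTopologicalGroup M]
    [CompactSpace M] [T2Space M] [TotallyDisconnectedSpace M]
    [MulDistribMulAction A M] [ContinuousSMul A M]
    (hcop : primesOf A ∩ primesOf M = ∅)
    (hfin : ∀ a : A,
      Finite ↥((Subgroup.closure {z : M | ∃ m : M, z = m⁻¹ * (a • m)}).topologicalClosure)) :
    Finite ↥((Subgroup.closure
      {z : M | ∃ (a : A) (m : M), z = m⁻¹ * (a • m)}).topologicalClosure) := by
  classical
  -- Step 1: the kernel of the action is open.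
  have hZopen : IsOpen ((ZK A M : Subgroup A) : Set A) := by
    by_contra hZ
    have step : ∀ s : {p : A × Subgroup M // Invt A p.2 ∧ IsOpen ((p.2 : Subgroup M) : Set M)},
        ∃ t : {p : A × Subgroup M // Invt A p.2 ∧ IsOpen ((p.2 : Subgroup M) : Set M)},
          Nxt s.1 t.1 := by
      rintro ⟨p, hp1, hp2⟩
      obtain ⟨q, hq⟩ := exists_nxt hcop hfin hZ p hp1 hp2
      exact ⟨⟨q, hq.1, hq.2.1⟩, hq⟩
    choose gnext hgnext using step
    have hs0 : Invt A (((1:A), (⊤ : Subgroup M)) : A × Subgroup M).2 ∧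
        IsOpen (((((1:A), (⊤ : Subgroup M)) : A × Subgroup M).2 : Subgroup M) : Set M) :=
      ⟨fun a w _ => Subgroup.mem_top _, by rw [Subgroup.coe_top]; exact isOpen_univ⟩
    set s0 : {p : A × Subgroup M // Invt A p.2 ∧ IsOpen ((p.2 : Subgroup M) : Set M)} :=
      ⟨((1:A), ⊤), hs0⟩ with hs0def
    set sq : ℕ → {p : A × Subgroup M // Invt A p.2 ∧ IsOpen ((p.2 : Subgroup M) : Set M)} :=
      fun n => gnext^[n] s0 with hsq
    have hnxt : ∀ n, Nxt (sq n).1 (sq (n+1)).1 := by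
      intro n
      have h : sq (n+1) = gnext (sq n) := by
        rw [hsq]; simp [Function.iterate_succ_apply']
      rw [h]
      exact hgnext (sq n)
    set y : ℕ → A := fun n => (sq n).1.1 with hydef
    set Wn : ℕ → Subgroup M := fun n => (sq n).1.2 with hWdef
    have hInv : ∀ n, Invt A (Wn (n+1)) := fun n => (hnxt n).1
    have hWopen : ∀ n, IsOpen ((Wn (n+1) : Subgroup M) : Set M) := fun n => (hnxt n).2.1
    have hWle : ∀ n, Wn (n+1) ≤ Wn n := fun n => (hnxt n).2.2.1
    have hWE : ∀ n, ∀ g ∈ Wn (n+1), g ∈ (phi M (y n)).range → g = 1 :=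
      fun n => (hnxt n).2.2.2.1
    choose xs hxeq hxmem vs hv1 hv2 using fun n => (hnxt n).2.2.2.2
    have hxeq' : ∀ n, y (n+1) = y n * xs n := hxeq
    have hxmem' : ∀ n m, phi M (xs n) m ∈ Wn (n+1) := hxmem
    have hv1' : ∀ n, phi M (y n) (vs n) = 1 := hv1
    have hWmono : ∀ k l, k ≤ l → Wn l ≤ Wn k := by
      intro k l h
      induction h with
      | refl => exact le_rfl
      | step h ih => exact (hWle _).trans ih
    have hker_iff : ∀ n m, phi M (y (n+1)) m = 1 ↔ phi M (y n) m = 1 ∧ phi M (xs n) m = 1 := by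
      intro n m
      rw [show y (n+1) = y n * xs n from hxeq' n]
      exact phi_mul_eq_one_iff (hInv n) (hWE n) (hxmem' n) m
    set c : ℕ → ℕ := fun n => (phi M (y n)).ker.index with hcdef
    have hc0 : ∀ n, c n ≠ 0 := fun n => ker_index_ne_zero (range_finite (hfin (y n)))
    have hclt : ∀ n, c n < c (n+1) := by
      intro n
      have hHK : (phi M (y (n+1))).ker ≤ (phi M (y n)).ker := by
        intro m hm
        exact MonoidHom.mem_ker.mpr ((hker_iff n m).mp (MonoidHom.mem_ker.mp hm)).1
      have hne : ¬ (phi M (y n)).ker ≤ (phi M (y (n+1))).ker := by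
        intro hle
        have hv : vs n ∈ (phi M (y n)).ker := MonoidHom.mem_ker.mpr (hv1' n)
        have h := (hker_iff n (vs n)).mp (MonoidHom.mem_ker.mp (hle hv))
        exact hv2 n h.2
      have hrel := Subgroup.relIndex_mul_index hHK
      have hrel1 : (phi M (y (n+1))).ker.relIndex (phi M (y n)).ker ≠ 1 :=
        fun h => hne (Subgroup.relIndex_eq_one.mp h)
      have hrel0 : (phi M (y (n+1))).ker.relIndex (phi M (y n)).ker ≠ 0 := by
        intro h
        apply hc0 (n+1)
        show (phi M (y (n+1))).ker.index = 0
        rw [← hrel, h, zero_mul]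
      have h2le : 2 ≤ (phi M (y (n+1))).ker.relIndex (phi M (y n)).ker := by omega
      have hcn : 0 < c n := Nat.pos_of_ne_zero (hc0 n)
      calc c n < 2 * c n := by omega
        _ ≤ (phi M (y (n+1))).ker.relIndex (phi M (y n)).ker * c n :=
            Nat.mul_le_mul_right _ h2le
        _ = c (n+1) := hrel
    have hcge : ∀ n, n ≤ c n := by
      intro n
      induction n with
      | zero => exact Nat.zero_le _
      | succ n ih => exact Nat.lt_of_le_of_lt ih (hclt n)
    obtain ⟨yst, hyst⟩ := exists_clusterPt_of_compactSpace (Filter.map y Filter.atTop)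
    have hcoset : ∀ k, (y k)⁻¹ * yst ∈ KW (Wn (k+1)) (hInv k) := by
      intro k
      have hKcl : IsClosed ((KW (Wn (k+1)) (hInv k) : Subgroup A) : Set A) :=
        Subgroup.isClosed_of_isOpen _ (isOpen_KW (hInv k) (hWopen k))
      have hmemtail : ∀ l, k ≤ l → (y k)⁻¹ * y l ∈ KW (Wn (k+1)) (hInv k) := by
        intro l hl
        induction hl with
        | refl =>
          rw [inv_mul_cancel]
          exact Subgroup.one_mem _
        | @step l hl ih =>
          show (y k)⁻¹ * y (l+1) ∈ KW (Wn (k + 1)) (hInv k)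
          rw [hxeq' l, ← mul_assoc]
          exact Subgroup.mul_mem _ ih
            (KW_mono (hInv l) (hInv k) (hWmono (k+1) (l+1) (Nat.succ_le_succ hl)) (hxmem' l))
      have hsetmem : {a : A | (y k)⁻¹ * a ∈ KW (Wn (k+1)) (hInv k)} ∈ Filter.map y Filter.atTop := by
        rw [Filter.mem_map]
        exact Filter.mem_of_superset (Filter.mem_atTop k) (fun l hl => hmemtail l hl)
      have hclosed : IsClosed {a : A | (y k)⁻¹ * a ∈ KW (Wn (k+1)) (hInv k)} := by
        have h : {a : A | (y k)⁻¹ * a ∈ KW (Wn (k+1)) (hInv k)} =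
            (fun a : A => (y k)⁻¹ * a) ⁻¹' ((KW (Wn (k+1)) (hInv k) : Subgroup A) : Set A) := rfl
        rw [h]
        exact hKcl.preimage (continuous_const.mul continuous_id)
      have hmem : yst ∈ {a : A | (y k)⁻¹ * a ∈ KW (Wn (k+1)) (hInv k)} := by
        have h1 : ClusterPt yst (Filter.principal {a : A | (y k)⁻¹ * a ∈ KW (Wn (k+1)) (hInv k)}) :=
          hyst.mono (Filter.le_principal_iff.mpr hsetmem)
        have h2 := mem_closure_iff_clusterPt.mpr h1
        rwa [hclosed.closure_eq] at h2
      exact hmem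
    have hkerle : ∀ k, (phi M yst).ker ≤ (phi M (y k)).ker := by
      intro k m hm
      have hu := hcoset k
      have h1 : phi M (y k * ((y k)⁻¹ * yst)) m = 1 := by
        rw [mul_inv_cancel_left]
        exact MonoidHom.mem_ker.mp hm
      exact MonoidHom.mem_ker.mpr
        ((phi_mul_eq_one_iff (hInv k) (hWE k) (fun m' => hu m') m).mp h1).1
    have hD0 : (phi M yst).ker.index ≠ 0 := ker_index_ne_zero (range_finite (hfin yst))
    have hdvd : ∀ k, c k ∣ (phi M yst).ker.index := fun k => Subgroup.index_dvd_of_le (hkerle k)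
    have hle : c ((phi M yst).ker.index + 1) ≤ (phi M yst).ker.index :=
      Nat.le_of_dvd (Nat.pos_of_ne_zero hD0) (hdvd _)
    have hge := hcge ((phi M yst).ker.index + 1)
    omega
  -- Step 2: conclude
  haveI hQfin : Finite (A ⧸ ZK A M) := Subgroup.quotient_finite_of_isOpen _ hZopen
  have hTsub : {z : M | ∃ (a : A) (m : M), z = m⁻¹ * a • m} ⊆
      ⋃ q : A ⧸ ZK A M, ((phi M (Quotient.out q)).range : Set M) := by
    rintro z ⟨a, m, rfl⟩
    refine Set.mem_iUnion.mpr ⟨QuotientGroup.mk a, ?_⟩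
    obtain ⟨h, hh⟩ := QuotientGroup.mk_out_eq_mul (ZK A M) a
    refine ⟨m, ?_⟩
    rw [hh, phi_mul, (mem_ZK_iff).mp h.2 m, smul_one, mul_one]
    rfl
  set R : Subgroup M := ⨆ q : A ⧸ ZK A M, (phi M (Quotient.out q)).range with hRdef
  have hRfin : ((R : Subgroup M) : Set M).Finite :=
    finite_coe_iSup _ (fun q => range_finite (hfin _))
  have hcl : Subgroup.closure {z : M | ∃ (a : A) (m : M), z = m⁻¹ * a • m} ≤ R := by
    rw [Subgroup.closure_le]
    refine hTsub.trans ?_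
    exact Set.iUnion_subset fun q => SetLike.coe_subset_coe.mpr
      (le_iSup (fun q : A ⧸ ZK A M => (phi M (Quotient.out q)).range) q)
  have htc : (Subgroup.closure
      {z : M | ∃ (a : A) (m : M), z = m⁻¹ * a • m}).topologicalClosure ≤ R :=
    Subgroup.topologicalClosure_minimal _ hcl hRfin.isClosed
  exact Set.Finite.to_subtype (hRfin.subset (SetLike.coe_subset_coe.mpr htc))
end

section
/- Let G be a profinite group whose set of coprime commutators is contained in a union of countably many procyclic subgroups C₁, C₂, …. If M is a closed subgroup of G every element of which is a coprime commutator of G, then there is an index j such that M ∩ C_j has finite index in M. -/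
/-!  Basic notions for profinite groups.

A profinite group is modelled as a compact Hausdorff totally disconnected
topological group, via the instance assumptions
`[Group G] [TopologicalSpace G] [TopologicalGroup G] [CompactSpace G]
[T2Space G] [TotallyDisconnectedSpace G]`. -/

open scoped commutatorElement

/-- Let `G` be a profinite group whose set of coprime commutators is contained in a union
of countably many procyclic closed subgroups `C₀, C₁, …`. If `M` is a closed subgroup of
`G` all of whose elements are coprime commutators of `G`, then there is an index `j` such
that `M ∩ C_j` has finite index in `M`. -/
theorem exists_finite_relindex_of_subgroup_of_coprimeCommutators
    {G : Type*} [Group G] [TopologicalSpace G] [IsTopologicalGroup G]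
    [CompactSpace G] [T2Space G] [TotallyDisconnectedSpace G]
    (C : ℕ → Subgroup G)
    (hCclosed : ∀ i, IsClosed (C i : Set G))
    (hCproc : ∀ i, IsProcyclicSubgroup (C i))
    (hcov : ∀ g : G, IsCoprimeCommutator g → g ∈ ⋃ i, (C i : Set G))
    (M : Subgroup G) (hMclosed : IsClosed (M : Set G))
    (hM : ∀ m ∈ M, IsCoprimeCommutator m) :
    ∃ j : ℕ, (C j).relIndex M ≠ 0 := by
  classical
  haveI : CompactSpace ↥M := isCompact_iff_compactSpace.mp (hMclosed.isCompact)
  haveI : Nonempty ↥M := ⟨⟨1, one_mem M⟩⟩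
  set D : ℕ → Subgroup ↥M := fun i => (C i).subgroupOf M with hD
  have hDclosed : ∀ i, IsClosed ((D i : Set ↥M)) := by
    intro i
    exact (hCclosed i).preimage continuous_subtype_val
  have hDcov : (⋃ i, (D i : Set ↥M)) = Set.univ := by
    apply Set.eq_univ_of_forall
    intro m
    have hm := hcov (m : G) (hM m m.2)
    rcases Set.mem_iUnion.mp hm with ⟨i, hi⟩
    exact Set.mem_iUnion.mpr ⟨i, hi⟩
  obtain ⟨j, hj⟩ := nonempty_interior_of_iUnion_of_closed hDclosed hDcov
  rcases hj with ⟨g, hg⟩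
  have hopen : IsOpen ((D j : Set ↥M)) :=
    Subgroup.isOpen_of_mem_nhds (D j) (mem_interior_iff_mem_nhds.mp hg)
  haveI : Finite (↥M ⧸ D j) := Subgroup.quotient_finite_of_isOpen (D j) hopen
  exact ⟨j, Subgroup.index_ne_zero_of_finite⟩
end

section
/- Let X be a normal subset of a profinite group G (a subset invariant under conjugation by all elements of G) and assume that X is contained in a union of countably many procyclic (closed) subgroups of G. Then for every x ∈ X, the normalizer N_G(⟨x⟩) of the closed subgroup topologically generated by x has finite index in G. -/
/-!  Basic notions for profinite groups.

A profinite group is modelled as a compact Hausdorff totally disconnected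
topological group, via the instance assumptions
`[Group G] [TopologicalSpace G] [IsTopologicalGroup G] [CompactSpace G]
[T2Space G] [TotallyDisconnectedSpace G]`. -/

open scoped commutatorElement

section AuxLemmas

open Subgroup

/-- In a finite cyclic group, a subgroup is at most any subgroup of the same (or larger
dividing) cardinality; we only need the equal-cardinality version. -/
lemma aux_cyclic_le_of_card_eq {Q : Type*} [Group Q] [Finite Q] [IsCyclic Q]
    {H K : Subgroup Q} (hcard : Nat.card H = Nat.card K) : H ≤ K := by
  classical
  cases nonempty_fintype Q
  intro x hx
  have hn0 : 0 < Nat.card K := Nat.card_pos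
  have hx1 : x ^ Nat.card K = 1 := by
    have h1 : (⟨x, hx⟩ : H) ^ Nat.card H = 1 := pow_card_eq_one'
    have h2 := congrArg (Subtype.val) h1
    push_cast at h2
    rwa [hcard] at h2
  have hKsub : Set.toFinset (K : Set Q) ⊆ Finset.univ.filter (fun a : Q => a ^ Nat.card K = 1) := by
    intro a ha
    rw [Set.mem_toFinset] at ha
    refine Finset.mem_filter.mpr ⟨Finset.mem_univ _, ?_⟩
    have h1 : (⟨a, ha⟩ : K) ^ Nat.card K = 1 := pow_card_eq_one'
    have h2 := congrArg (Subtype.val) h1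
    push_cast at h2
    exact h2
  have hcardK : (Set.toFinset (K : Set Q)).card = Nat.card K := by
    rw [Set.toFinset_card, ← Nat.card_eq_fintype_card]
    rfl
  have hle : (Finset.univ.filter (fun a : Q => a ^ Nat.card K = 1)).card ≤ Nat.card K := by
    have := IsCyclic.card_pow_eq_one_le (α := Q) hn0
    convert this using 2
  have hfil : Set.toFinset (K : Set Q) = Finset.univ.filter (fun a : Q => a ^ Nat.card K = 1) :=
    Finset.eq_of_subset_of_card_le hKsub (by rw [hcardK]; exact hle)
  have hxK : x ∈ Set.toFinset (K : Set Q) := by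
    rw [hfil]
    exact Finset.mem_filter.mpr ⟨Finset.mem_univ _, hx1⟩
  rwa [Set.mem_toFinset] at hxK

lemma aux_cyclic_eq_of_index_eq {Q : Type*} [Group Q] [Finite Q] [IsCyclic Q]
    {H K : Subgroup Q} (h : H.index = K.index) : H = K := by
  have hH := Subgroup.card_mul_index H
  have hK := Subgroup.card_mul_index K
  have hne : K.index ≠ 0 := Subgroup.index_ne_zero_of_finite
  have hcard : Nat.card H = Nat.card K := by
    rw [h] at hH
    have := hH.trans hK.symm
    exact Nat.eq_of_mul_eq_mul_right (Nat.pos_of_ne_zero hne) this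
  exact le_antisymm (aux_cyclic_le_of_card_eq hcard) (aux_cyclic_le_of_card_eq hcard.symm)

/-- In a profinite group, every open neighbourhood of `1` contains an open subgroup. -/
lemma aux_exists_openSubgroup {P : Type*} [Group P] [TopologicalSpace P] [IsTopologicalGroup P]
    [CompactSpace P] [T2Space P] [TotallyDisconnectedSpace P]
    {V : Set P} (hV : IsOpen V) (h1 : (1 : P) ∈ V) :
    ∃ H : Subgroup P, IsOpen (H : Set P) ∧ (H : Set P) ⊆ V := by
  obtain ⟨W, hW, h1W, hWV⟩ := compact_exists_isClopen_in_isOpen hV h1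
  obtain ⟨H, hH⟩ := IsTopologicalGroup.exist_openSubgroup_sub_clopen_nhds_of_one hW h1W
  exact ⟨H.toSubgroup, H.isOpen, hH.trans hWV⟩

end AuxLemmas
section AuxLemmas2

open Subgroup Pointwise

/-- In a compact abelian topological group all of whose open quotients are cyclic,
two open subgroups with the same index are equal. -/
lemma aux_unique_open {P : Type*} [Group P] [TopologicalSpace P] [IsTopologicalGroup P]
    [CompactSpace P]
    (hcomm : ∀ a b : P, a * b = b * a)
    (hCQ : ∀ (N : Subgroup P) [N.Normal], IsOpen (N : Set P) → IsCyclic (P ⧸ N))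
    {U V : Subgroup P} (hU : IsOpen (U : Set P)) (hV : IsOpen (V : Set P))
    (h : U.index = V.index) : U = V := by
  have hNormal : ∀ W : Subgroup P, W.Normal := fun W =>
    ⟨fun n hn g => by rw [hcomm g n, mul_inv_cancel_right]; exact hn⟩
  haveI := hNormal (U ⊓ V)
  have hNopen : IsOpen ((U ⊓ V : Subgroup P) : Set P) := by
    rw [Subgroup.coe_inf]
    exact hU.inter hV
  haveI : Finite (P ⧸ (U ⊓ V : Subgroup P)) := Subgroup.quotient_finite_of_isOpen _ hNopen
  haveI : IsCyclic (P ⧸ (U ⊓ V : Subgroup P)) := hCQ _ hNopen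
  set f := QuotientGroup.mk' (U ⊓ V : Subgroup P) with hf
  have hker : f.ker = U ⊓ V := QuotientGroup.ker_mk' _
  have hsurj : Function.Surjective f := QuotientGroup.mk'_surjective _
  have hUi : (U.map f).index = U.index :=
    Subgroup.index_map_eq U hsurj (by rw [hker]; exact inf_le_left)
  have hVi : (V.map f).index = V.index :=
    Subgroup.index_map_eq V hsurj (by rw [hker]; exact inf_le_right)
  have hidx : (U.map f).index = (V.map f).index := by rw [hUi, hVi, h]
  have hVine : (V.map f).index ≠ 0 := Subgroup.index_ne_zero_of_finite
  have h1 := Subgroup.card_mul_index (U.map f)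
  have h2 := Subgroup.card_mul_index (V.map f)
  have hcard : Nat.card (U.map f) = Nat.card (V.map f) := by
    rw [hidx] at h1
    exact Nat.eq_of_mul_eq_mul_right (Nat.pos_of_ne_zero hVine) (h1.trans h2.symm)
  have hmapeq : U.map f = V.map f :=
    le_antisymm (aux_cyclic_le_of_card_eq hcard) (aux_cyclic_le_of_card_eq hcard.symm)
  have hUc : (U.map f).comap f = U := by
    rw [Subgroup.comap_map_eq, hker]
    exact sup_eq_left.mpr inf_le_left
  have hVc : (V.map f).comap f = V := by
    rw [Subgroup.comap_map_eq, hker]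
    exact sup_eq_left.mpr inf_le_right
  rw [← hUc, hmapeq]
  exact hVc

/-- In a profinite abelian group all of whose open quotients are cyclic, every continuous
automorphism maps every closed subgroup into itself. -/
lemma aux_map_closed_le {P : Type*} [Group P] [TopologicalSpace P] [IsTopologicalGroup P]
    [CompactSpace P] [T2Space P] [TotallyDisconnectedSpace P]
    (hcomm : ∀ a b : P, a * b = b * a)
    (hCQ : ∀ (N : Subgroup P) [N.Normal], IsOpen (N : Set P) → IsCyclic (P ⧸ N))
    (e : P ≃* P) (he : Continuous e)
    {D : Subgroup P} (hD : IsClosed (D : Set P)) :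
    D.map e.toMonoidHom ≤ D := by
  have step1 : ∀ U : Subgroup P, IsOpen (U : Set P) → D ≤ U → D.map e.toMonoidHom ≤ U := by
    intro U hUopen hDU
    have hUc : IsOpen ((U.comap e.toMonoidHom : Subgroup P) : Set P) := by
      have hpre : ((U.comap e.toMonoidHom : Subgroup P) : Set P) = ⇑e ⁻¹' (U : Set P) := rfl
      rw [hpre]
      exact hUopen.preimage he
    have hidx : (U.comap e.toMonoidHom).index = U.index :=
      U.index_comap_of_surjective (f := e.toMonoidHom) (fun z => e.surjective z)
    have heq : U.comap e.toMonoidHom = U := aux_unique_open hcomm hCQ hUc hUopen hidx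
    calc D.map e.toMonoidHom
        ≤ (U.comap e.toMonoidHom).map e.toMonoidHom := Subgroup.map_mono (hDU.trans heq.ge)
      _ ≤ U := Subgroup.map_comap_le _ _
  intro y hy
  by_contra hyD
  have hB : IsClosed ((fun d => y * d) '' (D : Set P)) :=
    (Homeomorph.mulLeft y).isClosedMap _ hD
  have h1B : (1 : P) ∉ (fun d => y * d) '' (D : Set P) := by
    rintro ⟨d, hd, hd1⟩
    exact hyD (by
      have hyd : y = d⁻¹ := mul_eq_one_iff_eq_inv.mp hd1
      rw [hyd]; exact D.inv_mem hd)
  obtain ⟨W, hWopen, hWsub⟩ := aux_exists_openSubgroup hB.isOpen_compl h1B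
  haveI : D.Normal := ⟨fun n hn g => by rw [hcomm g n, mul_inv_cancel_right]; exact hn⟩
  have hUopen : IsOpen ((W ⊔ D : Subgroup P) : Set P) := Subgroup.isOpen_mono le_sup_left hWopen
  have hyU : y ∈ W ⊔ D := step1 _ hUopen le_sup_right hy
  have hyU' : y ∈ ((W : Set P) * (D : Set P)) := by
    rw [← Subgroup.mul_normal]
    exact hyU
  obtain ⟨w, hw, d, hd, hwd⟩ := Set.mem_mul.mp hyU'
  have hwB : w ∈ (fun d => y * d) '' (D : Set P) :=
    ⟨d⁻¹, D.inv_mem hd, by rw [← hwd]; group⟩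
  exact hWsub hw hwB

end AuxLemmas2
section AuxLemmas3

open Subgroup

/-- A procyclic topological group (with T2) is abelian. -/
lemma aux_comm_of_procyclic {P : Type*} [Group P] [TopologicalSpace P] [IsTopologicalGroup P]
    [T2Space P] (h : IsProcyclic P) : ∀ a b : P, a * b = b * a := by
  obtain ⟨g, hg⟩ := h
  have hz : ∀ s ∈ Subgroup.zpowers g, ∀ t ∈ Subgroup.zpowers g, s * t = t * s := by
    intro s hs t ht
    obtain ⟨m, rfl⟩ := Subgroup.mem_zpowers_iff.mp hs
    obtain ⟨n, rfl⟩ := Subgroup.mem_zpowers_iff.mp ht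
    rw [← zpow_add, ← zpow_add, add_comm]
  have key : ∀ b : P, (∀ s ∈ Subgroup.zpowers g, s * b = b * s) → ∀ a : P, a * b = b * a := by
    intro b hb a
    have ha : a ∈ _root_.closure ((Subgroup.zpowers g : Subgroup P) : Set P) := by
      rw [hg]; trivial
    exact closure_minimal (fun s hs => hb s hs)
      (isClosed_eq (continuous_id.mul continuous_const) (continuous_const.mul continuous_id)) ha
  intro a b
  have hb : ∀ s ∈ Subgroup.zpowers g, s * b = b * s := fun s hs =>
    (key s (fun t ht => hz t ht s hs) b).symm
  exact key b hb a

/-- All open quotients of a procyclic topological group are cyclic. -/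
lemma aux_hCQ_of_procyclic {P : Type*} [Group P] [TopologicalSpace P] [IsTopologicalGroup P]
    (h : IsProcyclic P) :
    ∀ (N : Subgroup P) [N.Normal], IsOpen (N : Set P) → IsCyclic (P ⧸ N) := by
  intro N hN hNopen
  obtain ⟨g, hg⟩ := h
  refine ⟨⟨QuotientGroup.mk g, ?_⟩⟩
  intro q
  obtain ⟨p, rfl⟩ := QuotientGroup.mk_surjective q
  have hp : p ∈ _root_.closure ((Subgroup.zpowers g : Subgroup P) : Set P) := by
    rw [hg]; trivial
  have hUeq : {z : P | (QuotientGroup.mk z : P ⧸ N) = QuotientGroup.mk p}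
      = (fun z : P => z⁻¹ * p) ⁻¹' (N : Set P) := by
    ext z
    simp only [Set.mem_setOf_eq, Set.mem_preimage, SetLike.mem_coe]
    exact QuotientGroup.eq
  have hU : IsOpen {z : P | (QuotientGroup.mk z : P ⧸ N) = QuotientGroup.mk p} := by
    rw [hUeq]
    exact hNopen.preimage (continuous_inv.mul continuous_const)
  have hpU : p ∈ {z : P | (QuotientGroup.mk z : P ⧸ N) = QuotientGroup.mk p} := rfl
  obtain ⟨z, hzU, hzZ⟩ := mem_closure_iff.mp hp _ hU hpU
  obtain ⟨m, rfl⟩ := Subgroup.mem_zpowers_iff.mp hzZ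
  refine ⟨m, ?_⟩
  have : (QuotientGroup.mk (g ^ m) : P ⧸ N) = QuotientGroup.mk p := hzU
  rw [← this]
  simp

/-- A procyclic subgroup gives a procyclic subtype. -/
lemma aux_isProcyclic_subtype {G : Type*} [Group G] [TopologicalSpace G] [IsTopologicalGroup G]
    {H : Subgroup G} (h : IsProcyclicSubgroup H) : IsProcyclic ↥H := by
  obtain ⟨g, hgH, hclos⟩ := h
  refine ⟨⟨g, hgH⟩, ?_⟩
  rw [Set.eq_univ_iff_forall]
  intro x
  rw [closure_subtype]
  have himg : (Subtype.val '' ((Subgroup.zpowers (⟨g, hgH⟩ : H) : Subgroup H) : Set H))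
      = ((Subgroup.zpowers g : Subgroup G) : Set G) := by
    ext z
    constructor
    · rintro ⟨y, hy, rfl⟩
      obtain ⟨m, rfl⟩ := Subgroup.mem_zpowers_iff.mp hy
      exact Subgroup.mem_zpowers_iff.mpr ⟨m, by push_cast; rfl⟩
    · intro hz
      obtain ⟨m, rfl⟩ := Subgroup.mem_zpowers_iff.mp hz
      exact ⟨(⟨g, hgH⟩ : H) ^ m, Subgroup.mem_zpowers_iff.mpr ⟨m, rfl⟩, by push_cast; rfl⟩
  rw [himg, hclos]
  exact x.2

/-- Transfer of the cyclic-open-quotients property along a topological embedding of groups. -/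
lemma aux_hCQ_transfer {K P : Type*} [Group K] [TopologicalSpace K]
    [Group P] [TopologicalSpace P] [IsTopologicalGroup P]
    [CompactSpace P] [T2Space P] [TotallyDisconnectedSpace P]
    (hPcomm : ∀ a b : P, a * b = b * a)
    (hCQP : ∀ (N : Subgroup P) [N.Normal], IsOpen (N : Set P) → IsCyclic (P ⧸ N))
    (f : K →* P)
    (hind : ∀ s : Set K, IsOpen s → ∃ t : Set P, IsOpen t ∧ f ⁻¹' t = s) :
    ∀ (N : Subgroup K) [N.Normal], IsOpen (N : Set K) → IsCyclic (K ⧸ N) := by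
  intro N hN hNopen
  obtain ⟨V, hVopen, hVN⟩ := hind _ hNopen
  have h1V : (1 : P) ∈ V := by
    have h1 : (1 : K) ∈ f ⁻¹' V := by rw [hVN]; exact N.one_mem
    simpa using h1
  obtain ⟨W, hWopen, hWV⟩ := aux_exists_openSubgroup hVopen h1V
  haveI : W.Normal := ⟨fun n hn g => by rw [hPcomm g n, mul_inv_cancel_right]; exact hn⟩
  set g : K →* P ⧸ W := (QuotientGroup.mk' W).comp f with hgdef
  have hker : g.ker ≤ N := by
    intro k hk
    have hfk : f k ∈ W := by
      have : g k = 1 := hk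
      rw [hgdef] at this
      simpa [QuotientGroup.eq_one_iff] using this
    have hfkV : f k ∈ V := hWV hfk
    have : k ∈ f ⁻¹' V := hfkV
    rwa [hVN] at this
  haveI : IsCyclic (P ⧸ W) := hCQP _ hWopen
  haveI : IsCyclic g.range := Subgroup.isCyclic _
  have e := QuotientGroup.quotientKerEquivRange g
  haveI : IsCyclic (K ⧸ g.ker) := isCyclic_of_surjective e.symm e.symm.surjective
  have hkerle : g.ker ≤ Subgroup.comap (MonoidHom.id K) N := hker
  have hsurj : Function.Surjective (QuotientGroup.map g.ker N (MonoidHom.id K) hkerle) := by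
    intro q
    obtain ⟨k, rfl⟩ := QuotientGroup.mk_surjective q
    exact ⟨QuotientGroup.mk k, by simp⟩
  exact isCyclic_of_surjective _ hsurj

end AuxLemmas3
section AuxMain

open Subgroup

/-- Key step: if all `H`-conjugates of `x` lie in a closed procyclic subgroup `C'`
for an open subgroup `H`, then `H`-conjugation preserves `closedGen x`. -/
lemma aux_conj_mem_closedGen {G : Type*} [Group G] [TopologicalSpace G] [IsTopologicalGroup G]
    [CompactSpace G] [T2Space G] [TotallyDisconnectedSpace G]
    {C' : Subgroup G} (hC'closed : IsClosed (C' : Set G)) (hC'proc : IsProcyclicSubgroup C')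
    {H : Subgroup G} {x : G}
    (hconj : ∀ h ∈ H, h * x * h⁻¹ ∈ C') :
    ∀ h ∈ H, ∀ g ∈ closedGen x, h * g * h⁻¹ ∈ closedGen x := by
  classical
  set S : Set G := (fun h => h * x * h⁻¹) '' (H : Set G) with hS
  set K : Subgroup G := (Subgroup.closure S).topologicalClosure with hKdef
  have hxS : x ∈ S := ⟨1, H.one_mem, by simp⟩
  have hSC' : S ⊆ (C' : Set G) := by
    rintro _ ⟨h, hh, rfl⟩
    exact hconj h hh
  have hKC' : K ≤ C' :=
    Subgroup.topologicalClosure_minimal _ ((Subgroup.closure_le C').mpr hSC') hC'closed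
  have hKclosed : IsClosed (K : Set G) := Subgroup.isClosed_topologicalClosure _
  have hxK : x ∈ K := Subgroup.le_topologicalClosure _ (Subgroup.subset_closure hxS)
  have hDK : closedGen x ≤ K :=
    Subgroup.topologicalClosure_minimal _ (Subgroup.zpowers_le.mpr hxK) hKclosed
  -- K is invariant under conjugation by H
  have hKinv : ∀ h ∈ H, ∀ k ∈ K, h * k * h⁻¹ ∈ K := by
    intro h hh k hk
    have hcont : Continuous fun z : G => h * z * h⁻¹ :=
      (continuous_const.mul continuous_id).mul continuous_const
    have hcl : ∀ z ∈ Subgroup.closure S, h * z * h⁻¹ ∈ Subgroup.closure S := by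
      intro z hz
      refine Subgroup.closure_induction ?_ ?_ ?_ ?_ hz
      · intro s hs
        obtain ⟨h', hh', rfl⟩ := hs
        refine Subgroup.subset_closure ⟨h * h', H.mul_mem hh hh', ?_⟩
        group
      · simpa using Subgroup.one_mem (Subgroup.closure S)
      · intro a b _ _ ha hb
        have heq : h * (a * b) * h⁻¹ = (h * a * h⁻¹) * (h * b * h⁻¹) := by group
        rw [heq]
        exact Subgroup.mul_mem _ ha hb
      · intro a _ ha
        have heq : h * a⁻¹ * h⁻¹ = (h * a * h⁻¹)⁻¹ := by group
        rw [heq]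
        exact Subgroup.inv_mem _ ha
    have hset : (fun z : G => h * z * h⁻¹) '' ((Subgroup.closure S : Subgroup G) : Set G)
        ⊆ ((Subgroup.closure S : Subgroup G) : Set G) := by
      rintro _ ⟨z, hz, rfl⟩
      exact hcl z hz
    have hk' : k ∈ _root_.closure ((Subgroup.closure S : Subgroup G) : Set G) := by
      rwa [← Subgroup.topologicalClosure_coe]
    have h2 : h * k * h⁻¹ ∈ _root_.closure
        ((fun z : G => h * z * h⁻¹) '' ((Subgroup.closure S : Subgroup G) : Set G)) :=
      image_closure_subset_closure_image hcont ⟨k, hk', rfl⟩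
    have h3 : h * k * h⁻¹ ∈ _root_.closure ((Subgroup.closure S : Subgroup G) : Set G) :=
      closure_mono hset h2
    rwa [← Subgroup.topologicalClosure_coe] at h3
  -- instances on the subtypes
  haveI instCK : CompactSpace ↥K := isCompact_iff_compactSpace.mp (hKclosed.isCompact)
  haveI instCC' : CompactSpace ↥C' := isCompact_iff_compactSpace.mp (hC'closed.isCompact)
  have hPC' : IsProcyclic ↥C' := aux_isProcyclic_subtype hC'proc
  have hC'comm : ∀ a b : ↥C', a * b = b * a := aux_comm_of_procyclic hPC'
  have hKcomm : ∀ a b : ↥K, a * b = b * a := by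
    intro a b
    have h1 := hC'comm ⟨a, hKC' a.2⟩ ⟨b, hKC' b.2⟩
    have h2 := congrArg Subtype.val h1
    exact Subtype.ext (by simpa using h2)
  have hCQC' := aux_hCQ_of_procyclic hPC'
  have hind : ∀ s : Set ↥K, IsOpen s →
      ∃ t : Set ↥C', IsOpen t ∧ (Subgroup.inclusion hKC') ⁻¹' t = s := by
    intro s hs
    obtain ⟨t, ht, hts⟩ := isOpen_induced_iff.mp hs
    refine ⟨Subtype.val ⁻¹' t, ht.preimage continuous_subtype_val, ?_⟩
    rw [← hts]
    rfl
  have hCQK := aux_hCQ_transfer hC'comm hCQC' (Subgroup.inclusion hKC') hind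
  -- conjugation automorphism of K and conclusion
  intro h hh g hg
  have hk1 : ∀ k : ↥K, h * (k : G) * h⁻¹ ∈ K := fun k => hKinv h hh k k.2
  have hk2 : ∀ k : ↥K, h⁻¹ * (k : G) * h ∈ K := fun k => by
    simpa using hKinv h⁻¹ (H.inv_mem hh) k k.2
  set e : ↥K ≃* ↥K :=
    { toFun := fun k => ⟨h * k * h⁻¹, hk1 k⟩
      invFun := fun k => ⟨h⁻¹ * k * h, hk2 k⟩
      left_inv := fun k => Subtype.ext (by simp [mul_assoc])
      right_inv := fun k => Subtype.ext (by simp [mul_assoc])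
      map_mul' := fun a b => Subtype.ext (by push_cast; group) } with hedef
  have he : Continuous e := by
    apply Continuous.subtype_mk
    exact (continuous_const.mul continuous_subtype_val).mul continuous_const
  set D : Subgroup ↥K := (closedGen x).comap K.subtype with hDdef
  have hDclosed : IsClosed (D : Set ↥K) := by
    have hcoe : (D : Set ↥K) = Subtype.val ⁻¹' ((closedGen x : Subgroup G) : Set G) := rfl
    rw [hcoe]
    exact (Subgroup.isClosed_topologicalClosure _).preimage continuous_subtype_val
  have hmap := aux_map_closed_le hKcomm hCQK e he hDclosed
  have hgK : g ∈ K := hDK hg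
  have hmem : (⟨g, hgK⟩ : ↥K) ∈ D := by
    rw [hDdef, Subgroup.mem_comap]
    exact hg
  have hout : e ⟨g, hgK⟩ ∈ D := hmap ⟨⟨g, hgK⟩, hmem, rfl⟩
  have : (e ⟨g, hgK⟩ : G) ∈ closedGen x := hout
  simpa [hedef] using this

end AuxMain
/-- Let `X` be a normal subset of a profinite group `G` contained in a union of countably
many procyclic closed subgroups. Then for every `x ∈ X` the normalizer `N_G(⟨x⟩)` of the
closed subgroup topologically generated by `x` has finite index in `G`. -/
theorem normalizer_finite_index_of_normal_subset_covered
    {G : Type*} [Group G] [TopologicalSpace G] [IsTopologicalGroup G]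
    [CompactSpace G] [T2Space G] [TotallyDisconnectedSpace G]
    (X : Set G) (hXnormal : ∀ g : G, ∀ x ∈ X, g * x * g⁻¹ ∈ X)
    (C : ℕ → Subgroup G)
    (hCclosed : ∀ i, IsClosed (C i : Set G))
    (hCproc : ∀ i, IsProcyclicSubgroup (C i))
    (hcov : X ⊆ ⋃ i, (C i : Set G)) :
    ∀ x ∈ X, (Subgroup.normalizer (closedGen x : Set G)).index ≠ 0 := by
  intro x hx
  classical
  set f : G → G := fun g => g * x * g⁻¹ with hfdef
  have hfc : Continuous f := (continuous_id.mul continuous_const).mul continuous_inv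
  set cl : Set G := Set.range f with hcldef
  have hclcomp : IsCompact cl := isCompact_range hfc
  have hclsub : cl ⊆ ⋃ i, (C i : Set G) := by
    rintro _ ⟨g, rfl⟩
    exact hcov (hXnormal g x hx)
  haveI : CompactSpace ↥cl := isCompact_iff_compactSpace.mp hclcomp
  haveI : Nonempty ↥cl := ⟨⟨x, ⟨1, by simp [hfdef]⟩⟩⟩
  -- Baire category: some C i has interior in cl
  have hclosedpre : ∀ i, IsClosed (Subtype.val ⁻¹' (C i : Set G) : Set ↥cl) :=
    fun i => (hCclosed i).preimage continuous_subtype_val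
  have hUnion : ⋃ i, (Subtype.val ⁻¹' (C i : Set G) : Set ↥cl) = Set.univ := by
    rw [Set.eq_univ_iff_forall]
    intro y
    obtain ⟨t, ht⟩ := Set.mem_iUnion.mp (hclsub y.2)
    exact Set.mem_iUnion.mpr ⟨t, ht⟩
  obtain ⟨i, y, hy⟩ := nonempty_interior_of_iUnion_of_closed hclosedpre hUnion
  obtain ⟨O, hOopen, hOpre⟩ := isOpen_induced_iff.mp
    (isOpen_interior (s := (Subtype.val ⁻¹' (C i : Set G) : Set ↥cl)))
  have hyO : (y : G) ∈ O := by
    have : y ∈ Subtype.val ⁻¹' O := by rw [hOpre]; exact hy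
    exact this
  have hOC : ∀ z ∈ cl, z ∈ O → z ∈ C i := by
    intro z hz hzO
    have h1 : (⟨z, hz⟩ : ↥cl) ∈ Subtype.val ⁻¹' O := hzO
    rw [hOpre] at h1
    have h2 : (⟨z, hz⟩ : ↥cl) ∈ Subtype.val ⁻¹' ((C i : Subgroup G) : Set G) := interior_subset h1
    exact h2
  obtain ⟨g₀, hg₀⟩ := y.2
  -- find an open subgroup H with g₀ • H ⊆ f ⁻¹' O
  have hV : IsOpen ((fun h : G => g₀ * h) ⁻¹' (f ⁻¹' O)) :=
    (hOopen.preimage hfc).preimage (continuous_const.mul continuous_id)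
  have h1V : (1 : G) ∈ (fun h : G => g₀ * h) ⁻¹' (f ⁻¹' O) := by
    have : f g₀ ∈ O := by rw [hg₀]; exact hyO
    simpa using this
  obtain ⟨H, hHopen, hHsub⟩ := aux_exists_openSubgroup hV h1V
  -- the conjugated procyclic subgroup C'
  set φ : G ≃ₜ G := (Homeomorph.mulLeft g₀).trans (Homeomorph.mulRight g₀⁻¹) with hφdef
  have hφapp : ∀ z : G, φ z = g₀ * z * g₀⁻¹ := fun z => rfl
  set C' : Subgroup G := (C i).comap (MulAut.conj g₀).toMonoidHom with hC'def
  have hmemC' : ∀ z : G, z ∈ C' ↔ g₀ * z * g₀⁻¹ ∈ C i := by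
    intro z
    rw [hC'def, Subgroup.mem_comap]
    rfl
  have hC'coe : (C' : Set G) = φ ⁻¹' ((C i : Subgroup G) : Set G) := by
    ext z
    simp only [Set.mem_preimage, SetLike.mem_coe, hφapp]
    exact hmemC' z
  have hC'closed : IsClosed (C' : Set G) := by
    rw [hC'coe]
    exact (hCclosed i).preimage φ.continuous
  have hC'proc : IsProcyclicSubgroup C' := by
    obtain ⟨c, hcC, hcclos⟩ := hCproc i
    refine ⟨g₀⁻¹ * c * g₀, ?_, ?_⟩
    · rw [hmemC' _]
      have : g₀ * (g₀⁻¹ * c * g₀) * g₀⁻¹ = c := by group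
      rwa [this]
    · have hpow : ∀ m : ℤ, (g₀⁻¹ * c * g₀) ^ m = g₀⁻¹ * c ^ m * g₀ := by
        intro m
        have h0 := map_zpow (MulAut.conj g₀⁻¹).toMonoidHom c m
        simpa [MulAut.conj_apply] using h0.symm
      have hzp : ((Subgroup.zpowers (g₀⁻¹ * c * g₀) : Subgroup G) : Set G)
          = φ ⁻¹' ((Subgroup.zpowers c : Subgroup G) : Set G) := by
        ext z
        simp only [Set.mem_preimage, SetLike.mem_coe, hφapp]
        constructor
        · intro hz
          obtain ⟨m, rfl⟩ := Subgroup.mem_zpowers_iff.mp hz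
          refine Subgroup.mem_zpowers_iff.mpr ⟨m, ?_⟩
          rw [hpow m]
          group
        · intro hz
          obtain ⟨m, hm⟩ := Subgroup.mem_zpowers_iff.mp hz
          refine Subgroup.mem_zpowers_iff.mpr ⟨m, ?_⟩
          rw [hpow m, hm]
          group
      rw [hzp, ← φ.preimage_closure, hcclos, hC'coe]
  -- all H-conjugates of x lie in C'
  have hconj : ∀ h ∈ H, h * x * h⁻¹ ∈ C' := by
    intro h hh
    have hgh : g₀ * h ∈ f ⁻¹' O := hHsub hh
    have hfO : f (g₀ * h) ∈ O := hgh
    have hfC : f (g₀ * h) ∈ C i := hOC _ ⟨g₀ * h, rfl⟩ hfO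
    rw [hmemC' _]
    have heq : g₀ * (h * x * h⁻¹) * g₀⁻¹ = f (g₀ * h) := by
      rw [hfdef]
      group
    rwa [heq]
  have hmain := aux_conj_mem_closedGen hC'closed hC'proc hconj
  -- H normalizes closedGen x, hence the normalizer is open
  have hHnorm : H ≤ Subgroup.normalizer (closedGen x : Set G) := by
    intro h hh
    rw [Subgroup.mem_normalizer_iff]
    intro z
    constructor
    · exact fun hz => hmain h hh z hz
    · intro hz
      have h2 := hmain h⁻¹ (H.inv_mem hh) _ hz
      have heq : h⁻¹ * (h * z * h⁻¹) * h⁻¹⁻¹ = z := by group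
      rwa [heq] at h2
  have hnopen : IsOpen ((Subgroup.normalizer (closedGen x : Set G)) : Set G) :=
    Subgroup.isOpen_mono hHnorm hHopen
  haveI := Subgroup.quotient_finite_of_isOpen _ hnopen
  exact Subgroup.index_ne_zero_of_finite
end
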